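/- arXiv:0912.2780 — 6 statements merged into one kernel-verified Lean document; each statement's English description precedes it below -/
import Mathlib

section
/- Let n ≥ 1 and let K ⊆ ℝⁿ be a convex body (a closed convex set with nonempty interior). Then the closure of the normal cone of K equals the polar cone of the recession cone of K; that is, closure{u ∈ ℝⁿ : there exists x ∈ K with ⟨y,u⟩ ≤ ⟨x,u⟩ for all y ∈ K} = {w ∈ ℝⁿ : ⟨w,v⟩ ≤ 0 for all v ∈ rec(K)}. -/
open scoped RealInnerProductSpace

/-- The recession cone of a set `A ⊆ ℝⁿ`. -/
def recCone {n : ℕ} (A : Set (EuclideanSpace ℝ (Fin n))) : Set (EuclideanSpace ℝ (Fin n)) :=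
  {v | ∀ x ∈ A, ∀ t : ℝ, 0 ≤ t → x + t • v ∈ A}

/-- Projection onto a nonempty closed convex set, with the variational inequality. -/
lemma proj_exists {n : ℕ} {S : Set (EuclideanSpace ℝ (Fin n))} (hne : S.Nonempty)
    (hcl : IsClosed S) (hconv : Convex ℝ S) (z : EuclideanSpace ℝ (Fin n)) :
    ∃ p ∈ S, ∀ y ∈ S, ⟪z - p, y - p⟫ ≤ 0 := by
  obtain ⟨p, hp, hmin⟩ :=
    exists_norm_eq_iInf_of_complete_convex hne hcl.isComplete hconv z
  exact ⟨p, hp, (norm_eq_iInf_iff_real_inner_le_zero hconv hp).1 hmin⟩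


/-- Pure real-number arithmetic used in the approximation step. -/
lemma arith_step (U Q X X0 M R : ℝ) (hU : 0 < U) (hQ : 0 < Q)
    (hkey : Q * (Q - X0) ≤ R * X) (hqlb : R * U ^ 2 - M ≤ Q * U) :
    (2 * U ^ 2 - 2 * (U / Q * X)) * R ≤ 2 * U * (M / U + X0) := by
  have hd : U / Q * X * (R * Q) = U * (R * X) := by field_simp
  have hA'' : 2 * U * (M / U + X0) = 2 * M + 2 * U * X0 := by field_simp
  have k1 : 2 * U * (Q * (Q - X0)) ≤ 2 * U * (R * X) :=
    mul_le_mul_of_nonneg_left hkey (by positivity)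
  have k2 : 2 * Q * (R * U ^ 2 - M) ≤ 2 * Q * (Q * U) :=
    mul_le_mul_of_nonneg_left hqlb (by positivity)
  have hgoal : (2 * U ^ 2 - 2 * (U / Q * X)) * R * Q ≤ (2 * M + 2 * U * X0) * Q := by
    nlinarith [k1, k2, hd]
  have := le_of_mul_le_mul_right hgoal hQ
  linarith

set_option maxHeartbeats 1000000 in
/-- For a convex body `K ⊆ ℝⁿ`, the closure of the normal cone of `K` equals the polar cone
of the recession cone of `K`. -/
theorem closure_normalCone_eq_polar_recCone (n : ℕ) (hn : 1 ≤ n)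
    (K : Set (EuclideanSpace ℝ (Fin n)))
    (hKcl : IsClosed K) (hKconv : Convex ℝ K) (hKint : (interior K).Nonempty) :
    closure {u : EuclideanSpace ℝ (Fin n) | ∃ x ∈ K, ∀ y ∈ K, ⟪y, u⟫ ≤ ⟪x, u⟫} =
      {w : EuclideanSpace ℝ (Fin n) | ∀ v ∈ recCone K, ⟪w, v⟫ ≤ 0} := by
  classical
  obtain ⟨x₀, hx₀⟩ : K.Nonempty := hKint.mono interior_subset
  set N : Set (EuclideanSpace ℝ (Fin n)) :=
    {u | ∃ x ∈ K, ∀ y ∈ K, ⟪y, u⟫ ≤ ⟪x, u⟫} with hN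
  set B : Set (EuclideanSpace ℝ (Fin n)) :=
    {u | ∃ M : ℝ, ∀ y ∈ K, ⟪y, u⟫ ≤ M} with hB
  -- barrier cone properties
  have hB0 : (0 : EuclideanSpace ℝ (Fin n)) ∈ B := ⟨0, fun y _ => by simp⟩
  have hBsmul : ∀ u ∈ B, ∀ t : ℝ, 0 ≤ t → t • u ∈ B := by
    rintro u ⟨M, hM⟩ t ht
    exact ⟨t * M, fun y hy => by
      rw [real_inner_smul_right]
      exact mul_le_mul_of_nonneg_left (hM y hy) ht⟩
  have hBconv : Convex ℝ B := by
    rintro u ⟨M, hM⟩ v ⟨M', hM'⟩ a b ha hb _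
    refine ⟨a * M + b * M', fun y hy => ?_⟩
    rw [inner_add_right, real_inner_smul_right, real_inner_smul_right]
    exact add_le_add (mul_le_mul_of_nonneg_left (hM y hy) ha)
      (mul_le_mul_of_nonneg_left (hM' y hy) hb)
  -- (B)* ⊆ recCone K
  have hBstar : ∀ v : EuclideanSpace ℝ (Fin n), (∀ u ∈ B, ⟪v, u⟫ ≤ 0) → v ∈ recCone K := by
    intro v hv x hx t ht
    by_contra hmem
    obtain ⟨p, hp, hproj⟩ := proj_exists ⟨x, hx⟩ hKcl hKconv (x + t • v)
    set u : EuclideanSpace ℝ (Fin n) := x + t • v - p with hu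
    have huB : u ∈ B := by
      refine ⟨⟪p, u⟫, fun y hy => ?_⟩
      have h2 : ⟪u, y⟫ - ⟪u, p⟫ ≤ 0 := by
        rw [← inner_sub_right]; exact hproj y hy
      have c1 := real_inner_comm y u
      have c2 := real_inner_comm p u
      linarith
    have h1 : ⟪u, x - p⟫ ≤ 0 := hproj x hx
    have h3 : ⟪u, v⟫ ≤ 0 := by
      have := hv u huB
      have c := real_inner_comm u v
      linarith
    have e1 : (x + t • v - p : EuclideanSpace ℝ (Fin n)) = (x - p) + t • v := by abel
    have hnorm : ⟪u, u⟫ = ⟪u, x - p⟫ + t * ⟪u, v⟫ := by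
      nth_rewrite 2 [hu]
      rw [e1, inner_add_right, real_inner_smul_right]
    have hnn : (0:ℝ) ≤ ⟪u, u⟫ := real_inner_self_nonneg
    have h4 : ⟪u, u⟫ = 0 := by nlinarith [mul_nonpos_of_nonneg_of_nonpos ht h3]
    have h5 : u = 0 := by
      rwa [real_inner_self_eq_norm_sq, pow_eq_zero_iff (two_ne_zero), norm_eq_zero] at h4
    apply hmem
    have h6 : x + t • v = p := by
      have := sub_eq_zero.1 (hu ▸ h5)
      exact this
    rw [h6]; exact hp
  -- B ⊆ closure N
  have hBN : B ⊆ closure N := by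
    rintro u ⟨M₀, hM₀⟩
    by_cases hu0 : u = 0
    · subst hu0
      exact subset_closure ⟨x₀, hx₀, fun y hy => by simp⟩
    have hun : (0:ℝ) < ‖u‖ := norm_pos_iff.2 hu0
    set M : ℝ := max M₀ 0 with hM
    have hMnn : 0 ≤ M := le_max_right _ _
    have hMb : ∀ y ∈ K, ⟪y, u⟫ ≤ M := fun y hy => (hM₀ y hy).trans (le_max_left _ _)
    rw [Metric.mem_closure_iff]
    intro ε hε
    set A : ℝ := 2 * ‖u‖ * (M / ‖u‖ + ‖x₀‖) with hA
    have hAnn : 0 ≤ A := by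
      apply mul_nonneg (by positivity)
      have : 0 ≤ M / ‖u‖ := div_nonneg hMnn hun.le
      positivity
    set R : ℝ := max (M / ‖u‖ ^ 2 + 1) (A / ε ^ 2 + 1) with hR
    have hR1 : M / ‖u‖ ^ 2 < R := lt_of_lt_of_le (lt_add_one _) (le_max_left _ _)
    have hR2 : A / ε ^ 2 < R := lt_of_lt_of_le (lt_add_one _) (le_max_right _ _)
    have hRpos : 0 < R := lt_of_le_of_lt (div_nonneg hMnn (by positivity)) hR1
    obtain ⟨p, hp, hproj⟩ := proj_exists ⟨x₀, hx₀⟩ hKcl hKconv (R • u)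
    set q : EuclideanSpace ℝ (Fin n) := R • u - p with hq
    -- q is a normal vector at p
    have hqin : ∀ y ∈ K, ⟪y, q⟫ ≤ ⟪p, q⟫ := by
      intro y hy
      have h2 : ⟪q, y⟫ - ⟪q, p⟫ ≤ 0 := by
        rw [← inner_sub_right]; exact hproj y hy
      have c1 := real_inner_comm y q
      have c2 := real_inner_comm p q
      linarith
    have hqu : R * ‖u‖ ^ 2 - M ≤ ⟪q, u⟫ := by
      have h1 : ⟪p, u⟫ ≤ M := hMb p hp
      have h2 : ⟪q, u⟫ = R * ‖u‖ ^ 2 - ⟪p, u⟫ := by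
        rw [hq, inner_sub_left, real_inner_smul_left, real_inner_self_eq_norm_sq]
      linarith
    have hqupos : 0 < ⟪q, u⟫ := by
      have : M < R * ‖u‖ ^ 2 := by
        rw [div_lt_iff₀ (by positivity)] at hR1
        linarith
      linarith
    have hq0 : q ≠ 0 := by
      intro h; rw [h] at hqupos; simp at hqupos
    have hqn : (0:ℝ) < ‖q‖ := norm_pos_iff.2 hq0
    -- lower bound on ‖q‖
    have hqlb : R * ‖u‖ ^ 2 - M ≤ ‖q‖ * ‖u‖ :=
      le_trans hqu (real_inner_le_norm q u)
    -- ⟪q,p⟫ ≥ ⟪q,x₀⟫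
    have hqp : ⟪q, x₀⟫ ≤ ⟪q, p⟫ := by
      have h2 : ⟪q, x₀⟫ - ⟪q, p⟫ ≤ 0 := by
        rw [← inner_sub_right]; exact hproj x₀ hx₀
      linarith
    -- key lower bound on ⟪q,u⟫
    have hkey : ‖q‖ * (‖q‖ - ‖x₀‖) ≤ R * ⟪q, u⟫ := by
      have e2 : (R • u : EuclideanSpace ℝ (Fin n)) = q + p := by rw [hq]; abel
      have h1 : ⟪q, R • u⟫ = ⟪q, q⟫ + ⟪q, p⟫ := by rw [e2, inner_add_right]
      have h2 : R * ⟪q, u⟫ = ‖q‖ ^ 2 + ⟪q, p⟫ := by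
        rw [← real_inner_smul_right, h1, real_inner_self_eq_norm_sq]
      have h3 : -(‖q‖ * ‖x₀‖) ≤ ⟪q, x₀⟫ := by
        have := abs_real_inner_le_norm q x₀
        have h := abs_le.1 this
        linarith [h.1]
      nlinarith
    -- the approximating normal vector
    set b : EuclideanSpace ℝ (Fin n) := (‖u‖ / ‖q‖) • q with hb
    have hbN : b ∈ N := by
      refine ⟨p, hp, fun y hy => ?_⟩
      rw [hb, real_inner_smul_right, real_inner_smul_right]
      exact mul_le_mul_of_nonneg_left (hqin y hy) (by positivity)
    refine ⟨b, hbN, ?_⟩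
    rw [dist_eq_norm]
    have hbnorm : ‖b‖ = ‖u‖ := by
      rw [hb, norm_smul, Real.norm_eq_abs, abs_of_nonneg (by positivity),
        div_mul_cancel₀ _ hqn.ne']
    have hub : ‖u - b‖ ^ 2 = 2 * ‖u‖ ^ 2 - 2 * (‖u‖ / ‖q‖ * ⟪q, u⟫) := by
      rw [norm_sub_sq_real, hbnorm, hb, real_inner_smul_right]
      have hc : ⟪u, q⟫ = ⟪q, u⟫ := real_inner_comm q u
      rw [hc]; ring
    have hmain : ‖u - b‖ ^ 2 ≤ A / R := by
      rw [hub, hA, le_div_iff₀ hRpos]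
      exact arith_step ‖u‖ ‖q‖ ⟪q, u⟫ ‖x₀‖ M R hun hqn hkey hqlb
    have hfin : ‖u - b‖ ^ 2 < ε ^ 2 := by
      apply lt_of_le_of_lt hmain
      rw [div_lt_iff₀ hRpos]
      rw [div_lt_iff₀ (by positivity : (0:ℝ) < ε ^ 2)] at hR2
      linarith [hR2, mul_comm R (ε ^ 2)]
    exact lt_of_pow_lt_pow_left₀ 2 hε.le hfin
  -- polar of recCone is closed
  have hPcl : IsClosed {w : EuclideanSpace ℝ (Fin n) | ∀ v ∈ recCone K, ⟪w, v⟫ ≤ 0} := by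
    have heq : {w : EuclideanSpace ℝ (Fin n) | ∀ v ∈ recCone K, ⟪w, v⟫ ≤ 0} =
        ⋂ v ∈ recCone K, {w : EuclideanSpace ℝ (Fin n) | ⟪w, v⟫ ≤ 0} := by
      ext w; simp [Set.mem_iInter]
    rw [heq]
    exact isClosed_biInter fun v _ =>
      isClosed_le (Continuous.inner continuous_id continuous_const) continuous_const
  apply Set.Subset.antisymm
  · -- closure N ⊆ polar
    apply closure_minimal _ hPcl
    rintro u ⟨x, hx, hmax⟩ v hv
    have h1 : x + (1:ℝ) • v ∈ K := hv x hx 1 zero_le_one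
    have h2 := hmax _ h1
    rw [inner_add_left, real_inner_smul_left] at h2
    have c := real_inner_comm u v
    show ⟪u, v⟫ ≤ 0
    linarith
  · -- polar ⊆ closure N
    intro w hw
    have hwB : w ∈ closure B := by
      by_contra hwB
      have hclB : Convex ℝ (closure B) := hBconv.closure
      obtain ⟨p, hp, hproj⟩ :=
        proj_exists ⟨0, subset_closure hB0⟩ isClosed_closure hclB w
      set u : EuclideanSpace ℝ (Fin n) := w - p with hu
      have hu0 : u ≠ 0 := by
        intro h
        apply hwB
        have : w = p := by rwa [hu, sub_eq_zero] at h
        rw [this]; exact hp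
      have hup : 0 ≤ ⟪u, p⟫ := by
        have := hproj 0 (subset_closure hB0)
        rw [zero_sub, inner_neg_right] at this
        linarith
      have hub : ∀ c ∈ B, ⟪u, c⟫ ≤ 0 := by
        intro c hc
        by_contra hpos
        push_neg at hpos
        set t : ℝ := (⟪u, p⟫ + 1) / ⟪u, c⟫ with ht
        have htpos : 0 < t := div_pos (by linarith) hpos
        have htc : t • c ∈ closure B := subset_closure (hBsmul c hc t htpos.le)
        have h1 := hproj _ htc
        rw [inner_sub_right, real_inner_smul_right] at h1
        have h2 : t * ⟪u, c⟫ = ⟪u, p⟫ + 1 := by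
          rw [ht, div_mul_cancel₀ _ hpos.ne']
        linarith
      have hurec : u ∈ recCone K := hBstar u hub
      have h3 : ⟪w, u⟫ ≤ 0 := hw u hurec
      have h4a : ⟪u, u⟫ = ⟪u, w⟫ - ⟪u, p⟫ := by
        rw [← inner_sub_right, ← hu]
      have h5 : 0 < ⟪u, u⟫ :=
        lt_of_le_of_ne real_inner_self_nonneg (fun h => hu0 (inner_self_eq_zero.1 h.symm))
      have c := real_inner_comm w u
      linarith
    have hsub : closure B ⊆ closure N := by
      rw [← closure_closure (s := N)]
      exact closure_mono hBN
    exact hsub hwB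
end

section
/- Let C ⊆ ℝⁿ be a nonempty closed convex cone (so t·x ∈ C for all x ∈ C and t ≥ 0) which is relatively proper, i.e., C ≠ span_ℝ(C) as sets. Let m := dim span_ℝ(C). Then the Bochner integral ∫_{C ∩ S^{n-1}} x dμH^{m-1}(x) of the identity map over C ∩ S^{n-1} with respect to (m−1)-dimensional Hausdorff measure is a nonzero vector of ℝⁿ. -/
open scoped RealInnerProductSpace ENNReal NNReal
open MeasureTheory Metric Set Bornology Module
set_option linter.unusedSectionVars false

lemma aux_pi_finite (k : ℕ) (s : Set (EuclideanSpace ℝ (Fin k))) (hs : IsBounded s) :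
    μH[(k : ℝ)] s < ⊤ := by
  obtain ⟨R, hR⟩ := hs.subset_closedBall 0
  set e := WithLp.equiv 2 (Fin k → ℝ) with he
  have hsymm := (PiLp.antilipschitzWith_ofLp 2 (fun _ : Fin k => ℝ)).to_rightInverse e.right_inv
  have hle := hsymm.hausdorffMeasure_image_le (by positivity : (0:ℝ) ≤ (k:ℝ)) (e '' s)
  have himg : e.invFun '' (⇑e '' s) = s := by
    rw [Set.image_image]; simp
  rw [himg] at hle
  have hpi : (μH[(k : ℝ)] : Measure (Fin k → ℝ)) = volume := by
    have := MeasureTheory.hausdorffMeasure_pi_real (ι := Fin k)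
    simpa using this
  have hvol : volume (e '' s) < ⊤ := by
    have hsub : e '' s ⊆ Metric.closedBall 0 R := by
      rintro x ⟨y, hy, rfl⟩
      have h1 : LipschitzWith 1 e := PiLp.lipschitzWith_ofLp 2 _
      have := h1.dist_le_mul y 0
      simp only [NNReal.coe_one, one_mul] at this
      have : dist (e y) (e 0) ≤ dist y 0 := this
      simp only [mem_closedBall] at hR ⊢
      calc dist (e y) 0 = dist (e y) (e 0) := by norm_num [he]
        _ ≤ dist y 0 := this
        _ ≤ R := hR hy
    calc volume (e '' s) ≤ volume (Metric.closedBall (0 : Fin k → ℝ) R) := measure_mono hsub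
      _ < ⊤ := (isCompact_closedBall _ _).measure_lt_top
  calc μH[(k:ℝ)] s ≤ _ := hle
    _ < ⊤ := by
        rw [hpi] at *
        exact ENNReal.mul_lt_top (ENNReal.rpow_ne_top_of_nonneg (by positivity) ENNReal.coe_ne_top).lt_top hvol


lemma aux_pi_ball_pos (k : ℕ) (z : EuclideanSpace ℝ (Fin k)) {r : ℝ} (hr : 0 < r) :
    0 < μH[(k : ℝ)] (ball z r) := by
  rcases Nat.eq_zero_or_pos k with hk | hk
  · subst hk
    have hne : (ball z r).Nonempty := ⟨z, by simpa using hr⟩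
    have h := MeasureTheory.Measure.one_le_hausdorffMeasure_zero_of_nonempty hne
    simp only [Nat.cast_zero]
    calc (0:ℝ≥0∞) < 1 := by norm_num
      _ ≤ _ := h
  · set e := WithLp.equiv 2 (Fin k → ℝ) with he
    set K : ℝ≥0 := (Fintype.card (Fin k) : ℝ≥0) ^ ((1:ℝ≥0∞)/2).toReal with hK
    have hsymm : LipschitzWith K e.symm :=
      (PiLp.antilipschitzWith_ofLp 2 (fun _ : Fin k => ℝ)).to_rightInverse e.right_inv
    have hKpos : 0 < (K:ℝ) := by
      have hc : (0:ℝ≥0) < (Fintype.card (Fin k) : ℝ≥0) := by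
        simp only [Fintype.card_fin]
        exact_mod_cast hk
      have : (0:ℝ≥0) < K := by
        rw [hK]
        exact NNReal.rpow_pos hc
      exact_mod_cast this
    -- pi ball of radius r / K is inside e '' ball z r
    have hsub : ball (e z) (r / K) ⊆ e '' ball z r := by
      intro x hx
      refine ⟨e.symm x, ?_, by simp⟩
      have hd : dist (e.symm x) (e.symm (e z)) ≤ K * dist x (e z) := hsymm.dist_le_mul _ _
      simp only [Equiv.symm_apply_apply] at hd
      rw [mem_ball] at hx ⊢
      calc dist (e.symm x) z ≤ K * dist x (e z) := hd
        _ < K * (r / K) := by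
            apply mul_lt_mul_of_pos_left hx hKpos
        _ = r := by field_simp
    have hlip : LipschitzWith 1 e := PiLp.lipschitzWith_ofLp 2 _
    have h1 := hlip.hausdorffMeasure_image_le (by positivity : (0:ℝ) ≤ (k:ℝ)) (ball z r)
    have hpi : (μH[(k : ℝ)] : Measure (Fin k → ℝ)) = volume := by
      have := MeasureTheory.hausdorffMeasure_pi_real (ι := Fin k)
      simpa using this
    have hvolpos : 0 < volume (ball (e z) (r / K)) :=
      measure_ball_pos _ _ (by positivity)
    have : (0:ℝ≥0∞) < μH[(k : ℝ)] (e '' ball z r) := by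
      rw [hpi]
      exact lt_of_lt_of_le hvolpos (measure_mono hsub)
    calc (0:ℝ≥0∞) < μH[(k : ℝ)] (e '' ball z r) := this
      _ ≤ (1:ℝ≥0) ^ (k:ℝ) * μH[(k:ℝ)] (ball z r) := h1
      _ = μH[(k:ℝ)] (ball z r) := by simp


variable {E : Type*} [NormedAddCommGroup E] [InnerProductSpace ℝ E] [FiniteDimensional ℝ E]
  [MeasurableSpace E] [BorelSpace E]

/-- The isometry from the model space onto a subspace. -/
noncomputable def subIso (W : Submodule ℝ E) :
    EuclideanSpace ℝ (Fin (finrank ℝ W)) →ₗᵢ[ℝ] E :=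
  W.subtypeₗᵢ.comp (stdOrthonormalBasis ℝ W).repr.symm.toLinearIsometry

lemma subIso_range (W : Submodule ℝ E) : Set.range (subIso W) = (W : Set E) := by
  ext x
  constructor
  · rintro ⟨v, rfl⟩
    exact ((stdOrthonormalBasis ℝ W).repr.symm v).2
  · intro hx
    exact ⟨(stdOrthonormalBasis ℝ W).repr ⟨x, hx⟩, by simp [subIso]⟩

lemma aux_subspace_finite (W : Submodule ℝ E) (c : E) (s : Set E) (hb : IsBounded s)
    (hsub : ∀ x ∈ s, x - c ∈ W) : μH[(finrank ℝ W : ℝ)] s < ⊤ := by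
  have hd : (0:ℝ) ≤ (finrank ℝ W : ℝ) := by positivity
  set s' : Set E := (fun x => x - c) '' s with hs'
  have hiso : Isometry (fun x : E => x - c) := Isometry.of_dist_eq (by intro a b; simp [dist_eq_norm])
  have h1 : μH[(finrank ℝ W : ℝ)] s' = μH[(finrank ℝ W : ℝ)] s :=
    hiso.hausdorffMeasure_image (Or.inl hd) s
  have hs'W : s' ⊆ (W : Set E) := by
    rintro _ ⟨x, hx, rfl⟩; exact hsub x hx
  have hs'b : IsBounded s' := (hiso.lipschitz.isBounded_image hb)
  set φ := subIso W with hφ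
  have h2 : s' = φ '' (φ ⁻¹' s') :=
    (Set.image_preimage_eq_of_subset (by rw [subIso_range]; exact hs'W)).symm
  have h3 : μH[(finrank ℝ W : ℝ)] (φ '' (φ ⁻¹' s')) = μH[(finrank ℝ W : ℝ)] (φ ⁻¹' s') :=
    φ.isometry.hausdorffMeasure_image (Or.inl hd) _
  have h4 : IsBounded (φ ⁻¹' s') := by
    obtain ⟨R, hR⟩ := hs'b.subset_closedBall 0
    apply (isBounded_closedBall (x := (0 : EuclideanSpace ℝ (Fin (finrank ℝ W)))) (r := R)).subset
    intro v hv
    have : ‖φ v‖ ≤ R := by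
      have := hR hv
      simpa [dist_eq_norm] using this
    simpa [mem_closedBall, dist_eq_norm, φ.norm_map] using this
  rw [← h1, h2, h3]
  exact aux_pi_finite _ _ h4

lemma aux_subspace_ball_pos (W : Submodule ℝ E) {ρ : ℝ} (hρ : 0 < ρ) :
    0 < μH[(finrank ℝ W : ℝ)] ((W : Set E) ∩ ball 0 ρ) := by
  have hd : (0:ℝ) ≤ (finrank ℝ W : ℝ) := by positivity
  set φ := subIso W with hφ
  have him : φ '' (ball 0 ρ) = (W : Set E) ∩ ball 0 ρ := by
    ext x
    constructor
    · rintro ⟨v, hv, rfl⟩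
      refine ⟨by rw [← subIso_range W]; exact ⟨v, rfl⟩, ?_⟩
      rw [mem_ball] at hv ⊢
      simpa [dist_eq_norm, φ.norm_map] using hv
    · rintro ⟨hxW, hxb⟩
      obtain ⟨v, rfl⟩ : x ∈ Set.range φ := by rw [subIso_range]; exact hxW
      refine ⟨v, ?_, rfl⟩
      rw [mem_ball] at hxb ⊢
      simpa [dist_eq_norm, φ.norm_map] using hxb
  rw [← him, φ.isometry.hausdorffMeasure_image (Or.inl hd)]
  exact aux_pi_ball_pos _ _ hρ



lemma radial_lipschitz : LipschitzOnWith 2 (fun x : E => ‖x‖⁻¹ • x) {x : E | 1 ≤ ‖x‖} := by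
  rw [lipschitzOnWith_iff_dist_le_mul]
  intro x hx y hy
  simp only [mem_setOf_eq] at hx hy
  have hx0 : (0:ℝ) < ‖x‖ := lt_of_lt_of_le one_pos hx
  have hy0 : (0:ℝ) < ‖y‖ := lt_of_lt_of_le one_pos hy
  have key : ‖x‖⁻¹ • x - ‖y‖⁻¹ • y = ‖x‖⁻¹ • (x - y) + (‖x‖⁻¹ - ‖y‖⁻¹) • y := by
    rw [smul_sub, sub_smul]; abel
  rw [dist_eq_norm, key]
  have h1 : ‖(‖x‖⁻¹ : ℝ) • (x - y)‖ ≤ ‖x - y‖ := by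
    rw [norm_smul, norm_inv, norm_norm]
    calc ‖x‖⁻¹ * ‖x - y‖ ≤ 1 * ‖x - y‖ := by
          apply mul_le_mul_of_nonneg_right _ (norm_nonneg _)
          rw [inv_le_one_iff₀]; right; exact hx
      _ = ‖x - y‖ := one_mul _
  have h2 : ‖((‖x‖⁻¹ - ‖y‖⁻¹ : ℝ)) • y‖ ≤ ‖x - y‖ := by
    rw [norm_smul, Real.norm_eq_abs]
    have habs : |(‖x‖⁻¹ - ‖y‖⁻¹ : ℝ)| = |‖y‖ - ‖x‖| / (‖x‖ * ‖y‖) := by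
      have heq : ‖x‖⁻¹ - ‖y‖⁻¹ = (‖y‖ - ‖x‖) / (‖x‖ * ‖y‖) := by
        field_simp
      rw [heq, abs_div, abs_of_pos (mul_pos hx0 hy0)]
    rw [habs]
    have hyx : |‖y‖ - ‖x‖| ≤ ‖x - y‖ := by
      rw [abs_sub_comm]
      exact abs_norm_sub_norm_le x y
    calc |‖y‖ - ‖x‖| / (‖x‖ * ‖y‖) * ‖y‖ = |‖y‖ - ‖x‖| / ‖x‖ := by
          field_simp
      _ ≤ |‖y‖ - ‖x‖| := div_le_self (abs_nonneg _) hx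
      _ ≤ ‖x - y‖ := hyx
  calc ‖‖x‖⁻¹ • (x - y) + (‖x‖⁻¹ - ‖y‖⁻¹) • y‖ ≤ ‖(‖x‖⁻¹ : ℝ) • (x - y)‖ + ‖((‖x‖⁻¹ - ‖y‖⁻¹ : ℝ)) • y‖ :=
        norm_add_le _ _
    _ ≤ ‖x - y‖ + ‖x - y‖ := add_le_add h1 h2
    _ = 2 * ‖x - y‖ := by ring
    _ = (2:ℝ≥0) * dist x y := by rw [dist_eq_norm]; norm_num

lemma aux_sphere_finite (h1 : 1 ≤ finrank ℝ E) :
    μH[(finrank ℝ E : ℝ) - 1] (sphere (0:E) 1) < ⊤ := by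
  set m := finrank ℝ E with hm
  have hd : (0:ℝ) ≤ (m:ℝ) - 1 := by
    have : (1:ℝ) ≤ (m:ℝ) := by exact_mod_cast h1
    linarith
  set b := stdOrthonormalBasis ℝ E with hb
  set face : Fin m → ℝ → Set E := fun i ε => {x : E | b.repr x i = ε ∧ ∀ j, |b.repr x j| ≤ 1}
    with hface
  -- each face has finite measure
  have hfacefin : ∀ (i : Fin m) (ε : ℝ), |ε| = 1 → μH[(m:ℝ) - 1] (face i ε) < ⊤ := by
    intro i ε hε
    haveI : Fact (finrank ℝ E = (m - 1) + 1) := ⟨by omega⟩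
    have hbi : b i ≠ 0 := by
      intro h
      have := b.orthonormal.1 i
      rw [h] at this; simp at this
    have hrank : finrank ℝ ((ℝ ∙ (b i))ᗮ : Submodule ℝ E) = m - 1 :=
      Submodule.finrank_orthogonal_span_singleton hbi
    have hcast : ((m - 1 : ℕ) : ℝ) = (m:ℝ) - 1 := by
      have := Nat.cast_sub h1 (R := ℝ)
      simpa using this
    have hbdd : IsBounded (face i ε) := by
      apply (isBounded_closedBall (x := (0:E)) (r := Real.sqrt m)).subset
      intro x hx
      obtain ⟨-, hx2⟩ := hx
      simp only [mem_closedBall, dist_zero_right]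
      have hnorm : ‖x‖ = ‖b.repr x‖ := (b.repr.norm_map x).symm
      rw [hnorm, EuclideanSpace.norm_eq]
      apply Real.sqrt_le_sqrt
      calc (∑ j, ‖b.repr x j‖ ^ 2) ≤ ∑ _j : Fin m, 1 := by
            apply Finset.sum_le_sum
            intro j _
            have := hx2 j
            rw [Real.norm_eq_abs]
            nlinarith [abs_nonneg (b.repr x j)]
        _ = (m : ℝ) := by simp
    have hsub : ∀ x ∈ face i ε, x - ε • b i ∈ (ℝ ∙ (b i))ᗮ := by
      intro x hx
      rw [Submodule.mem_orthogonal_singleton_iff_inner_right]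
      rw [inner_sub_right, inner_smul_right]
      have : ⟪b i, x⟫ = b.repr x i := (b.repr_apply_apply x i).symm
      rw [this, hx.1, real_inner_self_eq_norm_sq]
      have : ‖b i‖ = 1 := b.orthonormal.1 i
      rw [this]; ring
    have := aux_subspace_finite ((ℝ ∙ (b i))ᗮ) (ε • b i) (face i ε) hbdd hsub
    rwa [hrank, hcast] at this
  -- the cube sphere
  set cubeS : Set E := ⋃ i : Fin m, (face i 1 ∪ face i (-1)) with hcube
  have hcubefin : μH[(m:ℝ) - 1] cubeS < ⊤ := by
    apply lt_of_le_of_lt (measure_iUnion_le _)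
    rw [tsum_fintype]
    apply ENNReal.sum_lt_top.2
    intro i _
    apply lt_of_le_of_lt (measure_union_le _ _)
    exact ENNReal.add_lt_top.2 ⟨hfacefin i 1 (by norm_num), hfacefin i (-1) (by norm_num)⟩
  have hcubeA : cubeS ⊆ {x : E | 1 ≤ ‖x‖} := by
    rintro x hx
    simp only [hcube, mem_iUnion, mem_union] at hx
    obtain ⟨i, hi⟩ := hx
    have habs : |b.repr x i| = 1 := by
      rcases hi with h | h
      · rw [h.1]; norm_num
      · rw [h.1]; norm_num
    have : |b.repr x i| ≤ ‖x‖ := by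
      rw [b.repr_apply_apply]
      calc |⟪b i, x⟫| ≤ ‖b i‖ * ‖x‖ := abs_real_inner_le_norm _ _
        _ = ‖x‖ := by rw [b.orthonormal.1 i, one_mul]
    rw [habs] at this
    exact this
  -- sphere is covered by the radial image of the cube sphere
  have hcover : sphere (0:E) 1 ⊆ (fun x : E => ‖x‖⁻¹ • x) '' cubeS := by
    intro y hy
    have hy1 : ‖y‖ = 1 := by simpa using hy
    have hyne : b.repr y ≠ 0 := by
      intro h
      have : y = 0 := by
        have := congrArg b.repr.symm h
        simpa using this
      rw [this] at hy1; simp at hy1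
    have hne : (Finset.univ : Finset (Fin m)).Nonempty := by
      rw [Finset.univ_nonempty_iff]
      exact Fin.pos_iff_nonempty.mp (by omega)
    obtain ⟨i, -, hi⟩ := Finset.exists_max_image Finset.univ (fun j => |b.repr y j|) hne
    set M := |b.repr y i| with hM
    have hMpos : 0 < M := by
      rcases eq_or_lt_of_le (abs_nonneg (b.repr y i)) with h | h
      · exfalso
        apply hyne
        ext j
        have h2 := hi j (Finset.mem_univ j)
        have h3 : |b.repr y j| ≤ 0 := le_of_le_of_eq h2 h.symm
        have h4 : b.repr y j = 0 := abs_eq_zero.mp (le_antisymm h3 (abs_nonneg _))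
        simpa using h4
      · exact h
    refine ⟨M⁻¹ • y, ?_, ?_⟩
    · simp only [hcube, mem_iUnion, mem_union]
      refine ⟨i, ?_⟩
      have hcoord : ∀ j, b.repr (M⁻¹ • y) j = M⁻¹ * b.repr y j := by
        intro j; rw [_root_.map_smul]; rfl
      have hcoordi : |b.repr (M⁻¹ • y) i| = 1 := by
        rw [hcoord, abs_mul, abs_inv, abs_abs, ← hM]
        field_simp
      have hbound : ∀ j, |b.repr (M⁻¹ • y) j| ≤ 1 := by
        intro j
        rw [hcoord, abs_mul, abs_inv, abs_abs, ← hM]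
        rw [inv_mul_le_iff₀ hMpos]
        simpa using hi j (Finset.mem_univ j)
      rcases abs_eq (le_of_lt one_pos : (0:ℝ) ≤ 1) |>.mp hcoordi with h | h
      · exact Or.inl ⟨h, hbound⟩
      · exact Or.inr ⟨h, hbound⟩
    · have hnx : ‖M⁻¹ • y‖ = M⁻¹ := by
        rw [norm_smul, hy1, mul_one, Real.norm_eq_abs, abs_inv, abs_abs]
      show ‖M⁻¹ • y‖⁻¹ • (M⁻¹ • y) = y
      rw [hnx, inv_inv, smul_smul, mul_inv_cancel₀ (ne_of_gt hMpos), one_smul]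
  -- conclude
  have hlip := (radial_lipschitz (E := E)).mono hcubeA
  have himle := hlip.hausdorffMeasure_image_le hd
  calc μH[(m:ℝ)-1] (sphere (0:E) 1) ≤ μH[(m:ℝ)-1] ((fun x : E => ‖x‖⁻¹ • x) '' cubeS) :=
        measure_mono hcover
    _ ≤ (2:ℝ≥0) ^ ((m:ℝ)-1) * μH[(m:ℝ)-1] cubeS := himle
    _ < ⊤ := ENNReal.mul_lt_top
        (ENNReal.rpow_ne_top_of_nonneg hd ENNReal.coe_ne_top).lt_top hcubefin



set_option maxHeartbeats 1000000 in
lemma aux_cap_pos (h1 : 1 ≤ finrank ℝ E) (z : E) (hz : ‖z‖ = 1) {r : ℝ} (hr : 0 < r) :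
    0 < μH[(finrank ℝ E : ℝ) - 1] {x : E | ‖x‖ = 1 ∧ ‖x - z‖ < r} := by
  set m := finrank ℝ E with hm
  have hd : (0:ℝ) ≤ (m:ℝ) - 1 := by
    have : (1:ℝ) ≤ (m:ℝ) := by exact_mod_cast h1
    linarith
  set W := (ℝ ∙ z)ᗮ with hW
  haveI : Fact (finrank ℝ E = (m - 1) + 1) := ⟨by omega⟩
  have hzne : z ≠ 0 := by intro h; rw [h] at hz; simp at hz
  have hrank : finrank ℝ W = m - 1 := Submodule.finrank_orthogonal_span_singleton hzne
  have hcast : ((m - 1 : ℕ) : ℝ) = (m:ℝ) - 1 := by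
    have := Nat.cast_sub h1 (R := ℝ)
    simpa using this
  set Pj : E → E := fun x => ((Submodule.orthogonalProjectionOnto W x : W) : E) with hPj
  have hPjlip : LipschitzWith 1 Pj := by
    apply LipschitzWith.of_dist_le_mul
    intro x y
    rw [dist_eq_norm, dist_eq_norm]
    have : Pj x - Pj y = ((Submodule.orthogonalProjectionOnto W (x - y) : W) : E) := by
      simp [hPj, map_sub]
    rw [this]
    have hb := (Submodule.orthogonalProjectionOnto W).le_opNorm (x - y)
    have hno := Submodule.orthogonalProjectionOnto_norm_le W
    calc ‖((Submodule.orthogonalProjectionOnto W (x - y) : W) : E)‖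
        = ‖(Submodule.orthogonalProjectionOnto W (x - y) : W)‖ := rfl
      _ ≤ ‖Submodule.orthogonalProjectionOnto W‖ * ‖x - y‖ := hb
      _ ≤ 1 * ‖x - y‖ := by
          apply mul_le_mul_of_nonneg_right hno (norm_nonneg _)
      _ = (1:ℝ≥0) * ‖x - y‖ := by norm_num
  set ρ := min (r / 2) 2⁻¹ with hρdef
  have hρ : 0 < ρ := by
    apply lt_min (by linarith) (by norm_num)
  set cap := {x : E | ‖x‖ = 1 ∧ ‖x - z‖ < r} with hcap
  have hsub : (W : Set E) ∩ ball 0 ρ ⊆ Pj '' cap := by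
    rintro w ⟨hwW, hwb⟩
    rw [mem_ball, dist_zero_right] at hwb
    have hw2 : ‖w‖ ≤ 2⁻¹ := le_of_lt (lt_of_lt_of_le hwb (min_le_right _ _))
    have hwr : ‖w‖ < r / 2 := lt_of_lt_of_le hwb (min_le_left _ _)
    have hw1 : 1 - ‖w‖ ^ 2 ≥ 0 := by nlinarith [norm_nonneg w]
    set t := Real.sqrt (1 - ‖w‖ ^ 2) with ht
    have ht2 : t ^ 2 = 1 - ‖w‖ ^ 2 := Real.sq_sqrt hw1
    have ht0 : 0 ≤ t := Real.sqrt_nonneg _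
    clear_value t
    have ht1 : t ≤ 1 := by nlinarith [norm_nonneg w]
    have hzw : ⟪z, w⟫ = 0 := Submodule.mem_orthogonal_singleton_iff_inner_right.mp hwW
    have hwz : ⟪w, z⟫ = 0 := by rw [real_inner_comm]; exact hzw
    set x := w + t • z with hx
    clear_value x
    have hxnorm2 : ‖x‖ ^ 2 = 1 := by
      rw [hx, norm_add_sq_real, inner_smul_right, hwz, norm_smul, Real.norm_eq_abs,
        abs_of_nonneg ht0, hz]
      ring_nf
      nlinarith [ht2]
    have hxnorm : ‖x‖ = 1 := by
      rw [← Real.sqrt_sq (norm_nonneg x), hxnorm2, Real.sqrt_one]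
    have hxz : ‖x - z‖ < r := by
      have hx0 : x - z = w + (t - 1) • z := by rw [hx]; module
      have h2 : ‖x - z‖ ^ 2 = ‖w‖ ^ 2 + (t - 1) ^ 2 := by
        rw [hx0, norm_add_sq_real, inner_smul_right, hwz, norm_smul, Real.norm_eq_abs, hz]
        simp [sq_abs]
      have h1t : 1 - t ≤ ‖w‖ ^ 2 := by nlinarith [ht2]
      have ha : (0:ℝ) ≤ ‖w‖ := norm_nonneg w
      have e1 : (t - 1) ^ 2 ≤ ‖w‖ ^ 2 * ‖w‖ ^ 2 := by nlinarith
      have e3 : ‖x - z‖ ^ 2 ≤ ‖w‖ ^ 2 * (1 + ‖w‖ ^ 2) := by nlinarith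
      have e4 : ‖w‖ ^ 2 * (1 + ‖w‖ ^ 2) < r ^ 2 := by nlinarith
      exact lt_of_pow_lt_pow_left₀ 2 (le_of_lt hr) (lt_of_le_of_lt e3 e4)
    refine ⟨x, ⟨hxnorm, hxz⟩, ?_⟩
    have hprojw : ((Submodule.orthogonalProjectionOnto W w : W) : E) = w :=
      (Submodule.starProjection_eq_self_iff (K := W)).mpr hwW
    have hprojz : Submodule.orthogonalProjectionOnto W z = 0 := by
      apply Submodule.orthogonalProjectionOnto_apply_of_mem_orthogonal
      exact Submodule.le_orthogonal_orthogonal _ (Submodule.mem_span_singleton_self z)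
    show ((Submodule.orthogonalProjectionOnto W x : W) : E) = w
    rw [hx, map_add, _root_.map_smul, hprojz, smul_zero, add_zero, hprojw]
  have himle := hPjlip.hausdorffMeasure_image_le hd cap
  have hpos : 0 < μH[(m:ℝ) - 1] ((W : Set E) ∩ ball 0 ρ) := by
    have := aux_subspace_ball_pos W hρ
    rwa [hrank, hcast] at this
  calc (0:ℝ≥0∞) < μH[(m:ℝ) - 1] ((W : Set E) ∩ ball 0 ρ) := hpos
    _ ≤ μH[(m:ℝ) - 1] (Pj '' cap) := measure_mono hsub
    _ ≤ (1:ℝ≥0) ^ ((m:ℝ)-1) * μH[(m:ℝ)-1] cap := himle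
    _ = μH[(m:ℝ)-1] cap := by simp


set_option maxHeartbeats 1000000 in
/-- For a nonempty closed convex cone `C ⊆ ℝⁿ` which is relatively proper (a proper subset of
its linear span), the Bochner integral of the identity over `C ∩ S^{n-1}` with respect to the
`(m-1)`-dimensional Hausdorff measure, where `m = dim span C`, is a nonzero vector. -/
theorem integral_over_cone_sphere_ne_zero (n : ℕ) (C : Set (EuclideanSpace ℝ (Fin n)))
    (hne : C.Nonempty) (hcl : IsClosed C) (hconv : Convex ℝ C)
    (hcone : ∀ x ∈ C, ∀ t : ℝ, 0 ≤ t → t • x ∈ C)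
    (hproper : C ≠ (Submodule.span ℝ C : Set (EuclideanSpace ℝ (Fin n)))) :
    (∫ x in C ∩ Metric.sphere (0 : EuclideanSpace ℝ (Fin n)) 1, x
      ∂(μH[(Module.finrank ℝ (Submodule.span ℝ C) : ℝ) - 1])) ≠ 0 := by
  classical
  let X := EuclideanSpace ℝ (Fin n)
  set V := Submodule.span ℝ C with hV
  set m := finrank ℝ V with hm
  set d : ℝ := (m : ℝ) - 1 with hdd
  set μ : Measure X := μH[d] with hμ
  have h0C : (0 : X) ∈ C := by
    obtain ⟨x, hx⟩ := hne
    simpa using hcone x hx 0 le_rfl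
  have hCV : C ⊆ (V : Set X) := Submodule.subset_span
  -- m ≥ 1
  have hm1 : 1 ≤ m := by
    by_contra h
    have hm0 : m = 0 := by omega
    have hbot : V = ⊥ := Submodule.finrank_eq_zero.mp hm0
    apply hproper
    apply subset_antisymm hCV
    intro x hx
    rw [hbot] at hx
    simp only [Submodule.bot_coe, mem_singleton_iff] at hx
    rw [hx]; exact h0C
  have hd0 : (0:ℝ) ≤ d := by
    rw [hdd]
    have : (1:ℝ) ≤ (m:ℝ) := by exact_mod_cast hm1
    linarith
  -- the convex cone
  set K : ConvexCone ℝ X :=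
    { carrier := C
      smul_mem' := fun {c} hc {x} hx => hcone x hx c hc.le
      add_mem' := fun {x} hx {y} hy => by
        have h2 : (1/2 : ℝ) • x + (1/2 : ℝ) • y ∈ C :=
          hconv hx hy (by norm_num) (by norm_num) (by norm_num)
        have h3 := hcone _ h2 2 (by norm_num)
        have h4 : (2:ℝ) • ((1/2:ℝ) • x + (1/2:ℝ) • y) = x + y := by module
        rwa [h4] at h3 } with hK
  -- a point of V not in C
  obtain ⟨z₀, hz₀V, hz₀C⟩ : ∃ z, z ∈ (V : Set X) ∧ z ∉ C := by
    by_contra h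
    push_neg at h
    exact hproper (subset_antisymm hCV h)
  -- separation
  obtain ⟨u, hu1, hu2⟩ :=
    ProperCone.hyperplane_separation' (C := { carrier := C, add_mem' := (fun {a b} ha hb => K.add_mem' ha hb), zero_mem' := h0C, smul_mem' := (fun c {x} hx => hcone x hx c c.2), isClosed' := hcl }) hz₀C
  -- there is a point of C with positive inner product with u
  have hx₀ : ∃ x₀ ∈ C, 0 < ⟪x₀, u⟫ := by
    by_contra h
    push_neg at h
    have hker : ∀ x ∈ C, ⟪x, u⟫ = 0 := fun x hx => le_antisymm (h x hx) (hu1 x hx)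
    have hVker : V ≤ LinearMap.ker ((innerSL ℝ u).toLinearMap) := by
      rw [hV]
      apply Submodule.span_le.mpr
      intro x hx
      simp only [SetLike.mem_coe, LinearMap.mem_ker, ContinuousLinearMap.coe_coe, innerSL_apply_apply]
      rw [real_inner_comm]
      exact hker x hx
    have : ⟪u, z₀⟫ = 0 := by
      have hzk := hVker hz₀V
      simp only [LinearMap.mem_ker, ContinuousLinearMap.coe_coe, innerSL_apply_apply] at hzk
      exact hzk
    linarith [real_inner_comm u z₀]
  obtain ⟨x₀, hx₀C, hx₀pos⟩ := hx₀
  -- work inside V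
  set C' : Set V := (V.subtype) ⁻¹' C with hC'
  have hC'conv : Convex ℝ C' := hconv.linear_preimage V.subtype
  have h0C' : (0 : V) ∈ C' := by
    simp only [hC', mem_preimage, map_zero]
    exact h0C
  have hC'cone : ∀ w ∈ C', ∀ t : ℝ, 0 ≤ t → t • w ∈ C' := by
    intro w hw t ht
    simp only [hC', mem_preimage, Submodule.coe_subtype, SetLike.val_smul] at hw ⊢
    exact hcone _ hw t ht
  have hspan' : Submodule.span ℝ C' = ⊤ := by
    apply Submodule.map_injective_of_injective V.injective_subtype
    rw [Submodule.map_span, Submodule.map_top, Submodule.range_subtype]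
    have himg : V.subtype '' C' = C := by
      rw [hC', Set.image_preimage_eq_inter_range]
      simp only [Submodule.coe_subtype, Subtype.range_coe_subtype]
      exact Set.inter_eq_left.mpr hCV
    rw [himg, ← hV]
  have haff' : affineSpan ℝ C' = ⊤ := by
    apply SetLike.coe_injective
    rw [← Set.insert_eq_of_mem h0C', affineSpan_insert_zero, hspan']
    simp
  obtain ⟨y₀, hy₀⟩ : (interior C').Nonempty :=
    hC'conv.interior_nonempty_iff_affineSpan_eq_top.mpr haff'
  obtain ⟨r₀, hr₀pos, hball₀⟩ : ∃ r₀ > 0, ball y₀ r₀ ⊆ C' := by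
    obtain ⟨r₀, hr₀pos, hb⟩ := Metric.isOpen_iff.mp isOpen_interior y₀ hy₀
    exact ⟨r₀, hr₀pos, hb.trans interior_subset⟩
  have hy₀C' : y₀ ∈ C' := interior_subset hy₀
  set x₀' : V := ⟨x₀, hCV hx₀C⟩ with hx₀'
  -- the mixed point z
  set z : V := (1/2 : ℝ) • y₀ + (1/2 : ℝ) • x₀' with hz
  have hzC'ball : ball z (r₀/2) ⊆ C' := by
    intro w hw
    rw [mem_ball, dist_eq_norm] at hw
    set y' : V := y₀ + (2:ℝ) • (w - z) with hy'
    have hy'mem : y' ∈ C' := by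
      apply hball₀
      rw [mem_ball, dist_eq_norm]
      have : y' - y₀ = (2:ℝ) • (w - z) := by rw [hy']; abel
      rw [this, norm_smul]
      simp only [Real.norm_ofNat]
      linarith
    have hcombo : w = (1/2 : ℝ) • y' + (1/2 : ℝ) • x₀' := by
      rw [hy', hz]
      module
    rw [hcombo]
    exact hC'conv hy'mem (hC' ▸ (by simp only [hC', mem_preimage]; exact hx₀C))
      (by norm_num) (by norm_num) (by norm_num)
  have hzinner : 0 < ⟪(z : X), u⟫ := by
    have h1 : ⟪(z : X), u⟫ = (1/2) * ⟪(y₀ : X), u⟫ + (1/2) * ⟪x₀, u⟫ := by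
      have hcoe : ((z : X)) = (1/2:ℝ) • ((y₀ : X)) + (1/2:ℝ) • x₀ := by
        rw [hz]; push_cast; rfl
      rw [hcoe, inner_add_left, real_inner_smul_left, real_inner_smul_left]
    have h2 : 0 ≤ ⟪(y₀ : X), u⟫ := hu1 _ hy₀C'
    rw [h1]
    linarith
  have hzne : z ≠ 0 := by
    intro h
    rw [h] at hzinner
    simp at hzinner
  have hznorm : 0 < ‖z‖ := norm_pos_iff.mpr hzne
  -- normalize
  set z' : V := ‖z‖⁻¹ • z with hz'
  have hz'norm : ‖z'‖ = 1 := by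
    rw [hz', norm_smul, norm_inv, norm_norm, inv_mul_cancel₀ (ne_of_gt hznorm)]
  set ρ₁ : ℝ := (r₀/2) * ‖z‖⁻¹ with hρ₁
  have hρ₁pos : 0 < ρ₁ := by positivity
  have hz'ball : ball z' ρ₁ ⊆ C' := by
    intro w hw
    rw [mem_ball, dist_eq_norm] at hw
    have hmem : ‖z‖ • w ∈ C' := by
      apply hzC'ball
      rw [mem_ball, dist_eq_norm]
      have : ‖z‖ • w - z = ‖z‖ • (w - z') := by
        rw [hz', smul_sub, smul_smul, mul_inv_cancel₀ (ne_of_gt hznorm), one_smul]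
      rw [this, norm_smul, norm_norm]
      calc ‖z‖ * ‖w - z'‖ < ‖z‖ * ρ₁ := by
            exact mul_lt_mul_of_pos_left hw hznorm
        _ = r₀ / 2 := by
            rw [hρ₁, mul_comm (r₀/2), ← mul_assoc, mul_inv_cancel₀ (ne_of_gt hznorm), one_mul]
    have : w = ‖z‖⁻¹ • (‖z‖ • w) := by
      rw [smul_smul, inv_mul_cancel₀ (ne_of_gt hznorm), one_smul]
    rw [this]
    exact hC'cone _ hmem _ (by positivity)
  have hz'inner : 0 < ⟪(z' : X), u⟫ := by
    have : ⟪(z' : X), u⟫ = ‖z‖⁻¹ * ⟪(z : X), u⟫ := by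
      rw [hz']
      push_cast
      rw [real_inner_smul_left]
    rw [this]
    positivity
  -- the cap
  set capr : ℝ := min ρ₁ (⟪(z' : X), u⟫ / (‖u‖ + 1)) with hcapr
  have hcaprpos : 0 < capr := by
    apply lt_min hρ₁pos
    positivity
  set cap : Set V := {w : V | ‖w‖ = 1 ∧ ‖w - z'‖ < capr} with hcap
  have hcapC' : ∀ w ∈ cap, w ∈ C' := by
    rintro w ⟨-, hw2⟩
    apply hz'ball
    rw [mem_ball, dist_eq_norm]
    exact lt_of_lt_of_le hw2 (min_le_left _ _)
  have hcapinner : ∀ w ∈ cap, 0 < ⟪(w : X), u⟫ := by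
    rintro w ⟨-, hw2⟩
    have hdiff : ⟪(w : X), u⟫ = ⟪(z' : X), u⟫ + ⟪((w - z' : V) : X), u⟫ := by
      push_cast
      rw [inner_sub_left]
      ring
    have habs : |⟪((w - z' : V) : X), u⟫| ≤ ‖w - z'‖ * ‖u‖ := by
      calc |⟪((w - z' : V) : X), u⟫| ≤ ‖((w - z' : V) : X)‖ * ‖u‖ := abs_real_inner_le_norm _ _
        _ = ‖w - z'‖ * ‖u‖ := by rw [Submodule.norm_coe]
    have hlt : ‖w - z'‖ * ‖u‖ < ⟪(z' : X), u⟫ := by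
      have h1 : ‖w - z'‖ ≤ ⟪(z' : X), u⟫ / (‖u‖ + 1) :=
        le_of_lt (lt_of_lt_of_le hw2 (min_le_right _ _))
      have h2 : ‖w - z'‖ * ‖u‖ ≤ (⟪(z' : X), u⟫ / (‖u‖ + 1)) * ‖u‖ :=
        mul_le_mul_of_nonneg_right h1 (norm_nonneg u)
      have h3 : (⟪(z' : X), u⟫ / (‖u‖ + 1)) * ‖u‖ < ⟪(z' : X), u⟫ := by
        rw [div_mul_eq_mul_div, div_lt_iff₀ (by positivity : (0:ℝ) < ‖u‖ + 1)]
        nlinarith [norm_nonneg u, hz'inner]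
      linarith
    rw [hdiff]
    have hbounds := abs_le.mp habs
    linarith [hbounds.1, hlt]
  -- transfer positivity to X
  have hiso : Isometry ((↑) : V → EuclideanSpace ℝ (Fin n)) := (Submodule.subtypeₗᵢ V).isometry
  have hd' : d = (finrank ℝ ↥V : ℝ) - 1 := by rw [hdd, hm]
  have hmV : 1 ≤ finrank ℝ ↥V := by rw [← hm]; exact hm1
  have hcapXpos : 0 < μ (((↑) : V → EuclideanSpace ℝ (Fin n)) '' cap) := by
    rw [hμ, hiso.hausdorffMeasure_image (Or.inl hd0), hd']
    exact aux_cap_pos hmV z' hz'norm hcaprpos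
  -- the integration set
  set A := C ∩ sphere (0 : EuclideanSpace ℝ (Fin n)) 1 with hA
  have hAmeas : MeasurableSet A := hcl.measurableSet.inter isClosed_sphere.measurableSet
  have hAsub : A ⊆ ((↑) : V → EuclideanSpace ℝ (Fin n)) '' (sphere (0 : V) 1) := by
    rintro x ⟨hxC, hxS⟩
    refine ⟨⟨x, hCV hxC⟩, ?_, rfl⟩
    rw [mem_sphere_zero_iff_norm] at hxS ⊢
    exact hxS
  have hAfin : μ A < ⊤ := by
    refine lt_of_le_of_lt (measure_mono hAsub) ?_
    rw [hμ, hiso.hausdorffMeasure_image (Or.inl hd0), hd']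
    exact aux_sphere_finite hmV
  haveI hfin : IsFiniteMeasure (μ.restrict A) := by
    constructor
    rwa [Measure.restrict_apply_univ]
  have hIntId : IntegrableOn (fun x : EuclideanSpace ℝ (Fin n) => x) A μ := by
    constructor
    · exact continuous_id.aestronglyMeasurable
    · apply HasFiniteIntegral.of_bounded (C := 1)
      filter_upwards [ae_restrict_mem hAmeas] with x hx
      rw [mem_sphere_zero_iff_norm.mp hx.2]
  set f : EuclideanSpace ℝ (Fin n) → ℝ := fun x => ⟪u, x⟫ with hf
  have hIntf : IntegrableOn f A μ := hIntId.const_inner u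
  have hnonneg : 0 ≤ᵐ[μ.restrict A] f := by
    filter_upwards [ae_restrict_mem hAmeas] with x hx
    have := hu1 x hx.1
    rw [hf]
    simp only
    rw [real_inner_comm]
    exact this
  have hposint : 0 < ∫ x in A, f x ∂μ := by
    rw [setIntegral_pos_iff_support_of_nonneg_ae hnonneg hIntf]
    refine lt_of_lt_of_le hcapXpos (measure_mono ?_)
    rintro x ⟨w, hw, rfl⟩
    constructor
    · show f _ ≠ 0
      apply ne_of_gt
      rw [hf]
      simp only
      rw [real_inner_comm]
      exact hcapinner w hw
    · refine ⟨hcapC' w hw, ?_⟩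
      rw [mem_sphere_zero_iff_norm]
      exact hw.1
  intro hzero
  have hinner := integral_inner (𝕜 := ℝ) hIntId u
  rw [hzero, inner_zero_right] at hinner
  rw [hf] at hposint
  simp only at hposint
  rw [hinner] at hposint
  exact lt_irrefl 0 hposint
end

section
/- Let C ⊆ ℝⁿ be a nonempty closed convex cone which is relatively proper, i.e., C ≠ span_ℝ(C) as sets, let m := dim span_ℝ(C), and let v := ∫_{C ∩ S^{n-1}} x dμH^{m-1}(x) (a Bochner integral). Then (a) ⟨x, v⟩ ≥ 0 for every x ∈ C, and (b) the set {x ∈ C : ⟨x, v⟩ = 0} is symmetric about the origin: {x ∈ C : ⟨x,v⟩ = 0} = −{x ∈ C : ⟨x,v⟩ = 0}. -/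
set_option maxHeartbeats 1000000

open scoped RealInnerProductSpace
open MeasureTheory Metric Module Set

section AuxConeCOM

variable {n : ℕ}

lemma sqrt_lip {a b : ℝ} (ha : 1/4 ≤ a) (hb : 1/4 ≤ b) :
    |Real.sqrt a - Real.sqrt b| ≤ |a - b| := by
  have h1 : Real.sqrt a ^ 2 = a := Real.sq_sqrt (by linarith)
  have h2 : Real.sqrt b ^ 2 = b := Real.sq_sqrt (by linarith)
  have h3 : (1:ℝ)/2 ≤ Real.sqrt a := by
    rw [show (1:ℝ)/2 = Real.sqrt (1/4) by rw [show (1:ℝ)/4 = (1/2)^2 by norm_num, Real.sqrt_sq]; norm_num]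
    exact Real.sqrt_le_sqrt ha
  have h4 : (1:ℝ)/2 ≤ Real.sqrt b := by
    rw [show (1:ℝ)/2 = Real.sqrt (1/4) by rw [show (1:ℝ)/4 = (1/2)^2 by norm_num, Real.sqrt_sq]; norm_num]
    exact Real.sqrt_le_sqrt hb
  rcases abs_cases (Real.sqrt a - Real.sqrt b) with ⟨he, _⟩ | ⟨he, _⟩ <;>
    rcases abs_cases (a - b) with ⟨hf, _⟩ | ⟨hf, _⟩ <;> nlinarith

variable {n : ℕ}

lemma exists_chart (V : Submodule ℝ (EuclideanSpace ℝ (Fin n))) {u : EuclideanSpace ℝ (Fin n)}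
    (hu : u ∈ V) (hu1 : ‖u‖ = 1) :
    ∃ (φ : EuclideanSpace ℝ (Fin (finrank ℝ V - 1)) → EuclideanSpace ℝ (Fin n))
      (ψ : EuclideanSpace ℝ (Fin n) → EuclideanSpace ℝ (Fin (finrank ℝ V - 1))),
      (∀ a, ‖a‖ ≤ 1 → (φ a ∈ V ∧ ‖φ a‖ = 1 ∧ ‖φ a - u‖^2 ≤ 2 * ‖a‖^2)) ∧
      (∀ a b, ‖a‖^2 ≤ 3/4 → ‖b‖^2 ≤ 3/4 → dist (φ a) (φ b) ≤ 3 * dist a b) ∧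
      (∀ y, y ∈ V → ‖y‖ = 1 → 1/2 ≤ ⟪u, y⟫ → ∃ a, ‖a‖^2 ≤ 3/4 ∧ φ a = y) ∧
      LipschitzWith 1 ψ ∧ (∀ a, ψ (φ a) = a) := by
  classical
  have hune : u ≠ 0 := by intro h; rw [h, norm_zero] at hu1; norm_num at hu1
  have hm : 1 ≤ finrank ℝ V := by
    have : Nontrivial V := ⟨⟨u, hu⟩, 0, by simp [hune]⟩
    exact Module.finrank_pos
  set F : Submodule ℝ (EuclideanSpace ℝ (Fin n)) := (ℝ ∙ u)ᗮ ⊓ V with hFdef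
  have hFV : F ≤ V := inf_le_right
  have hFu : ∀ w ∈ F, ⟪u, w⟫ = 0 := fun w hw =>
    Submodule.mem_orthogonal_singleton_iff_inner_right.mp hw.1
  have hFrank : finrank ℝ F = finrank ℝ V - 1 := by
    have hle : (ℝ ∙ u) ≤ V := by rwa [Submodule.span_singleton_le_iff_mem]
    exact Submodule.finrank_add_inf_finrank_orthogonal' (𝕜 := ℝ) hle
      (n := finrank ℝ V - 1) (by rw [finrank_span_singleton hune]; omega)
  set B := (stdOrthonormalBasis ℝ F).reindex (finCongr hFrank) with hB
  set J0 := B.repr.symm with hJ0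
  set φ : EuclideanSpace ℝ (Fin (finrank ℝ V - 1)) → EuclideanSpace ℝ (Fin n) :=
    fun a => (J0 a : EuclideanSpace ℝ (Fin n)) + Real.sqrt (1 - ‖a‖^2) • u with hφ
  set ψ : EuclideanSpace ℝ (Fin n) → EuclideanSpace ℝ (Fin (finrank ℝ V - 1)) :=
    fun y => B.repr (F.orthogonalProjectionOnto y) with hψ
  have hJnorm : ∀ a, ‖(J0 a : EuclideanSpace ℝ (Fin n))‖ = ‖a‖ := fun a => by
    rw [← Submodule.coe_norm, J0.norm_map]
  have hJinner : ∀ a, ⟪(J0 a : EuclideanSpace ℝ (Fin n)), u⟫ = 0 := fun a => by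
    rw [real_inner_comm]; exact hFu _ (J0 a).2
  have hJsub : ∀ a b, (J0 a : EuclideanSpace ℝ (Fin n)) - J0 b
      = ((J0 a - J0 b : F) : EuclideanSpace ℝ (Fin n)) := fun a b => rfl
  have hnorm_aux : ∀ (a : EuclideanSpace ℝ (Fin (finrank ℝ V - 1))) (s : ℝ),
      ‖(J0 a : EuclideanSpace ℝ (Fin n)) + s • u‖^2 = ‖a‖^2 + s^2 := by
    intro a s
    rw [norm_add_sq_real, real_inner_smul_right, hJinner, hJnorm, norm_smul, hu1,
      Real.norm_eq_abs, mul_one, sq_abs]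
    ring
  refine ⟨φ, ψ, ?_, ?_, ?_, ?_, ?_⟩
  · intro a ha
    have h1 : (0:ℝ) ≤ 1 - ‖a‖^2 := by nlinarith [norm_nonneg a]
    have hsq : Real.sqrt (1 - ‖a‖^2)^2 = 1 - ‖a‖^2 := Real.sq_sqrt h1
    have hs0 : 0 ≤ Real.sqrt (1 - ‖a‖^2) := Real.sqrt_nonneg _
    have hs1 : Real.sqrt (1 - ‖a‖^2) ≤ 1 := Real.sqrt_le_one.mpr (by nlinarith [norm_nonneg a])
    refine ⟨V.add_mem (hFV (J0 a).2) (V.smul_mem _ hu), ?_, ?_⟩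
    · have h2 : ‖φ a‖^2 = 1 := by rw [hφ]; simp only; rw [hnorm_aux, hsq]; ring
      nlinarith [norm_nonneg (φ a)]
    · have key : φ a - u = (J0 a : EuclideanSpace ℝ (Fin n)) + (Real.sqrt (1 - ‖a‖^2) - 1) • u := by
        rw [hφ]; simp only; rw [sub_smul, one_smul, add_sub_assoc]
      rw [key, hnorm_aux]
      have h2 : 1 - Real.sqrt (1 - ‖a‖^2) ≤ ‖a‖^2 := by nlinarith
      nlinarith [norm_nonneg a]
  · intro a b ha hb
    have hna : ‖a‖ ≤ 1 := by nlinarith [norm_nonneg a]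
    have hnb : ‖b‖ ≤ 1 := by nlinarith [norm_nonneg b]
    have key : φ a - φ b = ((J0 a : EuclideanSpace ℝ (Fin n)) - J0 b) +
        (Real.sqrt (1 - ‖a‖^2) - Real.sqrt (1 - ‖b‖^2)) • u := by
      rw [hφ]; simp only; rw [sub_smul, add_sub_add_comm]
    rw [dist_eq_norm, dist_eq_norm, key]
    have h1 : ‖(J0 a : EuclideanSpace ℝ (Fin n)) - J0 b‖ = ‖a - b‖ := by
      rw [hJsub, ← Submodule.coe_norm, ← map_sub, J0.norm_map]
    have h2 : |Real.sqrt (1 - ‖a‖^2) - Real.sqrt (1 - ‖b‖^2)| ≤ 2 * ‖a - b‖ := by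
      have hs := sqrt_lip (a := 1 - ‖a‖^2) (b := 1 - ‖b‖^2) (by linarith) (by linarith)
      have h4 : |‖b‖ - ‖a‖| ≤ ‖a - b‖ := by rw [abs_sub_comm]; exact abs_norm_sub_norm_le a b
      have h5 : |(1 - ‖a‖^2) - (1 - ‖b‖^2)| ≤ 2 * ‖a - b‖ := by
        rw [show (1 - ‖a‖^2) - (1 - ‖b‖^2) = (‖b‖ + ‖a‖) * (‖b‖ - ‖a‖) by ring, abs_mul]
        have hba : |‖b‖ + ‖a‖| ≤ 2 := by
          rw [abs_of_nonneg (by positivity)]; linarith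
        exact mul_le_mul hba h4 (abs_nonneg _) (by norm_num)
      linarith
    calc ‖((J0 a : EuclideanSpace ℝ (Fin n)) - J0 b) +
        (Real.sqrt (1 - ‖a‖^2) - Real.sqrt (1 - ‖b‖^2)) • u‖
        ≤ ‖(J0 a : EuclideanSpace ℝ (Fin n)) - J0 b‖ +
          ‖(Real.sqrt (1 - ‖a‖^2) - Real.sqrt (1 - ‖b‖^2)) • u‖ := norm_add_le _ _
      _ ≤ ‖a - b‖ + 2 * ‖a - b‖ := by
          rw [h1, norm_smul, hu1, mul_one, Real.norm_eq_abs]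
          exact add_le_add le_rfl h2
      _ = 3 * ‖a - b‖ := by ring
  · intro y hyV hy1 hyu
    set t : ℝ := ⟪u, y⟫ with ht
    have hinner0 : ⟪u, y - t • u⟫ = 0 := by
      rw [inner_sub_right, real_inner_smul_right, real_inner_self_eq_norm_sq, hu1, ← ht]
      ring
    have hw : y - t • u ∈ F := Submodule.mem_inf.mpr
      ⟨Submodule.mem_orthogonal_singleton_iff_inner_right.mpr hinner0,
        V.sub_mem hyV (V.smul_mem _ hu)⟩
    set a := B.repr ⟨y - t • u, hw⟩ with ha
    have hJa : (J0 a : EuclideanSpace ℝ (Fin n)) = y - t • u := by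
      rw [hJ0, ha]; simp
    have hw2 : ‖y - t • u‖^2 = 1 - t^2 := by
      rw [norm_sub_sq_real, real_inner_smul_right, real_inner_comm, ← ht, norm_smul, hu1, hy1,
        Real.norm_eq_abs, mul_one, sq_abs]
      ring
    have hna : ‖a‖^2 = 1 - t^2 := by
      have h0 : ‖a‖ = ‖(⟨y - t • u, hw⟩ : F)‖ := B.repr.norm_map _
      rw [h0, Submodule.coe_norm]; exact hw2
    have ht1 : t ≤ 1 := by
      have := real_inner_le_norm u y
      rw [hu1, hy1] at this; simpa [ht] using this
    refine ⟨a, by rw [hna]; nlinarith, ?_⟩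
    rw [hφ]; simp only
    rw [hJa, hna, show 1 - (1 - t^2) = t^2 by ring, Real.sqrt_sq (by linarith), sub_add_cancel]
  · apply LipschitzWith.of_dist_le_mul
    intro y y'
    have hPn : ‖F.orthogonalProjectionOnto‖₊ ≤ 1 := by
      rw [← NNReal.coe_le_coe, coe_nnnorm, NNReal.coe_one]
      exact Submodule.orthogonalProjectionOnto_norm_le F
    have hlip : LipschitzWith 1 (fun y => F.orthogonalProjectionOnto y) :=
      (F.orthogonalProjectionOnto).lipschitz.weaken hPn
    calc dist (ψ y) (ψ y') = dist (F.orthogonalProjectionOnto y) (F.orthogonalProjectionOnto y') :=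
          B.repr.isometry.dist_eq _ _
      _ ≤ 1 * dist y y' := by simpa using hlip.dist_le_mul y y'
  · intro a
    have hu' : u ∈ Fᗮ := by
      apply Submodule.orthogonal_le (inf_le_left : F ≤ (ℝ ∙ u)ᗮ)
      exact Submodule.le_orthogonal_orthogonal _ (Submodule.mem_span_singleton_self u)
    rw [hψ, hφ]; simp only
    rw [map_add, _root_.map_smul, Submodule.orthogonalProjectionOnto_apply_of_mem_orthogonal hu',
      Submodule.orthogonalProjectionOnto_mem_subspace_eq_self (J0 a)]
    simp [hJ0]


lemma haar_aux (k : ℕ) :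
    (μH[(k:ℝ)] : Measure (EuclideanSpace ℝ (Fin k))).IsAddHaarMeasure := by
  have := isAddHaarMeasure_hausdorffMeasure (E := EuclideanSpace ℝ (Fin k))
  rwa [finrank_euclideanSpace_fin] at this

lemma finrank_cast (V : Submodule ℝ (EuclideanSpace ℝ (Fin n))) (hm : 1 ≤ finrank ℝ V) :
    (finrank ℝ V : ℝ) - 1 = ((finrank ℝ V - 1 : ℕ) : ℝ) := by
  rw [Nat.cast_sub hm]; norm_num

lemma unit_of_mem {u : EuclideanSpace ℝ (Fin n)} {V : Submodule ℝ (EuclideanSpace ℝ (Fin n))}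
    (hu : u ∈ V) (hu1 : ‖u‖ = 1) : 1 ≤ finrank ℝ V := by
  have hune : u ≠ 0 := by intro h; rw [h, norm_zero] at hu1; norm_num at hu1
  have : Nontrivial V := ⟨⟨u, hu⟩, 0, by simp [hune]⟩
  exact Module.finrank_pos

lemma cap_fin (V : Submodule ℝ (EuclideanSpace ℝ (Fin n))) {u : EuclideanSpace ℝ (Fin n)}
    (hu : u ∈ V) (hu1 : ‖u‖ = 1) :
    μH[(finrank ℝ V : ℝ) - 1] {y : EuclideanSpace ℝ (Fin n) | y ∈ V ∧ ‖y‖ = 1 ∧ 1/2 ≤ ⟪u, y⟫}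
      ≠ ⊤ := by
  obtain ⟨φ, ψ, h1, h2, h3, h4, h5⟩ := exists_chart V hu hu1
  have hm := unit_of_mem hu hu1
  have hd : (finrank ℝ V : ℝ) - 1 = ((finrank ℝ V - 1 : ℕ) : ℝ) := finrank_cast V hm
  set s : Set (EuclideanSpace ℝ (Fin (finrank ℝ V - 1))) := {a | ‖a‖^2 ≤ 3/4} with hs
  have hsub : {y : EuclideanSpace ℝ (Fin n) | y ∈ V ∧ ‖y‖ = 1 ∧ 1/2 ≤ ⟪u, y⟫} ⊆ φ '' s := by
    rintro y ⟨hyV, hy1, hyu⟩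
    obtain ⟨a, ha, rfl⟩ := h3 y hyV hy1 hyu
    exact ⟨a, ha, rfl⟩
  have hlip : LipschitzOnWith 3 φ s := by
    apply LipschitzOnWith.of_dist_le_mul
    intro a ha b hb
    simpa using h2 a b ha hb
  haveI := haar_aux (finrank ℝ V - 1)
  have hcb : s ⊆ Metric.closedBall 0 1 := by
    intro a ha
    have ha' : ‖a‖^2 ≤ 3/4 := ha
    simp only [Metric.mem_closedBall, dist_zero_right]
    nlinarith [norm_nonneg a]
  have hfin : μH[((finrank ℝ V - 1 : ℕ):ℝ)] s ≠ ⊤ := by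
    have hle : μH[((finrank ℝ V - 1 : ℕ):ℝ)] s ≤ μH[((finrank ℝ V - 1 : ℕ):ℝ)]
        (Metric.closedBall (0 : EuclideanSpace ℝ (Fin (finrank ℝ V - 1))) 1) :=
      measure_mono hcb
    exact ne_top_of_le_ne_top (IsCompact.measure_lt_top (isCompact_closedBall _ _)).ne hle
  have hkey := hlip.hausdorffMeasure_image_le (d := ((finrank ℝ V - 1 : ℕ):ℝ)) (by positivity)
  rw [hd]
  exact ne_top_of_le_ne_top
    (ne_top_of_le_ne_top
      (ENNReal.mul_ne_top (ENNReal.rpow_ne_top_of_nonneg (by positivity) ENNReal.coe_ne_top) hfin)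
      hkey)
    (measure_mono hsub)

lemma sphere_fin (V : Submodule ℝ (EuclideanSpace ℝ (Fin n))) :
    μH[(finrank ℝ V : ℝ) - 1] ((V : Set (EuclideanSpace ℝ (Fin n))) ∩ sphere 0 1) ≠ ⊤ := by
  set K := (V : Set (EuclideanSpace ℝ (Fin n))) ∩ sphere 0 1 with hK
  have hKc : IsCompact K := by
    apply IsCompact.of_isClosed_subset (isCompact_closedBall (0 : EuclideanSpace ℝ (Fin n)) 1)
    · exact (Submodule.closed_of_finiteDimensional V).inter isClosed_sphere
    · exact fun y hy => by
        simp only [Metric.mem_closedBall]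
        have : dist y 0 = 1 := hy.2
        linarith [this.le]
  set U : K → Set (EuclideanSpace ℝ (Fin n)) := fun i => {y | 1/2 < ⟪(i : EuclideanSpace ℝ (Fin n)), y⟫} with hU
  have hUo : ∀ i, IsOpen (U i) := by
    intro i
    exact isOpen_lt continuous_const (continuous_const.inner continuous_id)
  have hcov : K ⊆ ⋃ i, U i := by
    intro y hy
    refine mem_iUnion.mpr ⟨⟨y, hy⟩, ?_⟩
    have h1 : ‖y‖ = 1 := by simpa [mem_sphere_iff_norm] using hy.2
    simp only [hU, mem_setOf_eq, real_inner_self_eq_norm_sq, h1]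
    norm_num
  obtain ⟨t, ht⟩ := hKc.elim_finite_subcover U hUo hcov
  have hle : μH[(finrank ℝ V : ℝ) - 1] K ≤ ∑ i ∈ t, μH[(finrank ℝ V : ℝ) - 1] (K ∩ U i) := by
    calc μH[(finrank ℝ V : ℝ) - 1] K ≤ μH[(finrank ℝ V : ℝ) - 1] (⋃ i ∈ t, K ∩ U i) := by
          apply measure_mono
          intro y hy
          obtain ⟨i, hi, hyi⟩ := mem_iUnion₂.mp (ht hy)
          exact mem_iUnion₂.mpr ⟨i, hi, ⟨hy, hyi⟩⟩
      _ ≤ ∑ i ∈ t, μH[(finrank ℝ V : ℝ) - 1] (K ∩ U i) := measure_biUnion_finset_le _ _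
  have hterm : ∀ i ∈ t, μH[(finrank ℝ V : ℝ) - 1] (K ∩ U i) ≠ ⊤ := by
    intro i _
    have hiV : (i : EuclideanSpace ℝ (Fin n)) ∈ V := i.2.1
    have hi1 : ‖(i : EuclideanSpace ℝ (Fin n))‖ = 1 := by
      simpa [mem_sphere_iff_norm] using i.2.2
    refine ne_top_of_le_ne_top (cap_fin V hiV hi1) (measure_mono ?_)
    rintro y ⟨⟨hyV, hyS⟩, hyu⟩
    exact ⟨hyV, by simpa [mem_sphere_iff_norm] using hyS, le_of_lt hyu⟩
  refine ne_top_of_le_ne_top ?_ hle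
  exact (ENNReal.sum_lt_top.mpr (fun i hi => lt_top_iff_ne_top.mpr (hterm i hi))).ne

lemma cap_pos (V : Submodule ℝ (EuclideanSpace ℝ (Fin n))) {u : EuclideanSpace ℝ (Fin n)}
    (hu : u ∈ V) (hu1 : ‖u‖ = 1) {ρ : ℝ} (hρ : 0 < ρ) :
    0 < μH[(finrank ℝ V : ℝ) - 1]
      {y : EuclideanSpace ℝ (Fin n) | y ∈ V ∧ ‖y‖ = 1 ∧ dist y u < ρ} := by
  obtain ⟨φ, ψ, h1, h2, h3, h4, h5⟩ := exists_chart V hu hu1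
  have hm := unit_of_mem hu hu1
  have hd : (finrank ℝ V : ℝ) - 1 = ((finrank ℝ V - 1 : ℕ) : ℝ) := finrank_cast V hm
  set r := min (ρ/2) (1/2) with hr
  have hr0 : 0 < r := by positivity
  set b : Set (EuclideanSpace ℝ (Fin (finrank ℝ V - 1))) := Metric.ball 0 r with hb
  have himg : φ '' b ⊆ {y : EuclideanSpace ℝ (Fin n) | y ∈ V ∧ ‖y‖ = 1 ∧ dist y u < ρ} := by
    rintro y ⟨a, ha, rfl⟩
    have hna : ‖a‖ < r := mem_ball_zero_iff.mp ha
    have hna1 : ‖a‖ ≤ 1 := by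
      have : r ≤ 1/2 := min_le_right _ _
      linarith
    obtain ⟨hV, hS, hdist⟩ := h1 a hna1
    refine ⟨hV, hS, ?_⟩
    rw [dist_eq_norm]
    have h6 : ‖φ a - u‖^2 ≤ 2 * ‖a‖^2 := hdist
    have h7 : ‖a‖ < ρ/2 := lt_of_lt_of_le hna (min_le_left _ _)
    nlinarith [norm_nonneg (φ a - u), norm_nonneg a]
  haveI := haar_aux (finrank ℝ V - 1)
  have hpos : 0 < μH[((finrank ℝ V - 1 : ℕ):ℝ)] b := Metric.measure_ball_pos _ _ hr0
  have hψφ : ψ '' (φ '' b) = b := by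
    rw [← image_comp]
    have heq : ψ ∘ φ = id := funext h5
    rw [heq, image_id]
  have hle : μH[((finrank ℝ V - 1 : ℕ):ℝ)] b ≤ μH[((finrank ℝ V - 1 : ℕ):ℝ)] (φ '' b) := by
    have := h4.hausdorffMeasure_image_le (d := ((finrank ℝ V - 1 : ℕ):ℝ)) (by positivity) (φ '' b)
    rw [hψφ] at this
    simpa using this
  rw [hd]
  exact lt_of_lt_of_le (lt_of_lt_of_le hpos hle) (measure_mono himg)


lemma exists_relint (C : Set (EuclideanSpace ℝ (Fin n))) (h0 : 0 ∈ C)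
    (hadd : ∀ a ∈ C, ∀ b ∈ C, a + b ∈ C)
    (hsmul : ∀ x ∈ C, ∀ t : ℝ, 0 ≤ t → t • x ∈ C) :
    ∃ z ∈ Submodule.span ℝ C, ∃ ρ > 0, ∀ y ∈ Submodule.span ℝ C, dist y z < ρ → y ∈ C := by
  classical
  obtain ⟨b, hbC, hbspan, hbli⟩ := exists_linearIndependent ℝ C
  have hbfin : b.Finite := hbli.setFinite
  haveI : Fintype b := hbfin.fintype
  set V := Submodule.span ℝ C with hV
  have hbV : ∀ x ∈ b, x ∈ V := fun x hx => Submodule.subset_span (hbC hx)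
  -- lift b to a basis of V
  set v : b → V := fun i => ⟨i.1, hbV _ i.2⟩ with hv
  have hli : LinearIndependent ℝ v := by
    apply LinearIndependent.of_comp V.subtype
    exact hbli
  have hsp : ⊤ ≤ Submodule.span ℝ (Set.range v) := by
    rintro ⟨x, hx⟩ -
    have hx' : x ∈ Submodule.span ℝ b := by rw [hbspan]; exact hx
    have hmap : (Submodule.span ℝ (Set.range v)).map V.subtype = Submodule.span ℝ b := by
      rw [Submodule.map_span]
      congr 1
      ext w
      constructor
      · rintro ⟨_, ⟨i, rfl⟩, rfl⟩; exact i.2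
      · intro hw; exact ⟨v ⟨w, hw⟩, ⟨⟨w, hw⟩, rfl⟩, rfl⟩
    rw [← hmap] at hx'
    obtain ⟨w, hw, hwx⟩ := hx'
    have : (⟨x, hx⟩ : V) = w := by
      apply Subtype.ext; exact hwx.symm
    rw [this]; exact hw
  set B := Basis.mk hli hsp with hB
  set z' : V := ∑ i : b, B i with hz'
  have hcoord : ∀ i : b, B.coord i z' = 1 := by
    intro i
    rw [hz']
    have : B.coord i (∑ j : b, B j) = ∑ j : b, B.coord i (B j) := map_sum _ _ _
    rw [this]
    have : ∀ j : b, B.coord i (B j) = if j = i then 1 else 0 := by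
      intro j
      rw [Basis.coord_apply, Basis.repr_self, Finsupp.single_apply]
    rw [Finset.sum_congr rfl (fun j _ => this j)]
    simp
  have hcont : ∀ i : b, Continuous (B.coord i) := fun i =>
    LinearMap.continuous_of_finiteDimensional _
  set U : Set V := ⋂ i : b, (B.coord i) ⁻¹' (Set.Ioi 0) with hU
  have hUopen : IsOpen U := isOpen_iInter_of_finite fun i =>
    (isOpen_Ioi).preimage (hcont i)
  have hzU : z' ∈ U := by
    rw [hU]
    refine mem_iInter.mpr fun i => ?_
    simp only [mem_preimage, mem_Ioi]
    rw [hcoord i]; norm_num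
  obtain ⟨ρ, hρ0, hball⟩ := Metric.isOpen_iff.mp hUopen z' hzU
  refine ⟨(z' : EuclideanSpace ℝ (Fin n)), z'.2, ρ, hρ0, ?_⟩
  intro y hyV hdist
  set y' : V := ⟨y, hyV⟩ with hy'
  have hyU : y' ∈ U := by
    apply hball
    rw [Metric.mem_ball]
    rw [Subtype.dist_eq]
    exact hdist
  have hyrep : y' = ∑ i : b, (B.coord i y') • B i := by
    conv_lhs => rw [← B.sum_repr y']
    exact Finset.sum_congr rfl fun i _ => by rw [Basis.coord_apply]
  have hsum : ((∑ i : b, (B.coord i y') • B i : V) : EuclideanSpace ℝ (Fin n))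
      = ∑ i : b, (B.coord i y') • ((B i : V) : EuclideanSpace ℝ (Fin n)) := by
    exact map_sum (V.subtype) _ _
  have : y = ∑ i : b, (B.coord i y') • ((B i : V) : EuclideanSpace ℝ (Fin n)) := by
    rw [← hsum, ← hyrep]
  rw [this]
  apply Finset.sum_induction _ (· ∈ C) (fun p q hp hq => hadd p hp q hq) h0
  intro i _
  apply hsmul
  · have : ((B i : V) : EuclideanSpace ℝ (Fin n)) = i.1 := by
      rw [hB]; simp [Basis.mk_apply, hv]
    rw [this]
    exact hbC i.2
  · have := mem_iInter.mp hyU i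
    simp only [mem_preimage, mem_Ioi] at this
    exact le_of_lt this

end AuxConeCOM

open scoped RealInnerProductSpace
open MeasureTheory

/-- Let `C ⊆ ℝⁿ` be a nonempty closed convex cone which is relatively proper, `m = dim span C`,
and `v` the Bochner integral of the identity over `C ∩ S^{n-1}` with respect to
`(m-1)`-dimensional Hausdorff measure. Then (a) `⟨x, v⟩ ≥ 0` for every `x ∈ C`, and
(b) the set `{x ∈ C : ⟨x, v⟩ = 0}` is symmetric about the origin. -/
theorem cone_center_of_mass_balanced (n : ℕ) (C : Set (EuclideanSpace ℝ (Fin n)))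
    (hne : C.Nonempty) (hcl : IsClosed C) (hconv : Convex ℝ C)
    (hcone : ∀ x ∈ C, ∀ t : ℝ, 0 ≤ t → t • x ∈ C)
    (hproper : C ≠ (Submodule.span ℝ C : Set (EuclideanSpace ℝ (Fin n))))
    (v : EuclideanSpace ℝ (Fin n))
    (hv : v = ∫ x in C ∩ Metric.sphere (0 : EuclideanSpace ℝ (Fin n)) 1, x
      ∂(μH[(Module.finrank ℝ (Submodule.span ℝ C) : ℝ) - 1])) :
    (∀ x ∈ C, 0 ≤ ⟪x, v⟫) ∧
      {x ∈ C | ⟪x, v⟫ = 0} = -{x ∈ C | ⟪x, v⟫ = 0} := by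
  classical
  set V := Submodule.span ℝ C with hVdef
  set d : ℝ := (finrank ℝ V : ℝ) - 1 with hd
  set μ : Measure (EuclideanSpace ℝ (Fin n)) := μH[d] with hμ
  set Ω := C ∩ Metric.sphere (0 : EuclideanSpace ℝ (Fin n)) 1 with hΩ
  obtain ⟨c0, hc0⟩ := hne
  have h0C : (0 : EuclideanSpace ℝ (Fin n)) ∈ C := by
    have := hcone c0 hc0 0 le_rfl
    simpa using this
  have hadd : ∀ a ∈ C, ∀ b ∈ C, a + b ∈ C := by
    intro a ha b hb
    have h2 := hconv ha hb (by norm_num : (0:ℝ) ≤ 1/2) (by norm_num : (0:ℝ) ≤ 1/2) (by norm_num)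
    have h3 := hcone _ h2 2 (by norm_num)
    rw [smul_add, smul_smul, smul_smul] at h3
    norm_num at h3
    exact h3
  have hCV : C ⊆ (V : Set (EuclideanSpace ℝ (Fin n))) := Submodule.subset_span
  have hm : 1 ≤ finrank ℝ V := by
    rcases Nat.eq_zero_or_pos (finrank ℝ V) with h | h
    · exfalso
      obtain ⟨y, hyV, hyC⟩ := exists_of_ssubset (HasSubset.Subset.ssubset_of_ne hCV hproper)
      have hbot : V = ⊥ := Submodule.finrank_eq_zero.mp h
      rw [hbot] at hyV
      have : y = 0 := by simpa using hyV
      rw [this] at hyC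
      exact hyC h0C
    · exact h
  have hΩmeas : MeasurableSet Ω := (hcl.inter isClosed_sphere).measurableSet
  have hfin : μ Ω ≠ ⊤ := by
    rw [hμ, hd]
    refine ne_top_of_le_ne_top (sphere_fin V) (measure_mono ?_)
    rintro y ⟨hy1, hy2⟩
    exact ⟨hCV hy1, hy2⟩
  have hnorm1 : ∀ y ∈ Ω, ‖y‖ = 1 := fun y hy => by
    simpa [mem_sphere_iff_norm] using hy.2
  have hint : IntegrableOn (fun y => y) Ω μ := by
    apply Measure.integrableOn_of_bounded (M := 1) hfin continuous_id.aestronglyMeasurable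
    exact (ae_restrict_mem hΩmeas).mono (fun y hy => by simp [hnorm1 y hy])
  have hinner_int : ∀ x : EuclideanSpace ℝ (Fin n), ⟪x, v⟫ = ∫ y in Ω, ⟪x, y⟫ ∂μ := by
    intro x
    rw [hv]
    have := (innerSL ℝ x).integral_comp_comm hint
    simpa using this.symm
  -- the key lemma
  have key : ∀ x ∈ C, ‖x‖ = 1 →
      (0 ≤ ∫ y in Ω, ⟪x, y⟫ ∂μ) ∧ ((∫ y in Ω, ⟪x, y⟫ ∂μ) = 0 → -x ∈ C) := by
    intro x hxC hx1
    set f : EuclideanSpace ℝ (Fin n) → ℝ := fun y => ⟪x, y⟫ with hf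
    have hfc : Continuous f := continuous_const.inner continuous_id
    have hfint : IntegrableOn f Ω μ := by
      have := ContinuousLinearMap.integrable_comp (innerSL ℝ x) hint
      simpa [hf, IntegrableOn] using this
    set ρmap : EuclideanSpace ℝ (Fin n) → EuclideanSpace ℝ (Fin n) :=
      fun y => y - (2 * ⟪x, y⟫) • x with hρmap
    have hρinner : ∀ y, ⟪x, ρmap y⟫ = - ⟪x, y⟫ := by
      intro y
      rw [hρmap]
      simp only
      rw [inner_sub_right, real_inner_smul_right, real_inner_self_eq_norm_sq, hx1]
      ring
    have hρρ : ∀ y, ρmap (ρmap y) = y := by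
      intro y
      conv_lhs => rw [hρmap]
      simp only
      rw [hρinner y, show (2 * -⟪x,y⟫ : ℝ) = -(2 * ⟪x,y⟫) by ring, neg_smul]
      abel
    have hρx : ρmap x = -x := by
      rw [hρmap]
      simp only
      rw [real_inner_self_eq_norm_sq, hx1]
      norm_num
      rw [two_smul]
      abel
    have hρ0 : ρmap 0 = 0 := by
      rw [hρmap]; simp
    have hρiso : Isometry ρmap := by
      apply Isometry.of_dist_eq
      intro a b
      rw [dist_eq_norm, dist_eq_norm]
      have hdiff : ρmap a - ρmap b = (a - b) - (2 * ⟪x, a - b⟫) • x := by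
        rw [hρmap]
        simp only
        rw [inner_sub_right, show (2 * (⟪x,a⟫ - ⟪x,b⟫) : ℝ) = 2*⟪x,a⟫ - 2*⟪x,b⟫ by ring, sub_smul]
        abel
      rw [hdiff]
      have h1 : ‖(a - b) - (2 * ⟪x, a - b⟫) • x‖^2 = ‖a - b‖^2 := by
        rw [norm_sub_sq_real, real_inner_smul_right, norm_smul, hx1, Real.norm_eq_abs, mul_one,
          sq_abs, real_inner_comm x (a - b)]
        ring
      have := congrArg Real.sqrt h1
      rwa [Real.sqrt_sq (norm_nonneg _), Real.sqrt_sq (norm_nonneg _)] at this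
    have hρnorm : ∀ y, ‖ρmap y‖ = ‖y‖ := by
      intro y
      have := hρiso.dist_eq y 0
      simpa [hρ0, dist_eq_norm] using this
    set ρe : EuclideanSpace ℝ (Fin n) ≃ᵢ EuclideanSpace ℝ (Fin n) :=
      ⟨⟨ρmap, ρmap, hρρ, hρρ⟩, hρiso⟩ with hρe
    have hρe_apply : ∀ y, ρe y = ρmap y := fun _ => rfl
    have hmp : MeasurePreserving ρe μ μ := by
      rw [hμ]
      exact ρe.measurePreserving_hausdorffMeasure d
    have hemb : MeasurableEmbedding ρe := ρe.toHomeomorph.measurableEmbedding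
    set Ap := Ω ∩ {y | 0 ≤ f y} with hAp
    set Am := Ω ∩ {y | f y < 0} with hAm
    have hApm : MeasurableSet Ap := hΩmeas.inter (isClosed_le continuous_const hfc).measurableSet
    have hAmm : MeasurableSet Am := hΩmeas.inter (isOpen_lt hfc continuous_const).measurableSet
    have hunion : Ω = Ap ∪ Am := by
      ext y
      constructor
      · intro hy
        rcases le_or_gt 0 (f y) with h | h
        · exact Or.inl ⟨hy, h⟩
        · exact Or.inr ⟨hy, h⟩
      · rintro (⟨hy, _⟩ | ⟨hy, _⟩) <;> exact hy
    have hdisj : Disjoint Ap Am := by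
      rw [Set.disjoint_left]
      rintro y ⟨_, hy1⟩ ⟨_, hy2⟩
      exact absurd (show f y < 0 from hy2) (not_lt.mpr (show 0 ≤ f y from hy1))
    have hfintAp : IntegrableOn f Ap μ := hfint.mono_set inter_subset_left
    have hfintAm : IntegrableOn f Am μ := hfint.mono_set inter_subset_left
    have hI : ∫ y in Ω, f y ∂μ = (∫ y in Ap, f y ∂μ) + ∫ y in Am, f y ∂μ := by
      conv_lhs => rw [hunion]
      exact setIntegral_union hdisj hAmm hfintAp hfintAm
    set R := ρe '' Am with hR
    have hRmeas : MeasurableSet R := hemb.measurableSet_image.mpr hAmm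
    have hRsub : R ⊆ Ap := by
      rintro - ⟨y, hy, rfl⟩
      have hyC : y ∈ C := hy.1.1
      have hfy : f y < 0 := hy.2
      have hmem : ρe y ∈ C := by
        rw [hρe_apply, hρmap]
        simp only
        rw [sub_eq_add_neg, ← neg_smul]
        exact hadd y hyC _ (hcone x hxC _ (by nlinarith))
      have hnrm : ‖ρe y‖ = 1 := by
        rw [hρe_apply, hρnorm]
        exact hnorm1 y hy.1
      refine ⟨⟨hmem, ?_⟩, ?_⟩
      · simpa [mem_sphere_iff_norm] using hnrm
      · show 0 ≤ f (ρe y)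
        rw [hρe_apply]
        show 0 ≤ ⟪x, ρmap y⟫
        rw [hρinner]
        linarith [hfy]
    have hIR : ∫ y in R, f y ∂μ = - ∫ y in Am, f y ∂μ := by
      rw [hR, hmp.setIntegral_image_emb hemb f Am]
      have : ∀ y, f (ρe y) = - f y := by
        intro y
        rw [hρe_apply]
        exact hρinner y
      simp_rw [this]
      exact integral_neg _
    have hfpos : 0 ≤ᵐ[μ.restrict Ap] f := (ae_restrict_mem hApm).mono fun y hy => hy.2
    have hmono : ∫ y in R, f y ∂μ ≤ ∫ y in Ap, f y ∂μ :=
      setIntegral_mono_set hfintAp hfpos (HasSubset.Subset.eventuallyLE hRsub)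
    constructor
    · rw [hI]
      have : ∫ y in Am, f y ∂μ = - ∫ y in R, f y ∂μ := by linarith [hIR]
      linarith [hmono]
    · intro hI0
      by_contra hnx
      have hCc_open : IsOpen Cᶜ := hcl.isOpen_compl
      obtain ⟨ε, hε0, hball⟩ := Metric.isOpen_iff.mp hCc_open (-x) hnx
      set ε0 := min ε 1 with hε0def
      have hε00 : 0 < ε0 := lt_min hε0 one_pos
      have hε01 : ε0 ≤ 1 := min_le_right _ _
      have hε0ε : ε0 ≤ ε := min_le_left _ _
      -- equality case: ∫ over Ap \ R is zero
      have hApsplit : ∫ y in Ap, f y ∂μ = (∫ y in R, f y ∂μ) + ∫ y in Ap \ R, f y ∂μ := by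
        conv_lhs => rw [show Ap = R ∪ (Ap \ R) from (union_diff_cancel hRsub).symm]
        exact setIntegral_union disjoint_sdiff_self_right (hApm.diff hRmeas)
          (hfintAp.mono_set hRsub) (hfintAp.mono_set diff_subset)
      have hdiff0 : ∫ y in Ap \ R, f y ∂μ = 0 := by
        have h1 : ∫ y in Am, f y ∂μ = - ∫ y in R, f y ∂μ := by linarith [hIR]
        rw [hI] at hI0
        linarith [hApsplit]
      have hfpos' : 0 ≤ᵐ[μ.restrict (Ap \ R)] f :=
        (ae_restrict_mem (hApm.diff hRmeas)).mono fun y hy => hy.1.2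
      have hae : f =ᵐ[μ.restrict (Ap \ R)] 0 :=
        (integral_eq_zero_iff_of_nonneg_ae hfpos' (hfintAp.mono_set diff_subset)).mp hdiff0
      -- construct a positive-measure cap inside Ap \ R
      obtain ⟨z, hzV, ρz, hρz0, hzball⟩ := exists_relint C h0C hadd hcone
      set t0 : ℝ := min (1/2) (ε0/8) / (‖z‖ + 1) with ht0
      have hmin0 : 0 < min (1/2) (ε0/8) := lt_min (by norm_num) (by positivity)
      have ht00 : 0 < t0 := by positivity
      have ht0n : t0 * (‖z‖ + 1) = min (1/2) (ε0/8) := by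
        rw [ht0]
        field_simp
      have htz : t0 * ‖z‖ < min (1/2) (ε0/8) := by nlinarith [ht00]
      set w := x + t0 • z with hw
      have hwV : w ∈ V := V.add_mem (hCV hxC) (V.smul_mem _ hzV)
      have hwx : ‖w - x‖ = t0 * ‖z‖ := by
        rw [hw, add_sub_cancel_left, norm_smul, Real.norm_eq_abs, abs_of_pos ht00]
      have habs : |‖w‖ - 1| ≤ t0 * ‖z‖ := by
        have h2 := abs_norm_sub_norm_le w x
        rw [hx1, hwx] at h2
        exact h2
      have hw_lb : 1/2 < ‖w‖ := by
        have h3 : min (1/2) (ε0/8) ≤ 1/2 := min_le_left _ _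
        have := abs_le.mp habs
        linarith [this.1]
      have hwne : ‖w‖ ≠ 0 := by linarith
      set c := ‖w‖ with hc
      set u := c⁻¹ • w with hu
      have hc0 : (0:ℝ) < c := by rw [hc]; linarith
      have hcne : c ≠ 0 := hc0.ne'
      have hu1 : ‖u‖ = 1 := by
        rw [hu, norm_smul, Real.norm_eq_abs, abs_of_pos (by positivity : (0:ℝ) < c⁻¹), ← hc,
          inv_mul_cancel₀ hcne]
      have huV : u ∈ V := V.smul_mem _ hwV
      have huw : ‖u - w‖ = |1 - c| := by
        have h4 : u - w = (c⁻¹ - 1) • w := by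
          rw [hu, sub_smul, one_smul]
        rw [h4, norm_smul, Real.norm_eq_abs, ← hc]
        rw [show c⁻¹ - 1 = (1 - c) / c by field_simp]
        rw [abs_div, abs_of_pos hc0]
        field_simp
      have hux : ‖u - x‖ ≤ 2 * (t0 * ‖z‖) := by
        have h5 : u - x = (u - w) + (w - x) := by abel
        rw [h5]
        have h6 := norm_add_le (u - w) (w - x)
        rw [huw, hwx] at h6
        have h7 : |1 - c| ≤ t0 * ‖z‖ := by rw [hc]; rwa [abs_sub_comm] at habs
        linarith
      have hux2 : dist u x < ε0 / 4 := by
        rw [dist_eq_norm]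
        have h8 : min (1/2) (ε0/8) ≤ ε0/8 := min_le_right _ _
        linarith [htz]
      set ρ' := t0 * ρz / c with hρ'
      have hρ'0 : 0 < ρ' := by positivity
      set T := {y : EuclideanSpace ℝ (Fin n) | y ∈ V ∧ ‖y‖ = 1 ∧ dist y u < min ρ' (ε0/4)}
        with hT
      have hTpos : 0 < μ T := by
        rw [hμ, hd]
        exact cap_pos V huV hu1 (lt_min hρ'0 (by positivity))
      have hTC : ∀ y ∈ T, y ∈ C := by
        rintro y ⟨hyV, hy1, hydist⟩
        have hyu : ‖y - u‖ < ρ' := by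
          rw [← dist_eq_norm]
          exact lt_of_lt_of_le hydist (by exact (min_le_left _ _))
        have hwu : c • u = w := by
          rw [hu, smul_inv_smul₀ hcne]
        have h9 : ‖(c • y) - w‖ < t0 * ρz := by
          rw [← hwu, ← smul_sub, norm_smul, Real.norm_eq_abs, abs_of_pos hc0]
          calc c * ‖y - u‖ < c * ρ' := by
                apply mul_lt_mul_of_pos_left hyu hc0
            _ = t0 * ρz := by rw [hρ']; field_simp
        set q := t0⁻¹ • ((c • y) - x) with hq
        have hqV : q ∈ V := V.smul_mem _ (V.sub_mem (V.smul_mem _ hyV) (hCV hxC))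
        have hqz : dist q z < ρz := by
          rw [dist_eq_norm, hq]
          have h10 : t0⁻¹ • ((c • y) - x) - z = t0⁻¹ • ((c • y) - x - t0 • z) := by
            rw [smul_sub t0⁻¹ ((c • y) - x) (t0 • z), inv_smul_smul₀ (ne_of_gt ht00)]
          rw [h10, norm_smul, Real.norm_eq_abs, abs_of_pos (by positivity : (0:ℝ) < t0⁻¹)]
          have h11 : (c • y) - x - t0 • z = (c • y) - w := by
            rw [hw]; abel
          rw [h11]
          have hinv : t0⁻¹ * (t0 * ρz) = ρz := by field_simp
          calc t0⁻¹ * ‖(c • y) - w‖ < t0⁻¹ * (t0 * ρz) :=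
                mul_lt_mul_of_pos_left h9 (by positivity)
            _ = ρz := hinv
        have hqC : q ∈ C := hzball q hqV hqz
        have hwyC : c • y ∈ C := by
          have h12 : c • y = x + t0 • q := by
            rw [hq, smul_inv_smul₀ (ne_of_gt ht00)]
            abel
          rw [h12]
          exact hadd x hxC _ (hcone q hqC t0 ht00.le)
        have h13 : y = c⁻¹ • (c • y) := by
          rw [inv_smul_smul₀ hcne]
        rw [h13]
        exact hcone _ hwyC _ (by positivity)
      have hT_sub : ∀ y ∈ T, y ∈ (Ap \ R) ∧ 7/8 ≤ f y := by
        rintro y hyT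
        obtain ⟨hyV, hy1, hydist⟩ := hyT
        have hyC : y ∈ C := hTC y ⟨hyV, hy1, hydist⟩
        have hyΩ : y ∈ Ω := ⟨hyC, by simpa [mem_sphere_iff_norm] using hy1⟩
        have hdyx : dist y x < ε0/2 := by
          calc dist y x ≤ dist y u + dist u x := dist_triangle _ _ _
            _ < ε0/4 + ε0/4 := by
                apply add_lt_add (lt_of_lt_of_le hydist (min_le_right _ _)) hux2
            _ = ε0/2 := by ring
        have hfy : 7/8 ≤ f y := by
          have h14 : ‖x - y‖^2 = 2 - 2 * f y := by
            rw [norm_sub_sq_real, hx1, hy1]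
            ring
          have h15 : ‖x - y‖ < 1/2 := by
            rw [← dist_eq_norm, dist_comm]
            calc dist y x < ε0/2 := hdyx
              _ ≤ 1/2 := by linarith
          nlinarith [norm_nonneg (x - y), sq_nonneg (‖x - y‖ - 1/2), h14, h15]
        refine ⟨⟨⟨hyΩ, show (0:ℝ) ≤ f y by linarith⟩, ?_⟩, hfy⟩
        rintro ⟨ym, hym, heq⟩
        have hym2 : ym = ρmap y := by
          have := congrArg ρmap heq
          rw [show ρmap (ρe ym) = ρmap (ρmap ym) from rfl, hρρ] at this
          exact this
        have hρyC : ρmap y ∈ Cᶜ := by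
          apply hball
          rw [Metric.mem_ball, ← hρx]
          rw [hρiso.dist_eq]
          calc dist y x < ε0/2 := hdyx
            _ < ε := by linarith
        rw [← hym2] at hρyC
        exact hρyC hym.1.1
      have h16 : μ.restrict (Ap \ R) {y | ¬ (f y = 0)} = 0 := by
        apply ae_iff.mp
        filter_upwards [hae] with y hy
        simpa using hy
      have hzero : μ ({y | ¬ (f y = 0)} ∩ (Ap \ R)) = 0 := by
        rw [← Measure.restrict_apply' (hApm.diff hRmeas)]
        exact h16
      have hsubT : T ⊆ {y | ¬ (f y = 0)} ∩ (Ap \ R) := by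
        intro y hy
        obtain ⟨hy1, hy2⟩ := hT_sub y hy
        exact ⟨by intro h; rw [h] at hy2; linarith, hy1⟩
      exact lt_irrefl (0 : ENNReal)
        (lt_of_lt_of_le hTpos (le_trans (measure_mono hsubT) hzero.le))
  -- conclude
  constructor
  · intro x hx
    rcases eq_or_ne x 0 with rfl | hx0
    · simp
    · have hxn : 0 < ‖x‖ := norm_pos_iff.mpr hx0
      have hxu : ‖x‖⁻¹ • x ∈ C := hcone x hx _ (by positivity)
      have hxu1 : ‖‖x‖⁻¹ • x‖ = 1 := by
        rw [norm_smul, Real.norm_eq_abs, abs_of_pos (by positivity : (0:ℝ) < ‖x‖⁻¹),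
          inv_mul_cancel₀ hxn.ne']
      have h := (key _ hxu hxu1).1
      rw [← hinner_int] at h
      rw [real_inner_smul_left] at h
      nlinarith [h, inv_pos.mpr hxn]
  · have hcore : ∀ x, x ∈ C → ⟪x, v⟫ = 0 → -x ∈ C := by
      intro x hx hxv
      rcases eq_or_ne x 0 with rfl | hx0
      · simpa using h0C
      · have hxn : 0 < ‖x‖ := norm_pos_iff.mpr hx0
        have hxu : ‖x‖⁻¹ • x ∈ C := hcone x hx _ (by positivity)
        have hxu1 : ‖‖x‖⁻¹ • x‖ = 1 := by
          rw [norm_smul, Real.norm_eq_abs, abs_of_pos (by positivity : (0:ℝ) < ‖x‖⁻¹),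
            inv_mul_cancel₀ hxn.ne']
        have h := (key _ hxu hxu1).2
        rw [← hinner_int, real_inner_smul_left, hxv, mul_zero] at h
        have h2 := h rfl
        have h3 : -x = ‖x‖ • (-(‖x‖⁻¹ • x)) := by
          rw [smul_neg, smul_smul, mul_inv_cancel₀ hxn.ne', one_smul]
        rw [h3]
        exact hcone _ h2 _ hxn.le
    ext y
    simp only [Set.mem_setOf_eq, Set.mem_neg]
    constructor
    · rintro ⟨hyC, hyv⟩
      refine ⟨hcore y hyC hyv, ?_⟩
      rw [inner_neg_left, hyv, neg_zero]
    · rintro ⟨hyC, hyv⟩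
      have h4 : ⟪-y, v⟫ = 0 := hyv
      have h5 : ⟪y, v⟫ = 0 := by
        rw [inner_neg_left] at h4
        linarith
      have := hcore (-y) hyC h4
      rw [neg_neg] at this
      exact ⟨this, h5⟩
end

section
/- Let u ∈ ℝⁿ be a unit vector, and let K₀, K₁ ⊆ ℝⁿ be nonempty closed convex sets, each contained in the half-space {x : ⟨x,u⟩ ≥ 0}, such that for every t ∈ ℝ the slices K₀ ∩ {x : ⟨x,u⟩ ≤ t} and K₁ ∩ {x : ⟨x,u⟩ ≤ t} are compact. Then the recession cone of the Minkowski sum equals the Minkowski sum of the recession cones: rec(K₀ + K₁) = rec(K₀) + rec(K₁). -/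
open scoped RealInnerProductSpace Pointwise
open Filter Topology

lemma mem_recCone_of_tendsto {n : ℕ} {K : Set (EuclideanSpace ℝ (Fin n))}
    (hcl : IsClosed K) (hconv : Convex ℝ K) {a : ℕ → EuclideanSpace ℝ (Fin n)}
    (ha : ∀ k, a k ∈ K) {t : ℕ → ℝ} (ht : Tendsto t atTop atTop)
    {v : EuclideanSpace ℝ (Fin n)}
    (hv : Tendsto (fun k => (t k)⁻¹ • a k) atTop (𝓝 v)) :
    v ∈ recCone K := by
  intro x hx s hs
  set r : ℕ → ℝ := fun k => s * (t k)⁻¹ with hr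
  have hr0 : Tendsto r atTop (𝓝 0) := by
    simpa using tendsto_const_nhds.mul ht.inv_tendsto_atTop
  have hc : Tendsto (fun k => (1 - r k) • x + r k • a k) atTop (𝓝 (x + s • v)) := by
    have h1 : Tendsto (fun k => (1 - r k) • x) atTop (𝓝 x) := by
      have := ((tendsto_const_nhds (x := (1:ℝ))).sub hr0).smul_const x
      simpa using this
    have h2 : Tendsto (fun k => r k • a k) atTop (𝓝 (s • v)) := by
      have := hv.const_smul s
      simpa [hr, smul_smul] using this
    exact h1.add h2
  have hmem : ∀ᶠ k in atTop, (1 - r k) • x + r k • a k ∈ K := by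
    filter_upwards [ht.eventually_ge_atTop (max s 1)] with k hk
    have htk1 : (1:ℝ) ≤ t k := le_trans (le_max_right _ _) hk
    have htk0 : (0:ℝ) < t k := lt_of_lt_of_le one_pos htk1
    have hrk0 : 0 ≤ r k := mul_nonneg hs (inv_nonneg.2 htk0.le)
    have hrk1 : r k ≤ 1 := by
      rw [hr]
      have hst : s ≤ t k := le_trans (le_max_left _ _) hk
      calc s * (t k)⁻¹ ≤ t k * (t k)⁻¹ :=
            mul_le_mul_of_nonneg_right hst (inv_nonneg.2 htk0.le)
        _ = 1 := mul_inv_cancel₀ htk0.ne'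
    exact hconv hx (ha k) (by linarith) hrk0 (by ring)
  exact hcl.mem_of_tendsto hc hmem

lemma recCone_eq_zero_of_horiz {n : ℕ} {u : EuclideanSpace ℝ (Fin n)}
    {K : Set (EuclideanSpace ℝ (Fin n))} (hne : K.Nonempty)
    (hslice : ∀ t : ℝ, IsCompact (K ∩ {x | ⟪x, u⟫ ≤ t}))
    {w : EuclideanSpace ℝ (Fin n)} (hw : w ∈ recCone K) (hwu : ⟪w, u⟫ ≤ 0) :
    w = 0 := by
  by_contra hw0
  obtain ⟨x, hx⟩ := hne
  obtain ⟨R, hR⟩ := ((hslice ⟪x, u⟫).isBounded.subset_closedBall 0)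
  have hmem : ∀ t : ℝ, 0 ≤ t → ‖x + t • w‖ ≤ R := by
    intro t ht
    have : x + t • w ∈ Metric.closedBall 0 R := by
      apply hR
      refine ⟨hw x hx t ht, ?_⟩
      simp only [Set.mem_setOf_eq, inner_add_left, real_inner_smul_left]
      nlinarith
    simpa [dist_zero_right] using this
  have hxR : ‖x‖ ≤ R := by simpa using hmem 0 le_rfl
  have hwn : 0 < ‖w‖ := norm_pos_iff.2 hw0
  set t := (R + ‖x‖ + 1) / ‖w‖ with hts
  have ht0 : 0 ≤ t := div_nonneg (by linarith [norm_nonneg x]) hwn.le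
  have hle : ‖x + t • w‖ ≤ R := hmem t ht0
  have htw : ‖t • w‖ = R + ‖x‖ + 1 := by
    rw [norm_smul, Real.norm_eq_abs, abs_of_nonneg ht0, hts,
      div_mul_cancel₀ _ hwn.ne']
  have h1 : ‖t • w‖ ≤ ‖x + t • w‖ + ‖x‖ := by
    have h := norm_sub_le (x + t • w) x
    simpa [add_sub_cancel_left] using h
  linarith

lemma growth_bound {n : ℕ} {u : EuclideanSpace ℝ (Fin n)}
    {K : Set (EuclideanSpace ℝ (Fin n))} (hne : K.Nonempty)
    (hcl : IsClosed K) (hconv : Convex ℝ K)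
    (hhalf : ∀ x ∈ K, 0 ≤ ⟪x, u⟫)
    (hslice : ∀ t : ℝ, IsCompact (K ∩ {x | ⟪x, u⟫ ≤ t})) :
    ∃ C : ℝ, 0 ≤ C ∧ ∀ x ∈ K, ‖x‖ ≤ C * (1 + ⟪x, u⟫) := by
  by_contra hcon
  push_neg at hcon
  have hch : ∀ k : ℕ, ∃ x ∈ K, ((k : ℝ) + 1) * (1 + ⟪x, u⟫) < ‖x‖ := by
    intro k
    obtain ⟨x, hxK, hx⟩ := hcon ((k : ℝ) + 1) (by positivity)
    exact ⟨x, hxK, hx⟩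
  choose x hxK hx using hch
  have hinner : ∀ k, 0 ≤ ⟪x k, u⟫ := fun k => hhalf _ (hxK k)
  have hnorm : ∀ k : ℕ, ((k : ℝ) + 1) < ‖x k‖ := by
    intro k
    have := hx k
    nlinarith [hinner k, Nat.cast_nonneg (α := ℝ) k]
  have hnorm0 : ∀ k, (0:ℝ) < ‖x k‖ := fun k =>
    lt_of_le_of_lt (by positivity) (hnorm k)
  set y : ℕ → EuclideanSpace ℝ (Fin n) := fun k => ‖x k‖⁻¹ • x k with hy
  have hy1 : ∀ k, ‖y k‖ = 1 := by
    intro k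
    rw [hy]
    simp [norm_smul, abs_of_nonneg (inv_nonneg.2 (hnorm0 k).le),
      inv_mul_cancel₀ (hnorm0 k).ne']
  have hyb : ∀ k, y k ∈ Metric.closedBall (0 : EuclideanSpace ℝ (Fin n)) 1 := by
    intro k; simp [dist_zero_right, (hy1 k).le]
  obtain ⟨w, -, φ, hφ, hwt⟩ := tendsto_subseq_of_bounded Metric.isBounded_closedBall hyb
  have hw1 : ‖w‖ = 1 := by
    have := (hwt.norm)
    simp only [Function.comp] at this
    have h2 : Tendsto (fun k => ‖y (φ k)‖) atTop (𝓝 1) := by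
      simpa [hy1] using tendsto_const_nhds (α := ℝ) (x := 1) (f := atTop (α := ℕ))
    exact tendsto_nhds_unique this h2
  have hφcast : Tendsto (fun k : ℕ => (φ k : ℝ) + 1) atTop atTop := by
    have h1 : Tendsto (fun k : ℕ => (φ k : ℝ)) atTop atTop :=
      tendsto_natCast_atTop_atTop.comp hφ.tendsto_atTop
    exact tendsto_atTop_add_const_right _ 1 h1
  have htt : Tendsto (fun k => ‖x (φ k)‖) atTop atTop :=
    tendsto_atTop_mono (fun k => (hnorm (φ k)).le) hφcast
  have hwrec : w ∈ recCone K :=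
    mem_recCone_of_tendsto hcl hconv (fun k => hxK (φ k)) htt
      (by simpa [hy, Function.comp_def] using hwt)
  have hwu : ⟪w, u⟫ ≤ 0 := by
    have hlim : Tendsto (fun k => ⟪y (φ k), u⟫) atTop (𝓝 ⟪w, u⟫) := by
      have : Continuous fun z : EuclideanSpace ℝ (Fin n) => ⟪z, u⟫ :=
        continuous_id.inner continuous_const
      exact (this.continuousAt.tendsto.comp (by simpa [Function.comp_def] using hwt))
    have hbound : ∀ k : ℕ, ⟪y (φ k), u⟫ ≤ ((φ k : ℝ) + 1)⁻¹ := by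
      intro k
      have h1 := hx (φ k)
      have h2 := hinner (φ k)
      have h3 := hnorm0 (φ k)
      have hM : (0:ℝ) < (φ k : ℝ) + 1 := by positivity
      rw [hy, real_inner_smul_left, inv_mul_le_iff₀ h3, ← div_eq_mul_inv,
        le_div_iff₀ hM]
      nlinarith
    have hto0 : Tendsto (fun k : ℕ => ((φ k : ℝ) + 1)⁻¹) atTop (𝓝 0) :=
      hφcast.inv_tendsto_atTop
    exact le_of_tendsto_of_tendsto hlim hto0 (Eventually.of_forall hbound)
  have := recCone_eq_zero_of_horiz hne hslice hwrec hwu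
  rw [this] at hw1
  simp at hw1


/-- For nonempty closed convex sets `K₀, K₁ ⊆ ℝⁿ` lying in the half-space `{⟨·,u⟩ ≥ 0}` with
compact slices `Kᵢ ∩ {⟨·,u⟩ ≤ t}`, the recession cone of the Minkowski sum is the Minkowski sum
of the recession cones. -/
theorem recCone_minkowski_sum (n : ℕ) (u : EuclideanSpace ℝ (Fin n)) (hu : ‖u‖ = 1)
    (K₀ K₁ : Set (EuclideanSpace ℝ (Fin n)))
    (h₀ne : K₀.Nonempty) (h₁ne : K₁.Nonempty)
    (h₀cl : IsClosed K₀) (h₁cl : IsClosed K₁)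
    (h₀conv : Convex ℝ K₀) (h₁conv : Convex ℝ K₁)
    (h₀half : ∀ x ∈ K₀, 0 ≤ ⟪x, u⟫) (h₁half : ∀ x ∈ K₁, 0 ≤ ⟪x, u⟫)
    (h₀slice : ∀ t : ℝ, IsCompact (K₀ ∩ {x | ⟪x, u⟫ ≤ t}))
    (h₁slice : ∀ t : ℝ, IsCompact (K₁ ∩ {x | ⟪x, u⟫ ≤ t})) :
    recCone (K₀ + K₁) = recCone K₀ + recCone K₁ := by
  apply Set.Subset.antisymm
  · -- hard direction
    intro v hv
    obtain ⟨x₀, hx₀⟩ := h₀ne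
    obtain ⟨x₁, hx₁⟩ := h₁ne
    set c : ℝ := ⟪x₀ + x₁, u⟫ with hc
    have hc0 : 0 ≤ c := by
      rw [hc, inner_add_left]
      have := h₀half x₀ hx₀
      have := h₁half x₁ hx₁
      linarith
    -- decompose the ray points
    have hray : ∀ k : ℕ, ∃ a ∈ K₀, ∃ b ∈ K₁,
        a + b = (x₀ + x₁) + ((k : ℝ) + 1) • v := by
      intro k
      have hmem : (x₀ + x₁) + ((k : ℝ) + 1) • v ∈ K₀ + K₁ :=
        hv (x₀ + x₁) (Set.add_mem_add hx₀ hx₁) _ (by positivity)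
      rw [Set.mem_add] at hmem
      obtain ⟨a, ha, b, hb, hab⟩ := hmem
      exact ⟨a, ha, b, hb, hab⟩
    choose a haK b hbK hab using hray
    -- v has nonnegative inner product with u
    set d : ℝ := ⟪v, u⟫ with hd
    have hd0 : 0 ≤ d := by
      by_contra hneg
      push_neg at hneg
      obtain ⟨k, hk⟩ := exists_nat_gt ((c + 1) / (-d))
      have hsum : 0 ≤ c + ((k : ℝ) + 1) * d := by
        have h1 := h₀half _ (haK k)
        have h2 := h₁half _ (hbK k)
        have h3 : ⟪a k, u⟫ + ⟪b k, u⟫ = c + ((k : ℝ) + 1) * d := by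
          rw [← inner_add_left, hab k, inner_add_left, real_inner_smul_left, hc, hd]
        linarith
      have hkd : (c + 1) / (-d) < (k : ℝ) + 1 := by
        have : (k : ℝ) ≤ (k : ℝ) + 1 := by linarith
        linarith
      rw [div_lt_iff₀ (by linarith : (0:ℝ) < -d)] at hkd
      nlinarith
    -- inner-product bound on a k
    have hau : ∀ k : ℕ, ⟪a k, u⟫ ≤ c + ((k : ℝ) + 1) * d := by
      intro k
      have h2 := h₁half _ (hbK k)
      have h3 : ⟪a k, u⟫ + ⟪b k, u⟫ = c + ((k : ℝ) + 1) * d := by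
        rw [← inner_add_left, hab k, inner_add_left, real_inner_smul_left, hc, hd]
      linarith
    -- norm bound on a k
    obtain ⟨C, hC0, hCb⟩ := growth_bound ⟨x₀, hx₀⟩ h₀cl h₀conv h₀half h₀slice
    set M : ℝ := C * (1 + c + d) with hM
    set s : ℕ → EuclideanSpace ℝ (Fin n) := fun k => ((k : ℝ) + 1)⁻¹ • a k with hs
    have hsb : ∀ k, s k ∈ Metric.closedBall (0 : EuclideanSpace ℝ (Fin n)) M := by
      intro k
      have hk1 : (1:ℝ) ≤ (k : ℝ) + 1 := by linarith [Nat.cast_nonneg (α := ℝ) k]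
      have hkpos : (0:ℝ) < (k : ℝ) + 1 := by positivity
      have hna : ‖a k‖ ≤ C * (1 + c + ((k : ℝ) + 1) * d) := by
        have h1 := hCb _ (haK k)
        have h2 := hau k
        nlinarith
      have : ‖s k‖ ≤ M := by
        rw [hs]
        simp only [norm_smul, Real.norm_eq_abs, abs_of_pos (inv_pos.2 hkpos)]
        rw [inv_mul_le_iff₀ hkpos]
        calc ‖a k‖ ≤ C * (1 + c + ((k : ℝ) + 1) * d) := hna
          _ ≤ ((k : ℝ) + 1) * M := by
              rw [hM]
              nlinarith [mul_nonneg (mul_nonneg hC0 (by linarith : (0:ℝ) ≤ 1 + c))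
                (Nat.cast_nonneg (α := ℝ) k)]
      simpa [dist_zero_right] using this
    have hMb : Bornology.IsBounded (Metric.closedBall (0 : EuclideanSpace ℝ (Fin n)) M) :=
      Metric.isBounded_closedBall
    obtain ⟨v₀, -, φ, hφ, hv₀t⟩ := tendsto_subseq_of_bounded hMb hsb
    have hφcast : Tendsto (fun k : ℕ => (φ k : ℝ) + 1) atTop atTop := by
      have h1 : Tendsto (fun k : ℕ => (φ k : ℝ)) atTop atTop :=
        tendsto_natCast_atTop_atTop.comp hφ.tendsto_atTop
      exact tendsto_atTop_add_const_right _ 1 h1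
    have hv₀ : v₀ ∈ recCone K₀ :=
      mem_recCone_of_tendsto h₀cl h₀conv (fun k => haK (φ k)) hφcast
        (by simpa [hs, Function.comp_def] using hv₀t)
    -- the other part
    have hbt : Tendsto (fun k => ((φ k : ℝ) + 1)⁻¹ • b (φ k)) atTop (𝓝 (v - v₀)) := by
      have hb' : ∀ k : ℕ, ((φ k : ℝ) + 1)⁻¹ • b (φ k)
          = ((φ k : ℝ) + 1)⁻¹ • (x₀ + x₁) + v - s (φ k) := by
        intro k
        have hkpos : (0:ℝ) < (φ k : ℝ) + 1 := by positivity
        have : b (φ k) = (x₀ + x₁) + ((φ k : ℝ) + 1) • v - a (φ k) := by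
          have := hab (φ k); rw [← this]; abel
        rw [this, hs]
        simp only [smul_sub, smul_add, smul_smul, inv_mul_cancel₀ hkpos.ne', one_smul]
      rw [show (v - v₀) = 0 + v - v₀ by abel]
      simp only [hb']
      apply Tendsto.sub
      · apply Tendsto.add_const
        have h0 : Tendsto (fun k : ℕ => ((φ k : ℝ) + 1)⁻¹) atTop (𝓝 0) :=
          hφcast.inv_tendsto_atTop
        simpa using h0.smul_const (x₀ + x₁)
      · exact hv₀t
    have hv₁ : v - v₀ ∈ recCone K₁ :=
      mem_recCone_of_tendsto h₁cl h₁conv (fun k => hbK (φ k)) hφcast hbt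
    exact ⟨v₀, hv₀, v - v₀, hv₁, by show v₀ + (v - v₀) = v; abel⟩
  · -- easy direction
    rintro v ⟨v₀, hv₀, v₁, hv₁, rfl⟩
    rintro x ⟨y₀, hy₀, y₁, hy₁, rfl⟩ t ht
    have : y₀ + y₁ + t • (v₀ + v₁) = (y₀ + t • v₀) + (y₁ + t • v₁) := by
      rw [smul_add]; abel
    rw [this]
    exact Set.add_mem_add (hv₀ y₀ hy₀ t ht) (hv₁ y₁ hy₁ t ht)
end

section
/- Let u ∈ ℝⁿ be a unit vector and let K₀, K₁ ⊆ ℝⁿ be unbounded convex bodies, each containing no line, and each having balanced support with respect to u. Then the Minkowski sum K := K₀ + K₁ is closed; moreover K is an unbounded convex body, K contains no line, and K has balanced support with respect to u. -/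
open Filter


open scoped RealInnerProductSpace Pointwise

/-- A set `K ⊆ ℝⁿ` has *balanced support* with respect to `u` if `K` has a support hyperplane
with outward normal `-u`, and the corresponding face contains a half-line only when it contains
the whole line. -/
def HasBalancedSupport {n : ℕ} (K : Set (EuclideanSpace ℝ (Fin n)))
    (u : EuclideanSpace ℝ (Fin n)) : Prop :=
  ∃ p ∈ K, (∀ x ∈ K, ⟪p, u⟫ ≤ ⟪x, u⟫) ∧
    ∀ x ∈ {z ∈ K | ⟪z, u⟫ = ⟪p, u⟫}, ∀ v : EuclideanSpace ℝ (Fin n), v ≠ 0 →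
      (∀ t : ℝ, 0 ≤ t → x + t • v ∈ {z ∈ K | ⟪z, u⟫ = ⟪p, u⟫}) →
      ∀ t : ℝ, x + t • v ∈ {z ∈ K | ⟪z, u⟫ = ⟪p, u⟫}

section AuxLemmas

lemma aux_ray_of_tendsto {n : ℕ} {C : Set (EuclideanSpace ℝ (Fin n))}
    (hcl : IsClosed C) (hconv : Convex ℝ C)
    {p : EuclideanSpace ℝ (Fin n)} (hp : p ∈ C) {x : ℕ → EuclideanSpace ℝ (Fin n)}
    (hx : ∀ k, x k ∈ C) {r : ℕ → ℝ} (hr : ∀ k, 0 < r k)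
    (hrt : Tendsto r atTop atTop)
    {w : EuclideanSpace ℝ (Fin n)}
    (hw : Tendsto (fun k => (r k)⁻¹ • (x k - p)) atTop (nhds w)) :
    ∀ t : ℝ, 0 ≤ t → p + t • w ∈ C := by
  intro t ht
  have hlim : Tendsto (fun k => p + t • ((r k)⁻¹ • (x k - p))) atTop
      (nhds (p + t • w)) := Filter.Tendsto.const_add _ (hw.const_smul t)
  refine hcl.mem_of_tendsto hlim ?_
  filter_upwards [hrt.eventually_ge_atTop t] with k hk
  have h01 : 0 ≤ t / r k := div_nonneg ht (hr k).le
  have h1 : t / r k ≤ 1 := div_le_one_of_le₀ hk (hr k).le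
  have hmem := hconv hp (hx k) (by linarith : (0:ℝ) ≤ 1 - t / r k) h01 (by ring)
  have heq : (1 - t / r k) • p + (t / r k) • x k = p + t • ((r k)⁻¹ • (x k - p)) := by
    have hrne : r k ≠ 0 := (hr k).ne'
    rw [div_eq_mul_inv]
    match_scalars <;> (field_simp; try ring)
  rwa [heq] at hmem

/-- from a norm-growing sequence in `C`, extract a normalized convergent subsequence. -/
lemma aux_subseq_dir {n : ℕ} {C : Set (EuclideanSpace ℝ (Fin n))}
    {p : EuclideanSpace ℝ (Fin n)} {a : ℕ → EuclideanSpace ℝ (Fin n)}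
    (ha : ∀ k, a k ∈ C)
    (hgrow : ∀ k : ℕ, (k : ℝ) + 1 < ‖a k - p‖) :
    ∃ w : EuclideanSpace ℝ (Fin n), ‖w‖ = 1 ∧ ∃ φ : ℕ → ℕ, StrictMono φ ∧
      Tendsto (fun k => ‖a (φ k) - p‖⁻¹ • (a (φ k) - p)) atTop (nhds w) ∧
      Tendsto (fun k => ‖a (φ k) - p‖) atTop atTop := by
  have hrpos : ∀ k, (0:ℝ) < ‖a k - p‖ := fun k => lt_trans (by positivity) (hgrow k)
  have hd : ∀ k, ‖a k - p‖⁻¹ • (a k - p) ∈ Metric.sphere (0 : EuclideanSpace ℝ (Fin n)) 1 := by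
    intro k
    rw [mem_sphere_zero_iff_norm, norm_smul, norm_inv, norm_norm]
    exact inv_mul_cancel₀ (hrpos k).ne'
  obtain ⟨w, hw1, φ, hφ, hconv⟩ :=
    (isCompact_sphere (0 : EuclideanSpace ℝ (Fin n)) 1).tendsto_subseq hd
  refine ⟨w, by simpa [mem_sphere_zero_iff_norm] using hw1, φ, hφ, hconv, ?_⟩
  have hb : ∀ k : ℕ, (k : ℝ) ≤ ‖a (φ k) - p‖ := by
    intro k
    have h1 : (k : ℝ) ≤ (φ k : ℝ) := by exact_mod_cast hφ.id_le k
    linarith [hgrow (φ k)]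
  exact tendsto_atTop_mono hb tendsto_natCast_atTop_atTop

lemma aux_exists_ray {n : ℕ} {C : Set (EuclideanSpace ℝ (Fin n))}
    (hcl : IsClosed C) (hconv : Convex ℝ C)
    {p : EuclideanSpace ℝ (Fin n)} (hp : p ∈ C)
    (hub : ¬ Bornology.IsBounded C) :
    ∃ w : EuclideanSpace ℝ (Fin n), ‖w‖ = 1 ∧ ∀ t : ℝ, 0 ≤ t → p + t • w ∈ C := by
  rw [isBounded_iff_forall_norm_le] at hub
  push_neg at hub
  choose a haC hagr using fun k : ℕ => hub ((k : ℝ) + 1 + ‖p‖)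
  have hgrow : ∀ k : ℕ, (k : ℝ) + 1 < ‖a k - p‖ := by
    intro k
    have h := hagr k
    linarith [norm_sub_norm_le (a k) p]
  obtain ⟨w, hw1, φ, hφ, hd, hr⟩ := aux_subseq_dir haC hgrow
  exact ⟨w, hw1, aux_ray_of_tendsto hcl hconv hp (fun k => haC (φ k))
    (fun k => lt_trans (by positivity) (hgrow (φ k))) hr hd⟩

/-- the minimal face of a balanced, line-free closed convex set is bounded -/
lemma aux_face_bounded {n : ℕ} {K : Set (EuclideanSpace ℝ (Fin n))}
    {u : EuclideanSpace ℝ (Fin n)}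
    (hcl : IsClosed K) (hconv : Convex ℝ K)
    (hnoline : ¬ ∃ x v : EuclideanSpace ℝ (Fin n), v ≠ 0 ∧ ∀ t : ℝ, x + t • v ∈ K)
    {p : EuclideanSpace ℝ (Fin n)} (hp : p ∈ K)
    (hface : ∀ x ∈ {z ∈ K | ⟪z, u⟫ = ⟪p, u⟫}, ∀ v : EuclideanSpace ℝ (Fin n), v ≠ 0 →
      (∀ t : ℝ, 0 ≤ t → x + t • v ∈ {z ∈ K | ⟪z, u⟫ = ⟪p, u⟫}) →
      ∀ t : ℝ, x + t • v ∈ {z ∈ K | ⟪z, u⟫ = ⟪p, u⟫}) :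
    Bornology.IsBounded {z ∈ K | ⟪z, u⟫ = ⟪p, u⟫} := by
  by_contra hub
  set F := {z ∈ K | ⟪z, u⟫ = ⟪p, u⟫} with hF
  have hFcl : IsClosed F := by
    apply hcl.inter
    exact isClosed_eq (Continuous.inner continuous_id continuous_const) continuous_const
  have hFconv : Convex ℝ F := by
    intro x hx y hy a b ha hb hab
    refine ⟨hconv hx.1 hy.1 ha hb hab, ?_⟩
    simp only [inner_add_left, real_inner_smul_left, hx.2, hy.2]
    rw [← add_mul, hab, one_mul]
  have hpF : p ∈ F := ⟨hp, rfl⟩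
  obtain ⟨w, hw1, hray⟩ := aux_exists_ray hFcl hFconv hpF hub
  have hwne : w ≠ 0 := by intro h; rw [h, norm_zero] at hw1; norm_num at hw1
  have := hface p hpF w hwne (fun t ht => hray t ht)
  exact hnoline ⟨p, w, hwne, fun t => (this t).1⟩

set_option maxHeartbeats 1000000 in
/-- a closed convex set containing a line contains its translate through any point -/
lemma aux_line_trans {n : ℕ} {C : Set (EuclideanSpace ℝ (Fin n))}
    (hcl : IsClosed C) (hconv : Convex ℝ C)
    {x v z : EuclideanSpace ℝ (Fin n)} (hline : ∀ t : ℝ, x + t • v ∈ C) (hz : z ∈ C) :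
    ∀ t : ℝ, z + t • v ∈ C := by
  have key : ∀ v' : EuclideanSpace ℝ (Fin n), (∀ t : ℝ, x + t • v' ∈ C) →
      ∀ t : ℝ, 0 ≤ t → z + t • v' ∈ C := by
    intro v' hl
    apply aux_ray_of_tendsto hcl hconv hz (x := fun k => x + ((k : ℝ) + 1) • v')
      (fun k => hl _) (r := fun k => (k : ℝ) + 1) (fun k => by positivity)
      (tendsto_atTop_add_const_right _ 1 tendsto_natCast_atTop_atTop)
    have heq : ∀ k : ℕ, ((k : ℝ) + 1)⁻¹ • (x + ((k : ℝ) + 1) • v' - z)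
        = ((k : ℝ) + 1)⁻¹ • (x - z) + v' := by
      intro k
      have h : ((k : ℝ) + 1) ≠ 0 := by positivity
      rw [show x + ((k : ℝ) + 1) • v' - z = (x - z) + ((k : ℝ) + 1) • v' by abel,
        smul_add, smul_smul, inv_mul_cancel₀ h, one_smul]
    simp only [heq]
    have h0 : Tendsto (fun k : ℕ => ((k : ℝ) + 1)⁻¹ • (x - z)) atTop
        (nhds (0 : EuclideanSpace ℝ (Fin n))) := by
      have : Tendsto (fun k : ℕ => ((k : ℝ) + 1)⁻¹) atTop (nhds 0) :=
        (tendsto_atTop_add_const_right _ 1 tendsto_natCast_atTop_atTop).inv_tendsto_atTop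
      simpa using this.smul_const (x - z)
    simpa using h0.add_const v'
  intro t
  rcases le_or_gt 0 t with ht | ht
  · exact key v hline t ht
  · have hl' : ∀ s : ℝ, x + s • (-v) ∈ C := by
      intro s; have := hline (-s); simpa [neg_smul, smul_neg] using this
    have := key (-v) hl' (-t) (by linarith)
    simpa [smul_neg, neg_smul] using this

set_option maxHeartbeats 1000000 in
/-- summands of a bounded sequence of sums are bounded -/
lemma aux_sum_bounded {n : ℕ} {u : EuclideanSpace ℝ (Fin n)}
    {K₀ K₁ : Set (EuclideanSpace ℝ (Fin n))}
    (h₀cl : IsClosed K₀) (h₀conv : Convex ℝ K₀)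
    (h₀noline : ¬ ∃ x v : EuclideanSpace ℝ (Fin n), v ≠ 0 ∧ ∀ t : ℝ, x + t • v ∈ K₀)
    (h₁cl : IsClosed K₁) (h₁conv : Convex ℝ K₁)
    {p₀ p₁ : EuclideanSpace ℝ (Fin n)} (hp₀ : p₀ ∈ K₀) (hp₁ : p₁ ∈ K₁)
    (hmin₀ : ∀ x ∈ K₀, ⟪p₀, u⟫ ≤ ⟪x, u⟫) (hmin₁ : ∀ x ∈ K₁, ⟪p₁, u⟫ ≤ ⟪x, u⟫)
    (hface₀ : ∀ x ∈ {z ∈ K₀ | ⟪z, u⟫ = ⟪p₀, u⟫}, ∀ v : EuclideanSpace ℝ (Fin n), v ≠ 0 →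
      (∀ t : ℝ, 0 ≤ t → x + t • v ∈ {z ∈ K₀ | ⟪z, u⟫ = ⟪p₀, u⟫}) →
      ∀ t : ℝ, x + t • v ∈ {z ∈ K₀ | ⟪z, u⟫ = ⟪p₀, u⟫})
    {a b : ℕ → EuclideanSpace ℝ (Fin n)} (ha : ∀ k, a k ∈ K₀) (hb : ∀ k, b k ∈ K₁)
    {M : ℝ} (hM : ∀ k, ‖a k + b k‖ ≤ M) :
    ∃ M₀ : ℝ, ∀ k, ‖a k‖ ≤ M₀ := by
  by_contra hub
  push_neg at hub
  choose ψ hψ using fun m : ℕ => hub ((m : ℝ) + 1 + ‖p₀‖)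
  set A : ℕ → EuclideanSpace ℝ (Fin n) := fun m => a (ψ m) with hA
  set B : ℕ → EuclideanSpace ℝ (Fin n) := fun m => b (ψ m) with hB
  have hgrow : ∀ m : ℕ, (m : ℝ) + 1 < ‖A m - p₀‖ := by
    intro m
    have := hψ m
    have h2 := norm_sub_norm_le (A m) p₀
    simp only [hA] at h2 ⊢
    linarith
  obtain ⟨w, hw1, φ, hφ, hd, hr⟩ := aux_subseq_dir (fun m => ha (ψ m)) hgrow
  have hwne : w ≠ 0 := by intro h; rw [h, norm_zero] at hw1; norm_num at hw1
  set r : ℕ → ℝ := fun k => ‖A (φ k) - p₀‖ with hrdef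
  have hrpos : ∀ k, 0 < r k := fun k => lt_trans (by positivity) (hgrow (φ k))
  have hray₀ : ∀ t : ℝ, 0 ≤ t → p₀ + t • w ∈ K₀ :=
    aux_ray_of_tendsto h₀cl h₀conv hp₀ (fun k => ha (ψ (φ k))) hrpos hr hd
  have hcbound : ∀ k, ‖A (φ k) + B (φ k) - p₀ - p₁‖ ≤ M + ‖p₀‖ + ‖p₁‖ := by
    intro k
    calc ‖A (φ k) + B (φ k) - p₀ - p₁‖ ≤ ‖A (φ k) + B (φ k)‖ + ‖p₀‖ + ‖p₁‖ := by
          have h1 := norm_sub_le (A (φ k) + B (φ k) - p₀) p₁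
          have h2 := norm_sub_le (A (φ k) + B (φ k)) p₀
          linarith
      _ ≤ M + ‖p₀‖ + ‖p₁‖ := by linarith [hM (ψ (φ k))]
  have h0 : Tendsto (fun k => (r k)⁻¹ • (A (φ k) + B (φ k) - p₀ - p₁)) atTop
      (nhds (0 : EuclideanSpace ℝ (Fin n))) := by
    refine squeeze_zero_norm (a := fun k => (M + ‖p₀‖ + ‖p₁‖) * (r k)⁻¹) ?_ ?_
    · intro k
      rw [norm_smul, norm_inv, norm_norm, mul_comm]
      exact mul_le_mul_of_nonneg_right (hcbound k) (by positivity)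
    · simpa using (hr.inv_tendsto_atTop).const_mul (M + ‖p₀‖ + ‖p₁‖)
  have hdB : Tendsto (fun k => (r k)⁻¹ • (B (φ k) - p₁)) atTop (nhds (-w)) := by
    have heq : ∀ k, (r k)⁻¹ • (B (φ k) - p₁)
        = (r k)⁻¹ • (A (φ k) + B (φ k) - p₀ - p₁) - (r k)⁻¹ • (A (φ k) - p₀) := by
      intro k
      rw [← smul_sub]
      congr 1
      abel
    simp only [heq]
    simpa using h0.sub hd
  have hray₁ : ∀ t : ℝ, 0 ≤ t → p₁ + t • (-w) ∈ K₁ :=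
    aux_ray_of_tendsto h₁cl h₁conv hp₁ (fun k => hb (ψ (φ k))) hrpos hr hdB
  have hw0 : ⟪w, u⟫ = 0 := by
    have h1 := hmin₀ _ (hray₀ 1 zero_le_one)
    have h2 := hmin₁ _ (hray₁ 1 zero_le_one)
    simp only [inner_add_left, real_inner_smul_left, one_smul, inner_neg_left] at h1 h2
    linarith
  have hrayF : ∀ t : ℝ, 0 ≤ t → p₀ + t • w ∈ {z ∈ K₀ | ⟪z, u⟫ = ⟪p₀, u⟫} := by
    intro t ht
    refine ⟨hray₀ t ht, ?_⟩
    rw [inner_add_left, real_inner_smul_left, hw0]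
    ring
  have := hface₀ p₀ ⟨hp₀, rfl⟩ w hwne hrayF
  exact h₀noline ⟨p₀, w, hwne, fun t => (this t).1⟩

end AuxLemmas

set_option maxHeartbeats 2000000 in
/-- If `K₀, K₁ ⊆ ℝⁿ` are unbounded convex bodies containing no line, each with balanced support
with respect to the unit vector `u`, then `K = K₀ + K₁` is closed, is an unbounded convex body,
contains no line, and has balanced support with respect to `u`. -/
theorem minkowski_sum_balanced_support (n : ℕ) (u : EuclideanSpace ℝ (Fin n)) (hu : ‖u‖ = 1)
    (K₀ K₁ : Set (EuclideanSpace ℝ (Fin n)))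
    (h₀cl : IsClosed K₀) (h₀conv : Convex ℝ K₀) (h₀int : (interior K₀).Nonempty)
    (h₀unb : ¬ Bornology.IsBounded K₀)
    (h₀noline : ¬ ∃ x v : EuclideanSpace ℝ (Fin n), v ≠ 0 ∧ ∀ t : ℝ, x + t • v ∈ K₀)
    (h₀bal : HasBalancedSupport K₀ u)
    (h₁cl : IsClosed K₁) (h₁conv : Convex ℝ K₁) (h₁int : (interior K₁).Nonempty)
    (h₁unb : ¬ Bornology.IsBounded K₁)
    (h₁noline : ¬ ∃ x v : EuclideanSpace ℝ (Fin n), v ≠ 0 ∧ ∀ t : ℝ, x + t • v ∈ K₁)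
    (h₁bal : HasBalancedSupport K₁ u) :
    IsClosed (K₀ + K₁) ∧ Convex ℝ (K₀ + K₁) ∧ (interior (K₀ + K₁)).Nonempty ∧
      ¬ Bornology.IsBounded (K₀ + K₁) ∧
      (¬ ∃ x v : EuclideanSpace ℝ (Fin n), v ≠ 0 ∧ ∀ t : ℝ, x + t • v ∈ K₀ + K₁) ∧
      HasBalancedSupport (K₀ + K₁) u := by
  obtain ⟨p₀, hp₀, hmin₀, hface₀⟩ := h₀bal
  obtain ⟨p₁, hp₁, hmin₁, hface₁⟩ := h₁bal
  -- closedness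
  have hclosed : IsClosed (K₀ + K₁) := by
    refine isClosed_of_closure_subset ?_
    intro z hz
    obtain ⟨x, hxmem, hxlim⟩ := mem_closure_iff_seq_limit.mp hz
    choose aa haK bb hbK hab using fun k => Set.mem_add.mp (hxmem k)
    obtain ⟨M, hM⟩ := hxlim.norm.bddAbove_range
    have hMk : ∀ k, ‖aa k + bb k‖ ≤ M := by
      intro k
      rw [hab k]
      exact hM ⟨k, rfl⟩
    obtain ⟨M₀, hM₀⟩ := aux_sum_bounded h₀cl h₀conv h₀noline h₁cl h₁conv hp₀ hp₁
      hmin₀ hmin₁ hface₀ haK hbK hMk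
    have hball : ∀ k, aa k ∈ Metric.closedBall (0 : EuclideanSpace ℝ (Fin n)) M₀ := by
      intro k
      rw [Metric.mem_closedBall, dist_zero_right]
      exact hM₀ k
    obtain ⟨α, _, φ, hφ, hαlim⟩ :=
      (isCompact_closedBall (0 : EuclideanSpace ℝ (Fin n)) M₀).tendsto_subseq hball
    have hαK : α ∈ K₀ :=
      h₀cl.mem_of_tendsto hαlim (Filter.Eventually.of_forall fun k => haK (φ k))
    have hβlim : Tendsto (fun k => bb (φ k)) atTop (nhds (z - α)) := by
      have heq : (fun k => bb (φ k)) = fun k => x (φ k) - aa (φ k) := by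
        funext k
        rw [← hab (φ k)]
        abel
      rw [heq]
      exact (hxlim.comp hφ.tendsto_atTop).sub hαlim
    have hβK : z - α ∈ K₁ :=
      h₁cl.mem_of_tendsto hβlim (Filter.Eventually.of_forall fun k => hbK (φ k))
    exact Set.mem_add.mpr ⟨α, hαK, z - α, hβK, by abel⟩
  have hconv : Convex ℝ (K₀ + K₁) := h₀conv.add h₁conv
  -- interior nonempty
  obtain ⟨x₀, hx₀⟩ := h₀int
  obtain ⟨x₁, hx₁⟩ := h₁int
  have hintne : (interior (K₀ + K₁)).Nonempty := by
    refine ⟨x₀ + x₁, ?_⟩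
    have hsub : interior K₀ + K₁ ⊆ interior (K₀ + K₁) :=
      interior_maximal (Set.add_subset_add interior_subset subset_rfl)
        isOpen_interior.add_right
    exact hsub (Set.add_mem_add hx₀ (interior_subset hx₁))
  -- unbounded
  have hq₁ : x₁ ∈ K₁ := interior_subset hx₁
  have hunb : ¬ Bornology.IsBounded (K₀ + K₁) := by
    intro hbd
    apply h₀unb
    rw [isBounded_iff_forall_norm_le] at hbd ⊢
    obtain ⟨M, hM⟩ := hbd
    refine ⟨M + ‖x₁‖, fun x hx => ?_⟩
    have h1 := hM (x + x₁) (Set.add_mem_add hx hq₁)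
    have h2 := norm_sub_le (x + x₁) x₁
    have h3 : x + x₁ - x₁ = x := by abel
    rw [h3] at h2
    linarith
  -- face bounds
  obtain ⟨Ma, hMa⟩ := isBounded_iff_forall_norm_le.mp
    (aux_face_bounded h₀cl h₀conv h₀noline hp₀ hface₀)
  obtain ⟨Mb, hMb⟩ := isBounded_iff_forall_norm_le.mp
    (aux_face_bounded h₁cl h₁conv h₁noline hp₁ hface₁)
  have hMa0 : 0 ≤ Ma := le_trans (norm_nonneg p₀) (hMa p₀ ⟨hp₀, rfl⟩)
  have hMb0 : 0 ≤ Mb := le_trans (norm_nonneg p₁) (hMb p₁ ⟨hp₁, rfl⟩)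
  have hpK : p₀ + p₁ ∈ K₀ + K₁ := Set.add_mem_add hp₀ hp₁
  -- minimality for the sum
  have hmin : ∀ z ∈ K₀ + K₁, ⟪p₀ + p₁, u⟫ ≤ ⟪z, u⟫ := by
    intro z hz
    obtain ⟨c, hc, d, hd, rfl⟩ := Set.mem_add.mp hz
    rw [inner_add_left, inner_add_left]
    exact add_le_add (hmin₀ c hc) (hmin₁ d hd)
  -- every point of the face of the sum has norm at most Ma + Mb
  have hFbound : ∀ z ∈ K₀ + K₁, ⟪z, u⟫ = ⟪p₀ + p₁, u⟫ → ‖z‖ ≤ Ma + Mb := by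
    intro z hz hze
    obtain ⟨c, hc, d, hd, rfl⟩ := Set.mem_add.mp hz
    rw [inner_add_left, inner_add_left] at hze
    have h1 := hmin₀ c hc
    have h2 := hmin₁ d hd
    have hc' : ⟪c, u⟫ = ⟪p₀, u⟫ := by linarith
    have hd' : ⟪d, u⟫ = ⟪p₁, u⟫ := by linarith
    calc ‖c + d‖ ≤ ‖c‖ + ‖d‖ := norm_add_le c d
      _ ≤ Ma + Mb := add_le_add (hMa c ⟨hc, hc'⟩) (hMb d ⟨hd, hd'⟩)
  -- no line
  have hnoline : ¬ ∃ x v : EuclideanSpace ℝ (Fin n), v ≠ 0 ∧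
      ∀ t : ℝ, x + t • v ∈ K₀ + K₁ := by
    rintro ⟨x, v, hv, hline⟩
    have hline' : ∀ t : ℝ, (p₀ + p₁) + t • v ∈ K₀ + K₁ :=
      aux_line_trans hclosed hconv hline hpK
    have hvu : ⟪v, u⟫ = 0 := by
      by_contra hne
      have hbd : ∀ t : ℝ, (0:ℝ) ≤ t * ⟪v, u⟫ := by
        intro t
        have := hmin _ (hline' t)
        rw [inner_add_left ((p₀ : EuclideanSpace ℝ (Fin n)) + p₁), real_inner_smul_left] at this
        linarith
      have h1 := hbd (-(1 / ⟪v, u⟫))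
      rw [neg_mul, one_div, inv_mul_cancel₀ hne] at h1
      linarith
    have hvpos : 0 < ‖v‖ := norm_pos_iff.mpr hv
    set T : ℝ := (‖p₀ + p₁‖ + (Ma + Mb) + 1) / ‖v‖ with hT
    have hTnn : 0 ≤ T := div_nonneg (by positivity) hvpos.le
    have hTv : T * ‖v‖ = ‖p₀ + p₁‖ + (Ma + Mb) + 1 := div_mul_cancel₀ _ hvpos.ne'
    have h1 : ‖(p₀ + p₁) + T • v‖ ≤ Ma + Mb := by
      apply hFbound _ (hline' T)
      rw [inner_add_left ((p₀ : EuclideanSpace ℝ (Fin n)) + p₁), real_inner_smul_left, hvu]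
      ring
    have h2 : ‖T • v‖ ≤ ‖(p₀ + p₁) + T • v‖ + ‖p₀ + p₁‖ := by
      have h := norm_sub_le ((p₀ + p₁) + T • v) (p₀ + p₁)
      have h3 : (p₀ + p₁) + T • v - (p₀ + p₁) = T • v := by abel
      rw [h3] at h
      linarith
    rw [norm_smul, Real.norm_eq_abs, abs_of_nonneg hTnn] at h2
    linarith
  refine ⟨hclosed, hconv, hintne, hunb, hnoline, p₀ + p₁, hpK, hmin, ?_⟩
  -- balanced support: the face of the sum is bounded, so it contains no ray
  rintro x ⟨hxK, hxe⟩ v hv hray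
  exfalso
  have hvpos : 0 < ‖v‖ := norm_pos_iff.mpr hv
  set T : ℝ := (‖x‖ + (Ma + Mb) + 1) / ‖v‖ with hT
  have hTnn : 0 ≤ T := div_nonneg (by positivity) hvpos.le
  have hTv : T * ‖v‖ = ‖x‖ + (Ma + Mb) + 1 := div_mul_cancel₀ _ hvpos.ne'
  obtain ⟨hmem, heq⟩ := hray T hTnn
  have h1 : ‖x + T • v‖ ≤ Ma + Mb := hFbound _ hmem heq
  have h2 : ‖T • v‖ ≤ ‖x + T • v‖ + ‖x‖ := by
    have h := norm_sub_le (x + T • v) x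
    have h3 : x + T • v - x = T • v := by abel
    rw [h3] at h
    linarith
  rw [norm_smul, Real.norm_eq_abs, abs_of_nonneg hTnn] at h2
  linarith
end

section
/- Let n ≥ 1, let u ∈ ℝⁿ be a unit vector, let K₀ ⊆ ℝⁿ be an unbounded convex body whose boundary ∂K₀ is homeomorphic to ℝⁿ⁻¹ and which has balanced support with respect to u, and let K₁ ⊆ ℝⁿ be an unbounded convex body containing no line which has balanced support with respect to u. Then K := K₀ + K₁ is closed, K is an unbounded convex body whose boundary ∂K is homeomorphic to ℝⁿ⁻¹, and K has balanced support with respect to u. -/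
open scoped RealInnerProductSpace Pointwise

open Filter Topology Set Metric Bornology

noncomputable section
namespace MS

variable {V : Type*} [NormedAddCommGroup V] [InnerProductSpace ℝ V]

/-- recession cone -/
def recc (K : Set V) : Set V := {v | ∀ x ∈ K, ∀ t : ℝ, 0 ≤ t → x + t • v ∈ K}

lemma zero_mem_recc (K : Set V) : 0 ∈ recc K := fun x hx t _ => by simpa using hx

lemma smul_mem_recc {K : Set V} {v : V} (hv : v ∈ recc K) {r : ℝ} (hr : 0 ≤ r) :
    r • v ∈ recc K := fun x hx t ht => by
  rw [smul_smul]; exact hv x hx (t * r) (mul_nonneg ht hr)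

lemma add_mem_recc {K : Set V} {v w : V} (hv : v ∈ recc K) (hw : w ∈ recc K) :
    v + w ∈ recc K := fun x hx t ht => by
  have := hw (x + t • v) (hv x hx t ht) t ht
  rwa [add_assoc, ← smul_add] at this

lemma isClosed_recc {K : Set V} (h : IsClosed K) : IsClosed (recc K) := by
  have : recc K = ⋂ (x ∈ K) (t : {t : ℝ // 0 ≤ t}), {v : V | x + (t : ℝ) • v ∈ K} := by
    ext v
    simp only [recc, mem_setOf_eq, mem_iInter]
    exact ⟨fun hv x hx t => hv x hx t t.2, fun hv x hx t ht => hv x hx ⟨t, ht⟩⟩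
  rw [this]
  refine isClosed_iInter fun x => isClosed_iInter fun _ => isClosed_iInter fun t =>
    IsClosed.preimage (continuous_const.add (continuous_const_smul _)) h

lemma mem_recc_of_tendsto {K : Set V} (hcl : IsClosed K) (hco : Convex ℝ K)
    {c : ℕ → V} (hc : ∀ k, c k ∈ K) {t : ℕ → ℝ} (ht : Tendsto t atTop atTop)
    {v : V} (hv : Tendsto (fun k => (t k)⁻¹ • c k) atTop (𝓝 v)) : v ∈ recc K := by
  intro x hx s hs
  have hlim : Tendsto (fun k => x + (s * (t k)⁻¹) • (c k) - (s * (t k)⁻¹) • x)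
      atTop (𝓝 (x + s • v - (0:ℝ) • x)) := by
    refine (tendsto_const_nhds.add ?_).sub (Tendsto.smul ?_ tendsto_const_nhds)
    · have : Tendsto (fun k => s • ((t k)⁻¹ • c k)) atTop (𝓝 (s • v)) :=
        hv.const_smul s
      simpa [smul_smul] using this
    · have h0 : Tendsto (fun k => (t k)⁻¹) atTop (𝓝 0) := ht.inv_tendsto_atTop
      simpa using tendsto_const_nhds.mul h0
  rw [zero_smul, sub_zero] at hlim
  refine hcl.closure_eq ▸ mem_closure_of_tendsto hlim ?_
  have hev : ∀ᶠ k in atTop, s ≤ t k ∧ 1 ≤ t k := by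
    filter_upwards [ht.eventually_ge_atTop s, ht.eventually_ge_atTop 1] with k h1 h2
    exact ⟨h1, h2⟩
  filter_upwards [hev] with k hk
  have htk : 0 < t k := lt_of_lt_of_le one_pos hk.2
  have ha0 : 0 ≤ s * (t k)⁻¹ := mul_nonneg hs (by positivity)
  have ha1 : s * (t k)⁻¹ ≤ 1 := by
    rw [mul_inv_le_iff₀ htk, one_mul]; exact hk.1
  have := hco hx (hc k) (by linarith : (0:ℝ) ≤ 1 - s * (t k)⁻¹) ha0 (by ring)
  simpa [sub_smul, one_smul, sub_add_eq_add_sub] using this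


lemma exists_unit_recc_of_unbounded [FiniteDimensional ℝ V] {K : Set V} (hcl : IsClosed K)
    (hco : Convex ℝ K) (hK : ¬ IsBounded K) : ∃ v : V, ‖v‖ = 1 ∧ v ∈ recc K := by
  have h : ∀ k : ℕ, ∃ x ∈ K, (k : ℝ) < ‖x‖ := by
    intro k
    by_contra hcon
    push_neg at hcon
    exact hK (isBounded_iff_forall_norm_le.2 ⟨k, hcon⟩)
  choose c hcK hck using h
  have ht : Tendsto (fun k => ‖c k‖) atTop atTop :=
    tendsto_atTop_mono (fun k => (hck k).le) tendsto_natCast_atTop_atTop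
  have hw : ∀ k, (fun k => ‖c k‖⁻¹ • c k) k ∈ sphere (0:V) 1 := by
    intro k
    have hpos : 0 < ‖c k‖ := lt_of_le_of_lt (Nat.cast_nonneg k) (hck k)
    simp [norm_smul, abs_of_nonneg (inv_nonneg.2 hpos.le), inv_mul_cancel₀ hpos.ne']
  obtain ⟨v, hv, φ, hφ, hlim⟩ :=
    (isCompact_sphere (0:V) 1).tendsto_subseq hw
  refine ⟨v, by simpa using hv, ?_⟩
  exact mem_recc_of_tendsto hcl hco (fun k => hcK (φ k))
    (ht.comp hφ.tendsto_atTop) hlim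

lemma isClosed_add_of_recc [FiniteDimensional ℝ V] {A B : Set V}
    (hAcl : IsClosed A) (hAco : Convex ℝ A) (hBcl : IsClosed B) (hBco : Convex ℝ B)
    (h : ∀ v, v ∈ recc B → -v ∈ recc A → v = 0) : IsClosed (A + B) := by
  rw [← isSeqClosed_iff_isClosed]
  intro y z hy hyz
  choose a ha b hb hab using fun k => (Set.mem_add).1 (hy k)
  by_cases hbd : ∃ R, ∃ᶠ k in atTop, ‖b k‖ ≤ R
  · obtain ⟨R, hR⟩ := hbd
    obtain ⟨φ, hφ, hφR⟩ := Filter.extraction_of_frequently_atTop hR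
    obtain ⟨bb, _, ψ, hψ, hblim⟩ := (isCompact_closedBall (0:V) R).tendsto_subseq
      (x := b ∘ φ) (fun n => by simpa [dist_eq_norm] using hφR n)
    have hbbB : bb ∈ B := hBcl.closure_eq ▸
      mem_closure_of_tendsto hblim (Eventually.of_forall fun k => hb _)
    have hylim : Tendsto (fun k => y (φ (ψ k))) atTop (𝓝 z) :=
      hyz.comp ((hφ.comp hψ).tendsto_atTop)
    have halim : Tendsto (fun k => a (φ (ψ k))) atTop (𝓝 (z - bb)) := by
      have : (fun k => a (φ (ψ k))) = fun k => y (φ (ψ k)) - b (φ (ψ k)) := by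
        funext k; rw [← hab (φ (ψ k))]; abel
      rw [this]
      exact hylim.sub hblim
    have haA : z - bb ∈ A := hAcl.closure_eq ▸
      mem_closure_of_tendsto halim (Eventually.of_forall fun k => ha _)
    exact ⟨z - bb, haA, bb, hbbB, by simp⟩
  · push_neg at hbd
    have ht : Tendsto (fun k => ‖b k‖) atTop atTop := by
      rw [Filter.tendsto_atTop]
      intro R
      have hre := hbd R
      filter_upwards [hre] with k hk
      exact hk.le
    set t := fun k => ‖b k‖ with htdef
    have hwball : ∀ k, (fun k => (t k)⁻¹ • b k) k ∈ closedBall (0:V) 1 := by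
      intro k
      simp only [mem_closedBall, dist_zero_right, norm_smul, norm_inv, norm_norm]
      rcases eq_or_ne (b k) 0 with h0 | h0
      · simp [htdef, h0]
      · simp [htdef, inv_mul_cancel₀ (norm_ne_zero_iff.2 h0)]
    obtain ⟨v, _, φ, hφ, hvlim⟩ := (isCompact_closedBall (0:V) 1).tendsto_subseq hwball
    have htφ : Tendsto (fun k => t (φ k)) atTop atTop := ht.comp hφ.tendsto_atTop
    have hv1 : ‖v‖ = 1 := by
      have hnorm : Tendsto (fun k => ‖(t (φ k))⁻¹ • b (φ k)‖) atTop (𝓝 ‖v‖) :=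
        hvlim.norm
      have heq : ∀ᶠ k in atTop, ‖(t (φ k))⁻¹ • b (φ k)‖ = 1 := by
        filter_upwards [htφ.eventually_gt_atTop 0] with k hk
        simp only [norm_smul, norm_inv, htdef, norm_norm]
        exact inv_mul_cancel₀ (ne_of_gt hk)
      exact tendsto_nhds_unique (hnorm.congr' heq) tendsto_const_nhds
    have hvB : v ∈ recc B :=
      mem_recc_of_tendsto hBcl hBco (fun k => hb (φ k)) htφ hvlim
    have hvA : -v ∈ recc A := by
      refine mem_recc_of_tendsto hAcl hAco (fun k => ha (φ k)) htφ ?_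
      have h1 : Tendsto (fun k => (t (φ k))⁻¹ • y (φ k)) atTop (𝓝 ((0:ℝ) • z)) :=
        Tendsto.smul htφ.inv_tendsto_atTop (hyz.comp hφ.tendsto_atTop)
      rw [zero_smul] at h1
      have heq : ∀ k, (t (φ k))⁻¹ • a (φ k)
          = (t (φ k))⁻¹ • y (φ k) - (t (φ k))⁻¹ • b (φ k) := by
        intro k
        rw [← smul_sub, ← hab (φ k)]
        congr 1
        abel
      rw [show (𝓝 (-v)) = 𝓝 (0 - v) by rw [zero_sub]]
      exact Tendsto.congr (fun k => (heq k).symm) (h1.sub hvlim)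
    have hv0 : v = 0 := h v hvB hvA
    rw [hv0, norm_zero] at hv1
    norm_num at hv1


lemma gauge_eq_zero_iff_recc [FiniteDimensional ℝ V] {A : Set V} (hAcl : IsClosed A)
    (hAco : Convex ℝ A) (hA0 : A ∈ 𝓝 0) {θ : V} : gauge A θ = 0 ↔ θ ∈ recc A := by
  constructor
  · intro hg
    have habs : Absorbent ℝ A := absorbent_nhds_zero hA0
    have h : ∀ k : ℕ, ∃ b : ℝ, 0 < b ∧ b < ((k:ℝ)+1)⁻¹ ∧ θ ∈ b • A := by
      intro k
      exact exists_lt_of_gauge_lt habs (by rw [hg]; positivity)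
    choose bs hb0 hblt hbmem using h
    refine mem_recc_of_tendsto hAcl hAco (c := fun k => (bs k)⁻¹ • θ)
      (t := fun k => (bs k)⁻¹) ?_ ?_ ?_
    · intro k
      exact (mem_smul_set_iff_inv_smul_mem₀ (hb0 k).ne' _ _).1 (hbmem k)
    · refine tendsto_atTop_mono (fun k => ?_)
        (tendsto_atTop_add_const_right _ 1 tendsto_natCast_atTop_atTop)
      have h1 : (0:ℝ) < (k:ℝ) + 1 := by positivity
      rw [← inv_inv ((k:ℝ)+1)]
      exact inv_anti₀ (hb0 k) (hblt k).le
    · have heq : ∀ k, ((bs k)⁻¹)⁻¹ • ((bs k)⁻¹ • θ) = θ := fun k => by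
        rw [inv_inv, smul_smul, mul_inv_cancel₀ (hb0 k).ne', one_smul]
      exact Tendsto.congr (fun k => (heq k).symm) tendsto_const_nhds
  · intro hθ
    have h0A : (0:V) ∈ A := mem_of_mem_nhds hA0
    have hle : ∀ ε : ℝ, 0 < ε → gauge A θ ≤ 0 + ε := by
      intro ε hε
      rw [zero_add]
      refine gauge_le_of_mem hε.le ?_
      rw [mem_smul_set_iff_inv_smul_mem₀ hε.ne']
      simpa using hθ 0 h0A ε⁻¹ (by positivity)
    exact le_antisymm (le_of_forall_pos_le_add hle) (gauge_nonneg θ)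

lemma frontier_homeo_sphere_compl [FiniteDimensional ℝ V] {K : Set V} (hcl : IsClosed K)
    (hco : Convex ℝ K) {z : V} (hz : z ∈ interior K) :
    Nonempty (↥(frontier K) ≃ₜ ↥{θ : V | ‖θ‖ = 1 ∧ θ ∉ recc K}) := by
  classical
  set e : V ≃ₜ V := Homeomorph.addLeft z with he
  set A : Set V := e ⁻¹' K with hA
  have hmemA : ∀ x, x ∈ A ↔ z + x ∈ K := fun x => Iff.rfl
  have hAcl : IsClosed A := hcl.preimage e.continuous
  have hAco : Convex ℝ A := by
    intro x hx y hy a b ha hb hab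
    have hK := hco (hmemA x |>.1 hx) (hmemA y |>.1 hy) ha hb hab
    refine (hmemA _).2 ?_
    have hzz : z + (a • x + b • y) = a • (z + x) + b • (z + y) := by
      have h2 : a • (z + x) + b • (z + y) = (a + b) • z + (a • x + b • y) := by
        simp only [smul_add, add_smul]; abel
      rw [h2, hab, one_smul]
    rw [hzz]; exact hK
  have hfrA : ∀ x, x ∈ frontier A ↔ z + x ∈ frontier K := by
    intro x
    rw [hA, ← e.preimage_frontier]
    exact Iff.rfl
  have hintA : ∀ x, x ∈ interior A ↔ z + x ∈ interior K := by
    intro x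
    rw [hA, ← e.preimage_interior]
    exact Iff.rfl
  have hA0 : A ∈ 𝓝 0 := by
    rw [← mem_interior_iff_mem_nhds]
    exact (hintA 0).2 (by simpa using hz)
  have hreccA : recc A = recc K := by
    ext v
    constructor
    · intro hv x hx t ht
      have h1 : x - z ∈ A := (hmemA _).2 (by simpa using hx)
      have h2 := hv _ h1 t ht
      have h3 := (hmemA _).1 h2
      have : z + (x - z + t • v) = x + t • v := by abel
      rwa [this] at h3
    · intro hv x hx t ht
      have h2 := hv _ ((hmemA x).1 hx) t ht
      refine (hmemA _).2 ?_
      have : z + (x + t • v) = z + x + t • v := by abel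
      rwa [this]
  have hgauge0 : ∀ θ : V, gauge A θ = 0 ↔ θ ∈ recc K := by
    intro θ
    rw [gauge_eq_zero_iff_recc hAcl hAco hA0, hreccA]
  have hne : ∀ x : V, x ∈ frontier K → ‖x - z‖ ≠ 0 := by
    intro x hx
    rw [norm_ne_zero_iff, sub_ne_zero]
    rintro rfl
    exact hx.2 hz
  have hgx1 : ∀ x : V, x ∈ frontier K → gauge A (x - z) = 1 := by
    intro x hx
    refine (gauge_eq_one_iff_mem_frontier hAco hA0).2 ?_
    exact (hfrA _).2 (by rwa [add_sub_cancel])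
  have hFmem : ∀ x : ↥(frontier K),
      ‖(x:V) - z‖⁻¹ • ((x:V) - z) ∈ {θ : V | ‖θ‖ = 1 ∧ θ ∉ recc K} := by
    intro x
    have hn := hne x x.2
    constructor
    · rw [norm_smul, norm_inv, norm_norm, inv_mul_cancel₀ hn]
    · intro hrec
      have h0 : gauge A (‖(x:V) - z‖⁻¹ • ((x:V) - z)) = 0 := (hgauge0 _).2 hrec
      rw [gauge_smul_of_nonneg (inv_nonneg.2 (norm_nonneg _)), smul_eq_mul,
        hgx1 x x.2, mul_one] at h0
      exact hn (by rwa [inv_eq_zero] at h0)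
  have hGpos : ∀ θ : ↥{θ : V | ‖θ‖ = 1 ∧ θ ∉ recc K}, 0 < gauge A (θ:V) := by
    intro θ
    rcases lt_or_eq_of_le (gauge_nonneg ((θ:V))) with h | h
    · exact h
    · exact absurd ((hgauge0 _).1 h.symm) θ.2.2
  have hGmem : ∀ θ : ↥{θ : V | ‖θ‖ = 1 ∧ θ ∉ recc K},
      z + (gauge A (θ:V))⁻¹ • (θ:V) ∈ frontier K := by
    intro θ
    refine (hfrA _).1 ?_
    refine (gauge_eq_one_iff_mem_frontier hAco hA0).1 ?_
    rw [gauge_smul_of_nonneg (inv_nonneg.2 (gauge_nonneg _)), smul_eq_mul,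
      inv_mul_cancel₀ (hGpos θ).ne']
  refine ⟨Homeomorph.mk ⟨fun x => ⟨_, hFmem x⟩, fun θ => ⟨_, hGmem θ⟩, ?_, ?_⟩ ?_ ?_⟩
  · intro x
    apply Subtype.ext
    simp only
    have hn : ‖(x:V) - z‖ ≠ 0 := hne x x.2
    have hg : gauge A (‖(x:V) - z‖⁻¹ • ((x:V) - z)) = ‖(x:V) - z‖⁻¹ := by
      rw [gauge_smul_of_nonneg (inv_nonneg.2 (norm_nonneg _)), smul_eq_mul,
        hgx1 x x.2, mul_one]
    rw [hg, inv_inv, smul_smul, mul_inv_cancel₀ hn, one_smul]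
    abel
  · intro θ
    apply Subtype.ext
    simp only
    have h1 : ‖(θ:V)‖ = 1 := θ.2.1
    have hg := hGpos θ
    have he1 : z + (gauge A (θ:V))⁻¹ • (θ:V) - z = (gauge A (θ:V))⁻¹ • (θ:V) := by abel
    rw [he1, norm_smul, norm_inv, Real.norm_eq_abs, abs_of_pos hg, h1, mul_one, inv_inv,
      smul_smul, mul_inv_cancel₀ hg.ne', one_smul]
  · refine Continuous.subtype_mk ?_ _
    have hsub : Continuous fun x : ↥(frontier K) => (x:V) - z :=
      continuous_subtype_val.sub continuous_const
    exact (hsub.norm.inv₀ fun x => hne x x.2).smul hsub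
  · refine Continuous.subtype_mk ?_ _
    have hθ : Continuous fun θ : ↥{θ : V | ‖θ‖ = 1 ∧ θ ∉ recc K} => (θ:V) :=
      continuous_subtype_val
    exact continuous_const.add
      ((((continuous_gauge hAco hA0).comp hθ).inv₀ fun θ => (hGpos θ).ne').smul hθ)


lemma exists_axis [CompleteSpace V] {C : Set V} (hCcl : IsClosed C) (hCco : Convex ℝ C)
    (hsmul : ∀ v ∈ C, ∀ r : ℝ, 0 ≤ r → r • v ∈ C)
    (hadd : ∀ v ∈ C, ∀ w' ∈ C, v + w' ∈ C)
    {u w : V} (hu : ∀ c ∈ C, (0:ℝ) ≤ ⟪c, u⟫) (hw : w ∈ C) (hwu : 0 < ⟪w, u⟫) :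
    ∃ e : V, ‖e‖ = 1 ∧ e ∈ C ∧ ∀ c ∈ C, (0:ℝ) ≤ ⟪c, e⟫ := by
  set T := C ∩ {x : V | ⟪x, u⟫ = 1} with hT
  have hTco : Convex ℝ T :=
    hCco.inter (convex_hyperplane (IsLinearMap.mk (fun x y => inner_add_left x y u)
      (fun r x => real_inner_smul_left x u r)) 1)
  have hTcl : IsClosed T :=
    hCcl.inter (isClosed_eq (continuous_id.inner continuous_const) continuous_const)
  have hTne : T.Nonempty := by
    refine ⟨⟪w, u⟫⁻¹ • w, hsmul w hw _ (by positivity), ?_⟩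
    simp only [mem_setOf_eq, real_inner_smul_left]
    exact inv_mul_cancel₀ hwu.ne'
  obtain ⟨z, hzT, hmin⟩ :=
    exists_norm_eq_iInf_of_complete_convex hTne hTcl.isComplete hTco 0
  have hvar : ∀ x ∈ T, (0:ℝ) ≤ ⟪z, x - z⟫ := by
    intro x hx
    have h := (norm_eq_iInf_iff_real_inner_le_zero hTco hzT).1 hmin x hx
    rw [zero_sub, inner_neg_left] at h
    linarith
  have hzC : z ∈ C := hzT.1
  have hz1 : ⟪z, u⟫ = 1 := hzT.2
  have hzne : z ≠ 0 := by
    intro h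
    rw [h, inner_zero_left] at hz1
    norm_num at hz1
  have key : ∀ c ∈ C, ⟪c, u⟫ * ‖z‖ ^ 2 ≤ ⟪z, c⟫ := by
    intro c hc
    set s := ⟪c, u⟫ with hs
    have hs0 : 0 ≤ s := hu c hc
    have hx : (1 + s)⁻¹ • (z + c) ∈ T := by
      constructor
      · exact hsmul _ (hadd z hzC c hc) _ (by positivity)
      · simp only [mem_setOf_eq, real_inner_smul_left, inner_add_left, hz1, ← hs]
        rw [inv_mul_cancel₀ (by positivity)]
    have h2 := hvar _ hx
    rw [inner_sub_right, real_inner_smul_right, inner_add_right] at h2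
    have hzz : ⟪z, z⟫ = ‖z‖ ^ 2 := real_inner_self_eq_norm_sq z
    have hspos : (0:ℝ) < 1 + s := by positivity
    have h3 : (1 + s) * ((1 + s)⁻¹ * (⟪z, z⟫ + ⟪z, c⟫) - ⟪z, z⟫) ≥ 0 :=
      mul_nonneg hspos.le h2
    rw [mul_sub, ← mul_assoc, mul_inv_cancel₀ hspos.ne', one_mul] at h3
    rw [real_inner_comm c z] at *
    nlinarith [hzz]
  refine ⟨‖z‖⁻¹ • z, ?_, hsmul z hzC _ (by positivity), ?_⟩
  · rw [norm_smul, norm_inv, norm_norm, inv_mul_cancel₀ (norm_ne_zero_iff.2 hzne)]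
  · intro c hc
    rw [real_inner_smul_right]
    have h1 := key c hc
    have h2 := hu c hc
    have h3 : (0:ℝ) ≤ ⟪z, c⟫ := le_trans (by positivity) h1
    rw [real_inner_comm] at h3
    positivity


set_option maxHeartbeats 1000000 in
lemma exists_epigraph_body [FiniteDimensional ℝ V] {C : Set V} (hCcl : IsClosed C)
    (hCco : Convex ℝ C) (hsmul : ∀ v ∈ C, ∀ r : ℝ, 0 ≤ r → r • v ∈ C)
    (hadd : ∀ v ∈ C, ∀ w ∈ C, v + w ∈ C) (h0 : (0:V) ∈ C)
    {e : V} (he : ‖e‖ = 1) (heC : e ∈ C) (hpos : ∀ c ∈ C, (0:ℝ) ≤ ⟪c, e⟫) :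
    ∃ Kh : Set V, IsClosed Kh ∧ Convex ℝ Kh ∧ (interior Kh).Nonempty ∧ recc Kh = C ∧
      Nonempty (↥(frontier Kh) ≃ₜ ↥((ℝ ∙ e)ᗮ : Submodule ℝ V)) := by
  classical
  have hee : ⟪e, e⟫ = 1 := by
    rw [real_inner_self_eq_norm_sq, he]; norm_num
  set q : V → V := fun x => x - ⟪x, e⟫ • e with hq
  have hqc : Continuous q := by
    exact continuous_id.sub ((continuous_id.inner continuous_const).smul continuous_const)
  have hqe : ∀ x, ⟪q x, e⟫ = 0 := by
    intro x
    simp only [hq, inner_sub_left, real_inner_smul_left, hee, mul_one, sub_self]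
  have hdecomp : ∀ x, x = q x + ⟪x, e⟫ • e := by
    intro x; simp [hq]
  have hqy : ∀ y : V, ⟪y, e⟫ = 0 → q y = y := by
    intro y hy; simp [hq, hy]
  have hq_add : ∀ x y, q (x + y) = q x + q y := by
    intro x y; simp only [hq, inner_add_left, add_smul]; abel
  have hq_smul : ∀ (r : ℝ) x, q (r • x) = r • q x := by
    intro r x; simp only [hq, real_inner_smul_left, smul_sub, mul_smul]
  have hq0 : q 0 = 0 := by simp [hq]
  set Sg : V → Set ℝ := fun w => (fun c => ⟪c, e⟫ + ‖w - q c‖ ^ 2) '' C with hSg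
  set g : V → ℝ := fun w => sInf (Sg w) with hgdef
  have hSne : ∀ w, (Sg w).Nonempty := fun w => ⟨_, ⟨0, h0, rfl⟩⟩
  have hSbd : ∀ w, BddBelow (Sg w) := by
    intro w
    refine ⟨0, ?_⟩
    rintro r ⟨c, hc, rfl⟩
    have := hpos c hc
    positivity
  have hg0 : ∀ w, 0 ≤ g w := by
    intro w
    refine le_csInf (hSne w) ?_
    rintro r ⟨c, hc, rfl⟩
    have := hpos c hc
    positivity
  have hgle : ∀ w c, c ∈ C → g w ≤ ⟪c, e⟫ + ‖w - q c‖ ^ 2 :=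
    fun w c hc => csInf_le (hSbd w) ⟨c, hc, rfl⟩
  have hgnorm : ∀ w, g w ≤ ‖w‖ ^ 2 := by
    intro w
    have := hgle w 0 h0
    simpa [hq0] using this
  have hglt : ∀ w b, g w < b → ∃ c ∈ C, ⟪c, e⟫ + ‖w - q c‖ ^ 2 < b := by
    intro w b hb
    obtain ⟨r, ⟨c, hc, rfl⟩, hrb⟩ := exists_lt_of_csInf_lt (hSne w) hb
    exact ⟨c, hc, hrb⟩
  -- continuity of g
  have hgb : ∀ w₁ w₂ : V, g w₁ ≤ g w₂ + (‖w₁ - w₂‖ + 2 * (‖w₁‖ + ‖w₂‖ + 1 + ‖w₁ - w₂‖) * ‖w₁ - w₂‖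
      + ‖w₁ - w₂‖ ^ 2) := by
    intro w₁ w₂
    rcases eq_or_ne w₁ w₂ with rfl | hne
    · simp
    · set d := ‖w₁ - w₂‖ with hd
      have hd0 : 0 < d := by
        rw [hd, norm_pos_iff, sub_ne_zero]; exact hne
      obtain ⟨c, hc, hclt⟩ := hglt w₂ (g w₂ + d) (lt_add_of_pos_right _ hd0)
      have hce : 0 ≤ ⟪c, e⟫ := hpos c hc
      have hb1 : ‖w₂ - q c‖ ^ 2 ≤ ‖w₂‖ ^ 2 + d := by
        have := hgnorm w₂
        nlinarith
      have hb2 : ‖w₂ - q c‖ ≤ ‖w₂‖ + 1 + d := by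
        nlinarith [norm_nonneg (w₂ - q c), norm_nonneg w₂]
      have htri : ‖w₁ - q c‖ ≤ ‖w₂ - q c‖ + d := by
        have h5 : w₁ - q c = (w₂ - q c) + (w₁ - w₂) := by abel
        rw [h5, hd]
        exact norm_add_le _ _
      have hsq : ‖w₁ - q c‖ ^ 2 ≤ (‖w₂ - q c‖ + d) ^ 2 :=
        pow_le_pow_left₀ (norm_nonneg _) htri 2
      have := hgle w₁ c hc
      nlinarith [norm_nonneg (w₂ - q c), norm_nonneg w₁, norm_nonneg w₂]
  have hgcont : Continuous g := by
    rw [continuous_iff_continuousAt]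
    intro w₂
    rw [ContinuousAt, tendsto_iff_dist_tendsto_zero]
    have hψ : Tendsto (fun w₁ => ‖w₁ - w₂‖ + 2 * (‖w₁‖ + ‖w₂‖ + 1 + ‖w₁ - w₂‖) * ‖w₁ - w₂‖
        + ‖w₁ - w₂‖ ^ 2) (𝓝 w₂) (𝓝 0) := by
      have hn : Continuous fun w₁ : V => ‖w₁ - w₂‖ := (continuous_id.sub continuous_const).norm
      have hcont : Continuous (fun w₁ : V => ‖w₁ - w₂‖ + 2 * (‖w₁‖ + ‖w₂‖ + 1 + ‖w₁ - w₂‖) * ‖w₁ - w₂‖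
          + ‖w₁ - w₂‖ ^ 2) :=
        (hn.add ((continuous_const.mul
          (((continuous_norm.add continuous_const).add continuous_const).add hn)).mul hn)).add
          (hn.pow 2)
      have := hcont.tendsto w₂
      simpa using this
    refine squeeze_zero (fun w₁ => dist_nonneg) (fun w₁ => ?_) hψ
    rw [Real.dist_eq, abs_le]
    constructor
    · have := hgb w₂ w₁
      rw [norm_sub_rev w₂ w₁] at this
      linarith
    · have := hgb w₁ w₂
      linarith
  -- convexity inequality
  have hgconv : ∀ (a b : ℝ) (w₁ w₂ : V), 0 ≤ a → 0 ≤ b → a + b = 1 →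
      g (a • w₁ + b • w₂) ≤ a * g w₁ + b * g w₂ := by
    intro a b w₁ w₂ ha hb hab
    refine le_of_forall_pos_le_add ?_
    intro ε hε
    obtain ⟨c₁, hc₁, h1⟩ := hglt w₁ (g w₁ + ε) (lt_add_of_pos_right _ hε)
    obtain ⟨c₂, hc₂, h2⟩ := hglt w₂ (g w₂ + ε) (lt_add_of_pos_right _ hε)
    have hcC : a • c₁ + b • c₂ ∈ C := hCco hc₁ hc₂ ha hb hab
    have hkey := hgle (a • w₁ + b • w₂) _ hcC
    have hqq : q (a • c₁ + b • c₂) = a • q c₁ + b • q c₂ := by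
      rw [hq_add, hq_smul, hq_smul]
    have hin : ⟪a • c₁ + b • c₂, e⟫ = a * ⟪c₁, e⟫ + b * ⟪c₂, e⟫ := by
      rw [inner_add_left, real_inner_smul_left, real_inner_smul_left]
    have hnorm1 : ‖(a • w₁ + b • w₂) - q (a • c₁ + b • c₂)‖
        ≤ a * ‖w₁ - q c₁‖ + b * ‖w₂ - q c₂‖ := by
      rw [hqq]
      have h6 : (a • w₁ + b • w₂) - (a • q c₁ + b • q c₂)
          = a • (w₁ - q c₁) + b • (w₂ - q c₂) := by
        module
      rw [h6]
      refine (norm_add_le _ _).trans ?_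
      rw [norm_smul, norm_smul, Real.norm_eq_abs, Real.norm_eq_abs, abs_of_nonneg ha,
        abs_of_nonneg hb]
    have hnorm2 : ‖(a • w₁ + b • w₂) - q (a • c₁ + b • c₂)‖ ^ 2
        ≤ a * ‖w₁ - q c₁‖ ^ 2 + b * ‖w₂ - q c₂‖ ^ 2 := by
      have h7 : ‖(a • w₁ + b • w₂) - q (a • c₁ + b • c₂)‖ ^ 2
          ≤ (a * ‖w₁ - q c₁‖ + b * ‖w₂ - q c₂‖) ^ 2 :=
        pow_le_pow_left₀ (norm_nonneg _) hnorm1 2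
      nlinarith [sq_nonneg (‖w₁ - q c₁‖ - ‖w₂ - q c₂‖), norm_nonneg (w₁ - q c₁),
        norm_nonneg (w₂ - q c₂), mul_nonneg ha hb]
    have hfin : ⟪a • c₁ + b • c₂, e⟫ + ‖(a • w₁ + b • w₂) - q (a • c₁ + b • c₂)‖ ^ 2
        ≤ a * g w₁ + b * g w₂ + ε := by
      rw [hin]
      nlinarith [hnorm2, mul_le_mul_of_nonneg_left h1.le ha,
        mul_le_mul_of_nonneg_left h2.le hb]
    exact hkey.trans hfin
  -- shift inequality
  have hgshift : ∀ w c, c ∈ C → ∀ t : ℝ, 0 ≤ t → g (w + t • q c) ≤ g w + t * ⟪c, e⟫ := by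
    intro w c hc t ht
    refine le_of_forall_pos_le_add ?_
    intro ε hε
    obtain ⟨c', hc', h1⟩ := hglt w (g w + ε) (lt_add_of_pos_right _ hε)
    have hcC : c' + t • c ∈ C := hadd c' hc' _ (hsmul c hc t ht)
    have hkey := hgle (w + t • q c) _ hcC
    have hqq : q (c' + t • c) = q c' + t • q c := by rw [hq_add, hq_smul]
    have hnn : (w + t • q c) - q (c' + t • c) = w - q c' := by rw [hqq]; abel
    rw [hnn, inner_add_left, real_inner_smul_left] at hkey
    linarith
  set Kh : Set V := {x | g (q x) ≤ ⟪x, e⟫} with hKh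
  have hKhcl : IsClosed Kh :=
    isClosed_le (hgcont.comp hqc) (continuous_id.inner continuous_const)
  have hKhco : Convex ℝ Kh := by
    intro x hx y hy a b ha hb hab
    have hqq : q (a • x + b • y) = a • q x + b • q y := by rw [hq_add, hq_smul, hq_smul]
    have h8 : ⟪a • x + b • y, e⟫ = a * ⟪x, e⟫ + b * ⟪y, e⟫ := by
      rw [inner_add_left, real_inner_smul_left, real_inner_smul_left]
    show g (q (a • x + b • y)) ≤ ⟪a • x + b • y, e⟫
    rw [hqq, h8]
    refine (hgconv a b (q x) (q y) ha hb hab).trans ?_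
    have hx' : g (q x) ≤ ⟪x, e⟫ := hx
    have hy' : g (q y) ≤ ⟪y, e⟫ := hy
    have := mul_le_mul_of_nonneg_left hx' ha
    have := mul_le_mul_of_nonneg_left hy' hb
    linarith
  have hg00 : g 0 = 0 := le_antisymm (by simpa using hgnorm 0) (hg0 0)
  have hU : IsOpen {x : V | g (q x) < ⟪x, e⟫} :=
    isOpen_lt (hgcont.comp hqc) (continuous_id.inner continuous_const)
  have hUsub : {x : V | g (q x) < ⟪x, e⟫} ⊆ Kh := fun x hx => le_of_lt (α := ℝ) hx
  have heU : e ∈ {x : V | g (q x) < ⟪x, e⟫} := by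
    have hqe' : q e = 0 := by simp [hq, hee, he]
    simp only [mem_setOf_eq, hqe', hg00, hee]
    norm_num
  have hKhint : (interior Kh).Nonempty :=
    ⟨e, (hU.subset_interior_iff.2 hUsub) heU⟩
  have hqe0 : q e = 0 := by simp [hq, hee, he]
  have hrecc : recc Kh = C := by
    apply Subset.antisymm
    · intro v hv
      have h0K : (0:V) ∈ Kh := by
        show g (q 0) ≤ ⟪(0:V), e⟫
        rw [hq0, hg00, inner_zero_left]
      have hvk : ∀ t : ℝ, 0 ≤ t → g (t • q v) ≤ t * ⟪v, e⟫ := by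
        intro t ht
        have h9 : g (q ((0:V) + t • v)) ≤ ⟪(0:V) + t • v, e⟫ := hv 0 h0K t ht
        rw [zero_add, hq_smul, real_inner_smul_left] at h9
        exact h9
      have hs0 : 0 ≤ ⟪v, e⟫ := le_trans (hg0 (q v)) (by simpa using hvk 1 zero_le_one)
      have hseq : ∀ k : ℕ, ∃ c ∈ C,
          ⟪c, e⟫ + ‖((k:ℝ)+1) • q v - q c‖ ^ 2 < ((k:ℝ)+1) * ⟪v, e⟫ + 1 := by
        intro k
        exact hglt (((k:ℝ)+1) • q v) (((k:ℝ)+1) * ⟪v, e⟫ + 1)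
          (lt_of_le_of_lt (hvk ((k:ℝ)+1) (by positivity)) (lt_add_one _))
      choose cs hcs hcsl using hseq
      set d : ℕ → V := fun k => ((k:ℝ)+1)⁻¹ • cs k with hd
      have hdC : ∀ k, d k ∈ C := fun k => hsmul _ (hcs k) _ (by positivity)
      have hKpos : ∀ k : ℕ, (0:ℝ) < (k:ℝ)+1 := fun k => by positivity
      have hcse : ∀ k, ⟪cs k, e⟫ ≤ ((k:ℝ)+1) * ⟪v, e⟫ + 1 := by
        intro k
        have h1 := hcsl k
        nlinarith [sq_nonneg ‖((k:ℝ)+1) • q v - q (cs k)‖]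
      have hdel : ∀ k, ⟪d k, e⟫ ≤ ⟪v, e⟫ + ((k:ℝ)+1)⁻¹ := by
        intro k
        have h2 : ⟪d k, e⟫ = ((k:ℝ)+1)⁻¹ * ⟪cs k, e⟫ := real_inner_smul_left _ _ _
        rw [h2]
        calc ((k:ℝ)+1)⁻¹ * ⟪cs k, e⟫ ≤ ((k:ℝ)+1)⁻¹ * (((k:ℝ)+1) * ⟪v, e⟫ + 1) :=
              mul_le_mul_of_nonneg_left (hcse k) (inv_nonneg.2 (hKpos k).le)
          _ = ⟪v, e⟫ + ((k:ℝ)+1)⁻¹ := by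
              field_simp
      have hnb : ∀ k, ‖q v - q (d k)‖ ^ 2
          ≤ ⟪v, e⟫ * ((k:ℝ)+1)⁻¹ + (((k:ℝ)+1)⁻¹) ^ 2 := by
        intro k
        have h1 := hcsl k
        have hce := hpos _ (hcs k)
        have h2 : ‖((k:ℝ)+1) • q v - q (cs k)‖ ^ 2 ≤ ((k:ℝ)+1) * ⟪v, e⟫ + 1 := by linarith
        have h4a : q (d k) = ((k:ℝ)+1)⁻¹ • q (cs k) := hq_smul _ _
        have h4 : q v - q (d k) = ((k:ℝ)+1)⁻¹ • (((k:ℝ)+1) • q v - q (cs k)) := by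
          rw [h4a]
          have hne := (hKpos k).ne'
          match_scalars <;> (field_simp; try ring)
        rw [h4, norm_smul, mul_pow, norm_inv, Real.norm_eq_abs, abs_of_pos (hKpos k)]
        calc (((k:ℝ)+1)⁻¹)^2 * ‖((k:ℝ)+1) • q v - q (cs k)‖^2
            ≤ (((k:ℝ)+1)⁻¹)^2 * (((k:ℝ)+1) * ⟪v, e⟫ + 1) :=
              mul_le_mul_of_nonneg_left h2 (by positivity)
          _ = ⟪v, e⟫ * ((k:ℝ)+1)⁻¹ + (((k:ℝ)+1)⁻¹)^2 := by
              field_simp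
      have hnb2 : ∀ k, ‖q v - q (d k)‖
          ≤ Real.sqrt (⟪v, e⟫ * ((k:ℝ)+1)⁻¹ + (((k:ℝ)+1)⁻¹) ^ 2) := by
        intro k
        have h5 := Real.sqrt_le_sqrt (hnb k)
        rwa [Real.sqrt_sq (norm_nonneg _)] at h5
      have hinvt : Tendsto (fun k : ℕ => ((k:ℝ)+1)⁻¹) atTop (𝓝 0) :=
        tendsto_inv_atTop_zero.comp
          (tendsto_atTop_add_const_right _ 1 tendsto_natCast_atTop_atTop)
      have hqdy : Tendsto (fun k => q (d k)) atTop (𝓝 (q v)) := by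
        rw [← tendsto_sub_nhds_zero_iff]
        refine squeeze_zero_norm
          (a := fun k : ℕ => Real.sqrt (⟪v, e⟫ * ((k:ℝ)+1)⁻¹ + (((k:ℝ)+1)⁻¹) ^ 2))
          (fun k => ?_) ?_
        · rw [norm_sub_rev]
          exact hnb2 k
        · have h5 : Tendsto (fun k : ℕ => ⟪v, e⟫ * ((k:ℝ)+1)⁻¹ + (((k:ℝ)+1)⁻¹) ^ 2)
              atTop (𝓝 0) := by
            have h6 := (hinvt.const_mul ⟪v, e⟫).add (hinvt.pow 2)
            simpa using h6
          have h7 := (Real.continuous_sqrt.tendsto 0).comp h5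
          simpa [Function.comp_def] using h7
      have hKinv1 : ∀ k : ℕ, ((k:ℝ)+1)⁻¹ ≤ 1 := by
        intro k
        have hK1 : (1:ℝ) ≤ (k:ℝ)+1 := le_add_of_nonneg_left (Nat.cast_nonneg k)
        simpa using inv_anti₀ one_pos hK1
      have hbd : ∀ k, ‖d k‖ ≤ ‖q v‖ + Real.sqrt (⟪v, e⟫ + 1) + (⟪v, e⟫ + 1) := by
        intro k
        have h2 : ‖q v - q (d k)‖ ≤ Real.sqrt (⟪v, e⟫ + 1) := by
          refine (hnb2 k).trans (Real.sqrt_le_sqrt ?_)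
          have h3 := hKinv1 k
          have h4 : (0:ℝ) ≤ ((k:ℝ)+1)⁻¹ := (inv_nonneg.2 (hKpos k).le)
          nlinarith
        have h8 : ‖q (d k)‖ ≤ ‖q v‖ + ‖q v - q (d k)‖ := by
          have h9 := norm_sub_le (q v) (q v - q (d k))
          simpa using h9
        have h10 : |⟪d k, e⟫| ≤ ⟪v, e⟫ + 1 := by
          rw [abs_of_nonneg (hpos _ (hdC k))]
          have := hdel k
          have := hKinv1 k
          linarith
        have h11 : ‖d k‖ ≤ ‖q (d k)‖ + |⟪d k, e⟫| := by
          calc ‖d k‖ = ‖q (d k) + ⟪d k, e⟫ • e‖ := by rw [← hdecomp]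
            _ ≤ ‖q (d k)‖ + ‖⟪d k, e⟫ • e‖ := norm_add_le _ _
            _ = ‖q (d k)‖ + |⟪d k, e⟫| := by
                rw [norm_smul, Real.norm_eq_abs, he, mul_one]
        linarith
      obtain ⟨dd, _, φ, hφ, hdlim⟩ :=
        (isCompact_closedBall (0:V) (‖q v‖ + Real.sqrt (⟪v, e⟫ + 1) + (⟪v, e⟫ + 1))).tendsto_subseq
          (x := d) (fun k => by simpa [dist_eq_norm] using hbd k)
      have hddC : dd ∈ C := hCcl.closure_eq ▸
        mem_closure_of_tendsto hdlim (Eventually.of_forall fun k => hdC _)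
      have hqdd : q dd = q v := by
        have h1 : Tendsto (fun k => q (d (φ k))) atTop (𝓝 (q dd)) := (hqc.tendsto dd).comp hdlim
        have h2 : Tendsto (fun k => q (d (φ k))) atTop (𝓝 (q v)) := hqdy.comp hφ.tendsto_atTop
        exact tendsto_nhds_unique h1 h2
      have hσ : ⟪dd, e⟫ ≤ ⟪v, e⟫ := by
        have h1 : Tendsto (fun k => ⟪d (φ k), e⟫) atTop (𝓝 ⟪dd, e⟫) :=
          ((continuous_id.inner continuous_const).tendsto dd).comp hdlim
        have h2 : Tendsto (fun k : ℕ => ⟪v, e⟫ + (((φ k):ℝ)+1)⁻¹) atTop (𝓝 (⟪v, e⟫ + 0)) :=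
          tendsto_const_nhds.add (hinvt.comp hφ.tendsto_atTop)
        rw [add_zero] at h2
        exact le_of_tendsto_of_tendsto' h1 h2 (fun k => hdel (φ k))
      have hfinal : v = dd + (⟪v, e⟫ - ⟪dd, e⟫) • e := by
        obtain ⟨σ, hσdef⟩ : ∃ σ : ℝ, ⟪dd, e⟫ = σ := ⟨_, rfl⟩
        rw [hσdef]
        have h2 : dd = q v + σ • e := by
          rw [← hσdef, ← hqdd]
          exact hdecomp dd
        rw [h2]
        nth_rewrite 1 [hdecomp v]
        module
      rw [hfinal]
      exact hadd dd hddC _ (hsmul e heC _ (by linarith))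
    · intro c hc x hx t ht
      show g (q (x + t • c)) ≤ ⟪x + t • c, e⟫
      rw [hq_add, hq_smul, inner_add_left, real_inner_smul_left]
      have hx' : g (q x) ≤ ⟪x, e⟫ := hx
      exact (hgshift (q x) c hc t ht).trans (by linarith)
  have hint_eq : interior Kh = {x : V | g (q x) < ⟪x, e⟫} := by
    refine Subset.antisymm ?_ (hU.subset_interior_iff.2 hUsub)
    intro x hx
    obtain ⟨ε, hε, hball⟩ := Metric.mem_nhds_iff.1 (mem_interior_iff_mem_nhds.1 hx)
    have hx' : x + (-(ε/2)) • e ∈ Kh := by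
      refine hball ?_
      rw [mem_ball, dist_eq_norm]
      have h1 : x + (-(ε/2)) • e - x = (-(ε/2)) • e := by abel
      rw [h1, norm_smul, Real.norm_eq_abs, he, mul_one, abs_neg, abs_of_pos (by positivity)]
      linarith
    have h2 : g (q (x + (-(ε/2)) • e)) ≤ ⟪x + (-(ε/2)) • e, e⟫ := hx'
    rw [hq_add, hq_smul, hqe0, smul_zero, add_zero, inner_add_left, real_inner_smul_left,
      hee, mul_one] at h2
    show g (q x) < ⟪x, e⟫
    linarith
  have hfront : frontier Kh = {x : V | g (q x) = ⟪x, e⟫} := by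
    rw [hKhcl.frontier_eq, hint_eq]
    ext x
    simp only [mem_diff, mem_setOf_eq]
    constructor
    · rintro ⟨h1, h2⟩
      exact le_antisymm (h1 : g (q x) ≤ ⟪x, e⟫) (not_lt.1 h2)
    · intro h
      exact ⟨le_of_eq h, by rw [h]; exact lt_irrefl _⟩
  have hmemY : ∀ x : V, q x ∈ ((ℝ ∙ e)ᗮ : Submodule ℝ V) := by
    intro x
    rw [Submodule.mem_orthogonal_singleton_iff_inner_left]
    exact hqe x
  have hGmem : ∀ y : ↥((ℝ ∙ e)ᗮ : Submodule ℝ V), (y:V) + g (y:V) • e ∈ frontier Kh := by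
    intro y
    have hye : ⟪(y:V), e⟫ = 0 := Submodule.mem_orthogonal_singleton_iff_inner_left.1 y.2
    rw [hfront]
    show g (q ((y:V) + g (y:V) • e)) = ⟪(y:V) + g (y:V) • e, e⟫
    rw [hq_add, hq_smul, hqe0, smul_zero, add_zero, hqy _ hye, inner_add_left,
      real_inner_smul_left, hye, hee, mul_one, zero_add]
  refine ⟨Kh, hKhcl, hKhco, hKhint, hrecc,
    ⟨Homeomorph.mk ⟨fun x => ⟨q (x:V), hmemY _⟩, fun y => ⟨(y:V) + g (y:V) • e, hGmem y⟩,
      ?_, ?_⟩ ?_ ?_⟩⟩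
  · intro x
    apply Subtype.ext
    show q (x:V) + g (q (x:V)) • e = (x:V)
    have hxf : g (q (x:V)) = ⟪(x:V), e⟫ := (Set.ext_iff.1 hfront (x:V)).1 x.2
    rw [hxf]
    exact (hdecomp _).symm
  · intro y
    apply Subtype.ext
    show q ((y:V) + g (y:V) • e) = (y:V)
    have hye : ⟪(y:V), e⟫ = 0 := Submodule.mem_orthogonal_singleton_iff_inner_left.1 y.2
    rw [hq_add, hq_smul, hqe0, smul_zero, add_zero, hqy _ hye]
  · exact Continuous.subtype_mk (hqc.comp continuous_subtype_val) _
  · exact Continuous.subtype_mk (continuous_subtype_val.add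
      ((hgcont.comp continuous_subtype_val).smul continuous_const)) _


theorem main_homeo {n : ℕ} {K : Set (EuclideanSpace ℝ (Fin n))} (hcl : IsClosed K)
    (hco : Convex ℝ K) (hint : (interior K).Nonempty) {u w : EuclideanSpace ℝ (Fin n)}
    (hu : ∀ c ∈ recc K, (0:ℝ) ≤ ⟪c, u⟫) (hw : w ∈ recc K) (hwu : 0 < ⟪w, u⟫) :
    Nonempty (↥(frontier K) ≃ₜ EuclideanSpace ℝ (Fin (n - 1))) := by
  have hCcl : IsClosed (recc K) := isClosed_recc hcl
  have hCco : Convex ℝ (recc K) := fun x hx y hy a b ha hb hab =>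
    add_mem_recc (smul_mem_recc hx ha) (smul_mem_recc hy hb)
  have hsmul : ∀ v ∈ recc K, ∀ r : ℝ, 0 ≤ r → r • v ∈ recc K :=
    fun v hv r hr => smul_mem_recc hv hr
  have hadd : ∀ v ∈ recc K, ∀ w' ∈ recc K, v + w' ∈ recc K :=
    fun v hv w' hw' => add_mem_recc hv hw'
  obtain ⟨e, he1, heC, hpos⟩ := exists_axis hCcl hCco hsmul hadd hu hw hwu
  obtain ⟨Kh, hKhcl, hKhco, hKhint, hKhrecc, ⟨ebd⟩⟩ :=
    exists_epigraph_body hCcl hCco hsmul hadd (zero_mem_recc K) he1 heC hpos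
  obtain ⟨z, hz⟩ := hint
  obtain ⟨zh, hzh⟩ := hKhint
  obtain ⟨h1⟩ := frontier_homeo_sphere_compl hcl hco hz
  obtain ⟨h2⟩ := frontier_homeo_sphere_compl hKhcl hKhco hzh
  have hSCeq : {θ : EuclideanSpace ℝ (Fin n) | ‖θ‖ = 1 ∧ θ ∉ recc Kh}
      = {θ : EuclideanSpace ℝ (Fin n) | ‖θ‖ = 1 ∧ θ ∉ recc K} := by rw [hKhrecc]
  have hn : Module.finrank ℝ ((ℝ ∙ e)ᗮ : Submodule ℝ (EuclideanSpace ℝ (Fin n))) = n - 1 := by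
    have he0 : e ≠ 0 := by
      intro h
      rw [h, norm_zero] at he1
      norm_num at he1
    have hfr : Module.finrank ℝ (EuclideanSpace ℝ (Fin n)) = n := finrank_euclideanSpace_fin
    have h3 : Module.finrank ℝ (ℝ ∙ e : Submodule ℝ (EuclideanSpace ℝ (Fin n))) = 1 :=
      finrank_span_singleton he0
    have h4 := Submodule.finrank_add_finrank_orthogonal
      (K := (ℝ ∙ e : Submodule ℝ (EuclideanSpace ℝ (Fin n))))
    omega
  have iso := (stdOrthonormalBasis ℝ
    ((ℝ ∙ e)ᗮ : Submodule ℝ (EuclideanSpace ℝ (Fin n)))).repr.toHomeomorph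
  rw [hn] at iso
  exact ⟨(((h1.trans (Homeomorph.setCongr hSCeq.symm)).trans h2.symm).trans ebd).trans iso⟩

end MS


/-- If `K₀ ⊆ ℝⁿ` is an unbounded convex body with boundary homeomorphic to `ℝⁿ⁻¹` and balanced
support with respect to the unit vector `u`, and `K₁ ⊆ ℝⁿ` is an unbounded convex body containing
no line with balanced support with respect to `u`, then `K = K₀ + K₁` is closed, is an unbounded
convex body whose boundary is homeomorphic to `ℝⁿ⁻¹`, and has balanced support with respect
to `u`. -/
theorem minkowski_sum_preserves_boundary_type (n : ℕ) (hn : 1 ≤ n)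
    (u : EuclideanSpace ℝ (Fin n)) (hu : ‖u‖ = 1)
    (K₀ K₁ : Set (EuclideanSpace ℝ (Fin n)))
    (h₀cl : IsClosed K₀) (h₀conv : Convex ℝ K₀) (h₀int : (interior K₀).Nonempty)
    (h₀unb : ¬ Bornology.IsBounded K₀)
    (h₀bd : Nonempty ((frontier K₀) ≃ₜ EuclideanSpace ℝ (Fin (n - 1))))
    (h₀bal : HasBalancedSupport K₀ u)
    (h₁cl : IsClosed K₁) (h₁conv : Convex ℝ K₁) (h₁int : (interior K₁).Nonempty)
    (h₁unb : ¬ Bornology.IsBounded K₁)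
    (h₁noline : ¬ ∃ x v : EuclideanSpace ℝ (Fin n), v ≠ 0 ∧ ∀ t : ℝ, x + t • v ∈ K₁)
    (h₁bal : HasBalancedSupport K₁ u) :
    IsClosed (K₀ + K₁) ∧ Convex ℝ (K₀ + K₁) ∧ (interior (K₀ + K₁)).Nonempty ∧
      ¬ Bornology.IsBounded (K₀ + K₁) ∧
      Nonempty ((frontier (K₀ + K₁)) ≃ₜ EuclideanSpace ℝ (Fin (n - 1))) ∧
      HasBalancedSupport (K₀ + K₁) u := by
  classical
  obtain ⟨p₀, hp₀K, hp₀min, hp₀bal⟩ := h₀bal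
  obtain ⟨p₁, hp₁K, hp₁min, hp₁bal⟩ := h₁bal
  -- recession vectors have nonnegative inner product with u
  have hreccu₀ : ∀ v ∈ MS.recc K₀, 0 ≤ ⟪v, u⟫ := by
    intro v hv
    have h := hp₀min _ (hv p₀ hp₀K 1 zero_le_one)
    rw [inner_add_left, real_inner_smul_left, one_mul] at h
    linarith
  have hreccu₁ : ∀ v ∈ MS.recc K₁, 0 ≤ ⟪v, u⟫ := by
    intro v hv
    have h := hp₁min _ (hv p₁ hp₁K 1 zero_le_one)
    rw [inner_add_left, real_inner_smul_left, one_mul] at h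
    linarith
  -- a recession vector of K₁ orthogonal to u must vanish
  have hK₁key : ∀ v ∈ MS.recc K₁, ⟪v, u⟫ = 0 → v = 0 := by
    intro v hv hvu
    by_contra hne
    refine h₁noline ⟨p₁, v, hne, fun t => ?_⟩
    have hhalf : ∀ s : ℝ, 0 ≤ s → p₁ + s • v ∈ {z ∈ K₁ | ⟪z, u⟫ = ⟪p₁, u⟫} := by
      intro s hs
      refine ⟨hv p₁ hp₁K s hs, ?_⟩
      rw [inner_add_left, real_inner_smul_left, hvu]
      ring
    exact (hp₁bal p₁ ⟨hp₁K, rfl⟩ v hne hhalf t).1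
  -- closedness
  have hclosed : IsClosed (K₀ + K₁) := by
    refine MS.isClosed_add_of_recc h₀cl h₀conv h₁cl h₁conv ?_
    intro v hv₁ hv₀
    have h1 : 0 ≤ ⟪v, u⟫ := hreccu₁ v hv₁
    have h2 : 0 ≤ ⟪-v, u⟫ := hreccu₀ _ hv₀
    rw [inner_neg_left] at h2
    exact hK₁key v hv₁ (le_antisymm (by linarith) h1)
  have hconv : Convex ℝ (K₀ + K₁) := h₀conv.add h₁conv
  obtain ⟨a₀, ha₀⟩ := h₀int
  have hint : (interior (K₀ + K₁)).Nonempty := by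
    have hio : IsOpen (interior K₀ + K₁) := isOpen_interior.add_right
    have hsub : interior K₀ + K₁ ⊆ K₀ + K₁ :=
      Set.add_subset_add_right interior_subset
    exact ⟨a₀ + p₁, (hio.subset_interior_iff.2 hsub) (Set.add_mem_add ha₀ hp₁K)⟩
  have hunb : ¬ Bornology.IsBounded (K₀ + K₁) := by
    intro hb
    refine h₀unb (isBounded_iff_forall_norm_le.2 ?_)
    obtain ⟨R, hR⟩ := isBounded_iff_forall_norm_le.1 hb
    refine ⟨R + ‖p₁‖, fun x hx => ?_⟩
    have h1 := hR (x + p₁) (Set.add_mem_add hx hp₁K)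
    have h2 : ‖x‖ ≤ ‖x + p₁‖ + ‖p₁‖ := by
      have h3 := norm_sub_le (x + p₁) p₁
      simpa using h3
    linarith
  -- balanced support
  have hbal : HasBalancedSupport (K₀ + K₁) u := by
    refine ⟨p₀ + p₁, Set.add_mem_add hp₀K hp₁K, ?_, ?_⟩
    · rintro x ⟨x₀, hx₀, x₁, hx₁, hs⟩
      have hs' : x₀ + x₁ = x := hs
      subst hs'
      have h1 := hp₀min x₀ hx₀
      have h2 := hp₁min x₁ hx₁
      rw [inner_add_left, inner_add_left]
      linarith
    · rintro x ⟨⟨x₀, hx₀, x₁, hx₁, hs⟩, hxe⟩ v hv hhalf t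
      have hs' : x₀ + x₁ = x := hs
      subst hs'
      rw [inner_add_left] at hxe
      have h1 := hp₀min x₀ hx₀
      have h2 := hp₁min x₁ hx₁
      have hxeq : ⟪x₀, u⟫ + ⟪x₁, u⟫ = ⟪p₀, u⟫ + ⟪p₁, u⟫ := by
        rw [hxe, inner_add_left]
      have hx₀F : ⟪x₀, u⟫ = ⟪p₀, u⟫ := by linarith
      have hx₁F : ⟪x₁, u⟫ = ⟪p₁, u⟫ := by linarith
      -- the face of K₁ is bounded
      have hF₁cl : IsClosed {z ∈ K₁ | ⟪z, u⟫ = ⟪p₁, u⟫} :=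
        h₁cl.inter (isClosed_eq (continuous_id.inner continuous_const) continuous_const)
      have hF₁co : Convex ℝ {z ∈ K₁ | ⟪z, u⟫ = ⟪p₁, u⟫} := by
        intro a ha b hb s r hs hr hsr
        refine ⟨h₁conv ha.1 hb.1 hs hr hsr, ?_⟩
        rw [inner_add_left, real_inner_smul_left, real_inner_smul_left, ha.2, hb.2,
          ← add_mul, hsr, one_mul]
      have hF₁bd : Bornology.IsBounded {z ∈ K₁ | ⟪z, u⟫ = ⟪p₁, u⟫} := by
        by_contra hFu
        obtain ⟨vF, hvF1, hvFrec⟩ := MS.exists_unit_recc_of_unbounded hF₁cl hF₁co hFu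
        have hvFne : vF ≠ 0 := by
          intro h
          rw [h, norm_zero] at hvF1
          norm_num at hvF1
        refine h₁noline ⟨p₁, vF, hvFne, fun s => ?_⟩
        exact (hp₁bal p₁ ⟨hp₁K, rfl⟩ vF hvFne
          (fun r hr => hvFrec p₁ ⟨hp₁K, rfl⟩ r hr) s).1
      obtain ⟨R, hR⟩ := isBounded_iff_forall_norm_le.1 hF₁bd
      -- decompose the half-line
      have hdec : ∀ k : ℕ, ∃ y₀ y₁ : EuclideanSpace ℝ (Fin n),
          (y₀ ∈ K₀ ∧ ⟪y₀, u⟫ = ⟪p₀, u⟫) ∧ (y₁ ∈ K₁ ∧ ⟪y₁, u⟫ = ⟪p₁, u⟫) ∧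
          x₀ + x₁ + (k:ℝ) • v = y₀ + y₁ := by
        intro k
        obtain ⟨hmem, hinn⟩ := hhalf (k:ℝ) (Nat.cast_nonneg k)
        obtain ⟨y₀, hy₀, y₁, hy₁, heq⟩ := hmem
        have heq' : y₀ + y₁ = x₀ + x₁ + (k:ℝ) • v := heq
        have h3 := hp₀min y₀ hy₀
        have h4 := hp₁min y₁ hy₁
        have h5 : ⟪y₀, u⟫ + ⟪y₁, u⟫ = ⟪p₀, u⟫ + ⟪p₁, u⟫ := by
          rw [← inner_add_left y₀ y₁ u, heq', hinn, inner_add_left]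
        exact ⟨y₀, y₁, ⟨hy₀, by linarith⟩, ⟨hy₁, by linarith⟩, heq'.symm⟩
      choose y₀ y₁ hy₀ hy₁ hyeq using hdec
      -- v is a recession direction of the face of K₀
      have hF₀cl : IsClosed {z ∈ K₀ | ⟪z, u⟫ = ⟪p₀, u⟫} :=
        h₀cl.inter (isClosed_eq (continuous_id.inner continuous_const) continuous_const)
      have hF₀co : Convex ℝ {z ∈ K₀ | ⟪z, u⟫ = ⟪p₀, u⟫} := by
        intro a ha b hb s r hs hr hsr
        refine ⟨h₀conv ha.1 hb.1 hs hr hsr, ?_⟩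
        rw [inner_add_left, real_inner_smul_left, real_inner_smul_left, ha.2, hb.2,
          ← add_mul, hsr, one_mul]
      have hvrec : v ∈ MS.recc {z ∈ K₀ | ⟪z, u⟫ = ⟪p₀, u⟫} := by
        refine MS.mem_recc_of_tendsto hF₀cl hF₀co (c := y₀) (t := fun k => (k:ℝ))
          (fun k => hy₀ k) tendsto_natCast_atTop_atTop ?_
        have h6 : Tendsto (fun k : ℕ => ((k:ℝ))⁻¹ • (x₀ + x₁ - y₁ k) + v)
            atTop (𝓝 (0 + v)) := by
          refine Tendsto.add_const v ?_
          refine squeeze_zero_norm (a := fun k : ℕ => ((k:ℝ))⁻¹ * (‖x₀ + x₁‖ + R))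
            (fun k => ?_) ?_
          · rw [norm_smul, norm_inv, Real.norm_natCast]
            refine mul_le_mul_of_nonneg_left ?_ (by positivity)
            refine (norm_sub_le _ _).trans ?_
            have := hR (y₁ k) (hy₁ k)
            linarith
          · have h7 : Tendsto (fun k : ℕ => ((k:ℝ))⁻¹) atTop (𝓝 0) :=
              tendsto_inv_atTop_zero.comp tendsto_natCast_atTop_atTop
            have h8 := h7.mul_const (‖x₀ + x₁‖ + R)
            simpa using h8
        rw [zero_add] at h6
        refine h6.congr' ?_
        filter_upwards [eventually_ge_atTop 1] with k hk
        have hkne : ((k:ℝ)) ≠ 0 := by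
          have : (0:ℝ) < (k:ℝ) := by exact_mod_cast Nat.pos_of_ne_zero (by omega)
          exact this.ne'
        have h9 : y₀ k = x₀ + x₁ - y₁ k + (k:ℝ) • v := by
          have h12 : y₀ k + y₁ k = x₀ + x₁ + (k:ℝ) • v := (hyeq k).symm
          have h13 : y₀ k = x₀ + x₁ + (k:ℝ) • v - y₁ k := by
            rw [← h12]
            abel
          rw [h13]
          abel
        rw [h9, smul_add, smul_smul, inv_mul_cancel₀ hkne, one_smul]
      have hline := hp₀bal x₀ ⟨hx₀, hx₀F⟩ v hv
        (fun s hs => hvrec x₀ ⟨hx₀, hx₀F⟩ s hs) t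
      constructor
      · have h10 : x₀ + x₁ + t • v = (x₀ + t • v) + x₁ := by abel
        rw [h10]
        exact Set.add_mem_add hline.1 hx₁
      · have h11 : ⟪x₀ + x₁ + t • v, u⟫ = ⟪x₀ + t • v, u⟫ + ⟪x₁, u⟫ := by
          rw [← inner_add_left]
          congr 1
          abel
        rw [h11, hline.2, hx₁F, inner_add_left]
  -- the boundary homeomorphism
  obtain ⟨w', hw'1, hw'⟩ := MS.exists_unit_recc_of_unbounded h₁cl h₁conv h₁unb
  have hw'K : w' ∈ MS.recc (K₀ + K₁) := by
    intro x hx s hs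
    obtain ⟨a, ha, b, hb, hab⟩ := hx
    have hab' : a + b = x := hab
    refine ⟨a, ha, b + s • w', hw' b hb s hs, ?_⟩
    show a + (b + s • w') = x + s • w'
    rw [← hab']
    abel
  have hw'u : 0 < ⟪w', u⟫ := by
    rcases lt_or_eq_of_le (hreccu₁ w' hw') with h | h
    · exact h
    · exfalso
      have := hK₁key w' hw' h.symm
      rw [this, norm_zero] at hw'1
      norm_num at hw'1
  have hrecu : ∀ c ∈ MS.recc (K₀ + K₁), 0 ≤ ⟪c, u⟫ := by
    intro c hc
    have h := hc (p₀ + p₁) (Set.add_mem_add hp₀K hp₁K) 1 zero_le_one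
    obtain ⟨a, ha, b, hb, hab⟩ := h
    have hab' : a + b = p₀ + p₁ + (1:ℝ) • c := hab
    have h₀ := hp₀min a ha
    have h₁ := hp₁min b hb
    have h2 : ⟪p₀ + p₁ + (1:ℝ) • c, u⟫ = ⟪a, u⟫ + ⟪b, u⟫ := by
      rw [← hab', inner_add_left]
    rw [one_smul, inner_add_left, inner_add_left] at h2
    linarith
  have hbdry := MS.main_homeo hclosed hconv hint hrecu hw'K hw'u
  exact ⟨hclosed, hconv, hint, hunb, hbdry, hbal⟩
end
end
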